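/- arXiv:2310.12368 — 6 statements merged into one kernel-verified Lean document; each statement's English description precedes it below -/
import Mathlib

section
/- Let F be an arbitrary field and let A, B be invertible n×n matrices over F. Let E(A) denote the evolution algebra of A: the (nonassociative, commutative) F-algebra whose underlying vector space is F^n and whose product is the bilinear map with (x∗y)_k = Σ_{i=1}^n A_{k i} x_i y_i (so the standard basis vectors satisfy e_i ∗ e_j = 0 for i ≠ j and e_i ∗ e_i = Σ_k A_{k i} e_k), and similarly E(B). Then E(A) and E(B) are isomorphic as F-algebras (i.e., there is an F-linear bijection φ : F^n → F^n with φ(x ∗_A y) = φ(x) ∗_B φ(y) for all x, y) if and only if there exist a permutation σ of {1,…,n} and t = (t_1,…,t_n) ∈ (F^×)^n such that A = D_t^{-1} P_σ^{-1} B P_σ D_t^2, where P_σ is the permutation matrix with (P_σ)_{ij} = 1 exactly when i = σ(j), D_t = diag(t_1,…,t_n), and D_t^2 = diag(t_1^2,…,t_n^2). -/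
open Matrix

/-- The evolution algebra product on `Fin n → F` associated with the structure
matrix `A`: `(x ∗ y) k = ∑ i, A k i * x i * y i`. -/
def evolMul {F : Type*} [Field F] {n : ℕ} (A : Matrix (Fin n) (Fin n) F)
    (x y : Fin n → F) : Fin n → F :=
  fun k => ∑ i, A k i * x i * y i

/-- The permutation matrix `P_σ` with `(P_σ)_{ij} = 1` exactly when `i = σ j`. -/
def permMatrix (F : Type*) [Field F] {n : ℕ} (σ : Equiv.Perm (Fin n)) :
    Matrix (Fin n) (Fin n) F :=
  Matrix.of fun i j => if i = σ j then 1 else 0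

section Aux

variable {F : Type*} [Field F] {n : ℕ}

lemma evolMul_eq (A : Matrix (Fin n) (Fin n) F) (x y : Fin n → F) :
    evolMul A x y = A.mulVec (x * y) := by
  funext k
  simp [evolMul, Matrix.mulVec, dotProduct, mul_assoc]

lemma permMatrix_mulVec (σ : Equiv.Perm (Fin n)) (v : Fin n → F) :
    (permMatrix F σ).mulVec v = fun k => v (σ⁻¹ k) := by
  funext k
  simp only [permMatrix, Matrix.mulVec, dotProduct, Matrix.of_apply]
  rw [Finset.sum_eq_single (σ⁻¹ k)]
  · simp
  · intro j _ hj
    rw [if_neg, zero_mul]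
    intro h
    exact hj (by rw [h, ← Equiv.Perm.mul_apply, inv_mul_cancel, Equiv.Perm.one_apply])
  · intro h; exact absurd (Finset.mem_univ _) h

lemma permMatrix_mul_permMatrix (σ τ : Equiv.Perm (Fin n)) :
    (permMatrix F σ) * (permMatrix F τ) = permMatrix F (σ * τ) := by
  ext i j
  simp only [permMatrix, Matrix.mul_apply, Matrix.of_apply]
  rw [Finset.sum_eq_single (τ j)]
  · simp [Equiv.Perm.mul_apply]; congr
  · intro m _ hm
    rw [if_neg (fun h => hm h), mul_zero]
  · intro h; exact absurd (Finset.mem_univ _) h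

lemma permMatrix_one : permMatrix F (1 : Equiv.Perm (Fin n)) = 1 := by
  ext i j
  simp [permMatrix, Matrix.one_apply]; congr

lemma permMatrix_inv_mul (σ : Equiv.Perm (Fin n)) :
    (permMatrix F σ⁻¹) * (permMatrix F σ) = 1 := by
  rw [permMatrix_mul_permMatrix, inv_mul_cancel, _root_.permMatrix_one]

lemma permMatrix_mul_inv (σ : Equiv.Perm (Fin n)) :
    (permMatrix F σ) * (permMatrix F σ⁻¹) = 1 := by
  rw [permMatrix_mul_permMatrix, mul_inv_cancel, _root_.permMatrix_one]

/-- Key computational lemma: a monomial matrix transforms Hadamard products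
of vectors via the squared scaling. -/
lemma key_mulVec (σ : Equiv.Perm (Fin n)) (s : Fin n → F) (x y : Fin n → F) :
    ((permMatrix F σ * diagonal s).mulVec x) * ((permMatrix F σ * diagonal s).mulVec y)
      = (permMatrix F σ * diagonal (fun i => s i * s i)).mulVec (x * y) := by
  funext k
  rw [← Matrix.mulVec_mulVec, ← Matrix.mulVec_mulVec, ← Matrix.mulVec_mulVec,
    _root_.permMatrix_mulVec, _root_.permMatrix_mulVec, _root_.permMatrix_mulVec]
  simp only [Pi.mul_apply, Matrix.mulVec_diagonal]
  ring

lemma eq_of_mulVec_eq (M N : Matrix (Fin n) (Fin n) F)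
    (h : ∀ v, M.mulVec v = N.mulVec v) : M = N := by
  ext i j
  have := congrFun (h (Pi.single j 1)) i
  simpa [Matrix.mulVec_single] using this

/-- The "if" direction core: if `M' * M = 1` and `M * A = B * P_σ * D_{s²}` with
`M = P_σ D_s`, multiplication works out. -/
lemma monomial_inverses (σ : Equiv.Perm (Fin n)) (s : Fin n → F) (hs : ∀ i, s i ≠ 0) :
    (diagonal (fun i => (s i)⁻¹) * permMatrix F σ⁻¹) * (permMatrix F σ * diagonal s) = 1 ∧
    (permMatrix F σ * diagonal s) * (diagonal (fun i => (s i)⁻¹) * permMatrix F σ⁻¹) = 1 := by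
  constructor
  · calc (diagonal (fun i => (s i)⁻¹) * permMatrix F σ⁻¹) * (permMatrix F σ * diagonal s)
        = diagonal (fun i => (s i)⁻¹) * ((permMatrix F σ⁻¹ * permMatrix F σ) * diagonal s) := by
          simp only [Matrix.mul_assoc]
      _ = 1 := by
          rw [permMatrix_inv_mul, Matrix.one_mul, diagonal_mul_diagonal]
          rw [show (fun i => (s i)⁻¹ * s i) = fun _ => (1 : F) from
            funext fun i => inv_mul_cancel₀ (hs i), diagonal_one]
  · calc (permMatrix F σ * diagonal s) * (diagonal (fun i => (s i)⁻¹) * permMatrix F σ⁻¹)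
        = permMatrix F σ * ((diagonal s * diagonal fun i => (s i)⁻¹) * permMatrix F σ⁻¹) := by
          simp only [Matrix.mul_assoc]
      _ = 1 := by
          rw [diagonal_mul_diagonal]
          rw [show (fun i => s i * (s i)⁻¹) = fun _ => (1 : F) from
            funext fun i => mul_inv_cancel₀ (hs i), diagonal_one, Matrix.one_mul,
            permMatrix_mul_inv]

end Aux

/-- Elduque–Labra: for invertible structure matrices `A` and `B`, the evolution algebras
`E(A)` and `E(B)` are isomorphic iff `A = D_t⁻¹ P_σ⁻¹ B P_σ D_t²` for some permutation `σ`
and some `t ∈ (Fˣ)ⁿ`. -/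
theorem evolutionAlgebra_iso_iff {F : Type*} [Field F] {n : ℕ}
    (A B : Matrix (Fin n) (Fin n) F) (hA : IsUnit A.det) (hB : IsUnit B.det) :
    (∃ φ : (Fin n → F) ≃ₗ[F] (Fin n → F),
        ∀ x y, φ (evolMul A x y) = evolMul B (φ x) (φ y)) ↔
      ∃ (σ : Equiv.Perm (Fin n)) (t : Fin n → Fˣ),
        A = Matrix.diagonal (fun i => (((t i)⁻¹ : Fˣ) : F)) * permMatrix F σ⁻¹ * B *
              permMatrix F σ * Matrix.diagonal (fun i => (t i : F) ^ 2) := by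
  constructor
  · rintro ⟨φ, hφ⟩
    set M : Matrix (Fin n) (Fin n) F :=
      LinearMap.toMatrix' (φ : (Fin n → F) →ₗ[F] (Fin n → F)) with hMdef
    set M' : Matrix (Fin n) (Fin n) F :=
      LinearMap.toMatrix' (φ.symm : (Fin n → F) →ₗ[F] (Fin n → F)) with hM'def
    have hφapp : ∀ x, φ x = M.mulVec x := by
      intro x
      conv_lhs => rw [show (φ x : Fin n → F) = (φ : (Fin n → F) →ₗ[F] (Fin n → F)) x from rfl,
        ← Matrix.toLin'_toMatrix' (φ : (Fin n → F) →ₗ[F] (Fin n → F))]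
      rw [Matrix.toLin'_apply]
    have hMM' : M * M' = 1 := by
      rw [hMdef, hM'def, ← LinearMap.toMatrix'_comp, ← LinearMap.toMatrix'_id (R := F) (n := Fin n)]
      congr 1
      ext x : 1
      simp
    have hM'M : M' * M = 1 := by
      rw [hMdef, hM'def, ← LinearMap.toMatrix'_comp, ← LinearMap.toMatrix'_id (R := F) (n := Fin n)]
      congr 1
      ext x : 1
      simp
    have hyp : ∀ x y, M.mulVec (A.mulVec (x * y)) =
        B.mulVec ((M.mulVec x) * (M.mulVec y)) := by
      intro x y
      have h := hφ x y
      rw [evolMul_eq, evolMul_eq, hφapp, hφapp, hφapp] at h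
      exact h
    -- orthogonality of columns
    have horth : ∀ i j, i ≠ j → ∀ k, M k i * M k j = 0 := by
      intro i j hij k
      have h0 : (Pi.single i 1 : Fin n → F) * Pi.single j 1 = 0 := by
        funext m
        by_cases h : m = i
        · subst h
          simp [Pi.single_apply, Ne.symm hij]
        · simp [Pi.single_apply, h]
      have h1 := hyp (Pi.single i 1) (Pi.single j 1)
      rw [h0, Matrix.mulVec_zero, Matrix.mulVec_zero] at h1
      have h2 : (M.mulVec (Pi.single i 1) * M.mulVec (Pi.single j 1)) = 0 := by
        have h3 := congrArg (fun v => (B⁻¹).mulVec v) h1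
        simpa [Matrix.mulVec_mulVec, Matrix.nonsing_inv_mul B hB] using h3.symm
      have := congrFun h2 k
      simpa [Matrix.mulVec_single] using this
    -- every column is nonzero
    have hcol : ∀ j, ∃ k, M k j ≠ 0 := by
      intro j
      by_contra h
      push_neg at h
      have h1 : (M' * M) j j = 0 := by
        rw [Matrix.mul_apply]
        exact Finset.sum_eq_zero fun k _ => by rw [h k, mul_zero]
      rw [hM'M] at h1
      simp at h1
    choose π hπ using hcol
    have hπinj : Function.Injective π := by
      intro i j h
      by_contra hne
      have h1 := horth i j hne (π i)
      rcases mul_eq_zero.mp h1 with h2 | h2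
      · exact hπ i h2
      · rw [h] at h2
        exact hπ j h2
    let σ : Equiv.Perm (Fin n) := Equiv.ofBijective π (Finite.injective_iff_bijective.mp hπinj)
    have hσ : ∀ j, σ j = π j := fun j => rfl
    have hzero : ∀ j k, k ≠ σ j → M k j = 0 := by
      intro j k hk
      obtain ⟨j', hj'⟩ := σ.surjective k
      by_cases hjj : j = j'
      · exact absurd (by rw [hjj, hj']) hk
      · by_contra hMkj
        have h1 := horth j j' hjj k
        rcases mul_eq_zero.mp h1 with h2 | h2
        · exact hMkj h2
        · rw [← hj'] at h2
          exact hπ j' (by rw [← hσ j']; exact h2)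
    set s : Fin n → F := fun j => M (σ j) j with hsdef
    have hs : ∀ j, s j ≠ 0 := fun j => hπ j
    have hMeq : M = permMatrix F σ * diagonal s := by
      ext k j
      rw [Matrix.mul_diagonal]
      simp only [permMatrix, Matrix.of_apply]
      by_cases h : k = σ j
      · subst h
        simp [hsdef]
      · rw [if_neg h, zero_mul, hzero j k h]
    have hmat : M * A = B * (permMatrix F σ * diagonal (fun i => s i * s i)) := by
      apply eq_of_mulVec_eq
      intro v
      have hv : v * (fun _ => (1 : F)) = v := by funext m; simp
      have h1 := hyp v (fun _ => 1)
      rw [hv] at h1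
      rw [hMeq, key_mulVec σ s v (fun _ => 1), hv] at h1
      rw [Matrix.mulVec_mulVec, Matrix.mulVec_mulVec] at h1
      rw [← hMeq] at h1
      exact h1
    refine ⟨σ, fun i => Units.mk0 (s i) (hs i), ?_⟩
    have hinv := monomial_inverses σ s hs
    have : A = (diagonal (fun i => (s i)⁻¹) * permMatrix F σ⁻¹) * (M * A) := by
      rw [hMeq, ← Matrix.mul_assoc (diagonal (fun i => (s i)⁻¹) * permMatrix F σ⁻¹),
        hinv.1, Matrix.one_mul]
    rw [hmat] at this
    rw [this]
    simp only [Units.val_mk0, Units.val_inv_eq_inv_val]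
    rw [show (fun i => (s i : F) ^ 2) = fun i => s i * s i from funext fun i => sq (s i)]
    simp only [Matrix.mul_assoc]
  · rintro ⟨σ, t, hAeq⟩
    set s : Fin n → F := fun i => (t i : F) with hsdef
    have hs : ∀ i, s i ≠ 0 := fun i => (t i).ne_zero
    have hinv := monomial_inverses σ s hs
    set M : Matrix (Fin n) (Fin n) F := permMatrix F σ * diagonal s with hMdef
    set M' : Matrix (Fin n) (Fin n) F :=
      diagonal (fun i => (s i)⁻¹) * permMatrix F σ⁻¹ with hM'def
    refine ⟨LinearEquiv.ofLinear (Matrix.mulVecLin M) (Matrix.mulVecLin M')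
      (by rw [← Matrix.mulVecLin_mul, hinv.2, Matrix.mulVecLin_one])
      (by rw [← Matrix.mulVecLin_mul, hinv.1, Matrix.mulVecLin_one]), ?_⟩
    intro x y
    simp only [LinearEquiv.ofLinear_apply, Matrix.mulVecLin_apply]
    rw [evolMul_eq, evolMul_eq]
    rw [hMdef, key_mulVec σ s x y, ← hMdef]
    rw [Matrix.mulVec_mulVec, Matrix.mulVec_mulVec]
    have hdiag : (fun i => (t i : F) ^ 2) = fun i => s i * s i :=
      funext fun i => pow_two _
    have hcoeinv : (fun i => (((t i)⁻¹ : Fˣ) : F)) = fun i => (s i)⁻¹ := by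
      funext i
      exact Units.val_inv_eq_inv_val _
    have hMA : M * A = B * (permMatrix F σ * diagonal fun i => s i * s i) := by
      rw [hAeq, hdiag, hcoeinv]
      calc M * (diagonal (fun i => (s i)⁻¹) * permMatrix F σ⁻¹ * B * permMatrix F σ *
              diagonal fun i => s i * s i)
          = (M * M') * (B * (permMatrix F σ * diagonal fun i => s i * s i)) := by
            rw [hM'def]
            simp only [Matrix.mul_assoc]
        _ = B * (permMatrix F σ * diagonal fun i => s i * s i) := by
            rw [hinv.2, Matrix.one_mul]
    rw [hMA]
end

section
/- Let q = p^m with p an odd prime and let F_q be a finite field with q elements. The number N(2,F_q) of orbits of the action (σ,t)·A = D_t^{-1} P_σ^{-1} A P_σ D_t^2 of S_2 ⋉ (F_q^×)^2 on GL_2(F_q) is (q+1)^2/2 if 3 divides q−1, and (q+1)^2/2 − 1 if 3 does not divide q−1. -/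
open Matrix

/-- The orbit relation of the action of `Sₙ ⋉ (Fˣ)ⁿ` on `GL n F`:
`A` and `B` are related iff `A = (σ,t)·B = D_t⁻¹ P_σ⁻¹ B P_σ D_t²` for some `(σ,t)`,
equivalently `t_i A_{ij} = B_{σ(i)σ(j)} t_j²` for all `i, j`. -/
def evolRel (F : Type*) [Field F] (n : ℕ) (A B : GL (Fin n) F) : Prop :=
  ∃ (σ : Equiv.Perm (Fin n)) (t : Fin n → Fˣ), ∀ i j,
    (t i : F) * (A : Matrix (Fin n) (Fin n) F) i j
      = (B : Matrix (Fin n) (Fin n) F) (σ i) (σ j) * (t j : F) ^ 2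

/-- The number of orbits of the action of `Sₙ ⋉ (Fˣ)ⁿ` on `GL n F`, which equals the
number of isomorphism classes of `n`-dimensional idempotent evolution algebras over `F`. -/
noncomputable def numOrbits (F : Type*) [Field F] (n : ℕ) : ℕ :=
  Nat.card (Quot (evolRel F n))

/-- The rational-valued indicator `P_k`, equal to `1` if `k ∣ q - 1` and `0` otherwise. -/
def Pind (q k : ℕ) : ℚ := if k ∣ (q - 1) then 1 else 0

set_option linter.unusedSectionVars false
set_option maxHeartbeats 1000000

section Cubes
variable {F : Type*} [Field F] [Fintype F] [DecidableEq F]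

def IsCubeE (x : F) : Prop := ∃ y : F, y ^ 3 = x

instance : DecidablePred (IsCubeE (F := F)) := fun _ => Fintype.decidableExistsFintype

lemma cube_all (h : ¬ 3 ∣ Fintype.card F - 1) (x : F) : IsCubeE x := by
  rcases eq_or_ne x 0 with rfl | hx
  · exact ⟨0, by ring⟩
  · have hco : (Nat.card Fˣ).Coprime 3 := by
      rw [Nat.card_eq_fintype_card, Fintype.card_units]
      exact Nat.coprime_comm.mp ((Nat.Prime.coprime_iff_not_dvd Nat.prime_three).mpr h)
    obtain ⟨y, hy⟩ := (powCoprime hco).surjective (Units.mk0 x hx)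
    exact ⟨(y : F), by rw [← Units.val_pow_eq_pow_val, show y ^ 3 = Units.mk0 x hx from hy]; rfl⟩

lemma cube_mul_cube (x w : F) (hw : w ≠ 0) : IsCubeE (x * w ^ 3) ↔ IsCubeE x := by
  constructor
  · rintro ⟨y, hy⟩
    refine ⟨y / w, ?_⟩
    rw [div_pow, hy, mul_div_assoc, div_self (pow_ne_zero 3 hw), mul_one]
  · rintro ⟨y, hy⟩
    exact ⟨y * w, by rw [mul_pow, hy]⟩

lemma cube_pow_iff (h3 : 3 ∣ Fintype.card F - 1) (g : Fˣ)
    (hg : ∀ x : Fˣ, x ∈ Submonoid.powers g) (a : ℕ) :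
    IsCubeE ((g : F) ^ a) ↔ 3 ∣ a := by
  have hord : orderOf g = Fintype.card F - 1 := by
    rw [← Fintype.card_units (α := F), ← Nat.card_eq_fintype_card]
    exact orderOf_eq_card_of_forall_mem_zpowers
      (fun x => mem_powers_iff_mem_zpowers.mp (hg x))
  constructor
  · rintro ⟨y, hy⟩
    have hy0 : y ≠ 0 := by
      intro h; rw [h] at hy
      exact (pow_ne_zero a (Units.ne_zero g)) (by simpa using hy.symm)
    obtain ⟨c, hc⟩ := hg (Units.mk0 y hy0)
    simp only at hc
    have hyc : y = (g : F) ^ c := by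
      have := congrArg Units.val hc
      push_cast at this
      simpa using this.symm
    have hgc : g ^ (3 * c) = g ^ a := by
      ext
      push_cast
      rw [mul_comm 3 c, pow_mul, ← hyc]
      exact hy
    have hdvd : (orderOf g : ℤ) ∣ (3 * c : ℤ) - (a : ℤ) := by
      rw [orderOf_dvd_iff_zpow_eq_one, _root_.zpow_sub]
      norm_cast
      rw [hgc]
      simp
    have h3' : (3 : ℤ) ∣ (3 * c : ℤ) - (a : ℤ) := by
      refine dvd_trans ?_ hdvd
      rw [hord]; exact_mod_cast Int.natCast_dvd_natCast.mpr h3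
    have : (3 : ℤ) ∣ (a : ℤ) := by omega
    exact_mod_cast this
  · rintro ⟨k, rfl⟩
    exact ⟨(g : F) ^ k, by rw [← pow_mul, mul_comm]⟩

lemma exists_gen : ∃ g : Fˣ, ∀ x : Fˣ, x ∈ Submonoid.powers g := by
  obtain ⟨g, hg⟩ := IsCyclic.exists_generator (α := Fˣ)
  exact ⟨g, fun x => mem_powers_iff_mem_zpowers.mpr (hg x)⟩

lemma exists_noncube (h3 : 3 ∣ Fintype.card F - 1) : ∃ x : F, x ≠ 0 ∧ ¬ IsCubeE x := by
  obtain ⟨g, hg⟩ := exists_gen (F := F)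
  refine ⟨(g : F), Units.ne_zero g, ?_⟩
  have := cube_pow_iff h3 g hg 1
  rw [pow_one] at this
  rw [this]
  norm_num

lemma rep_pow (g : Fˣ) (hg : ∀ x : Fˣ, x ∈ Submonoid.powers g) {x : F} (hx : x ≠ 0) :
    ∃ a : ℕ, (g : F) ^ a = x := by
  obtain ⟨a, ha⟩ := hg (Units.mk0 x hx)
  exact ⟨a, by have := congrArg Units.val ha; push_cast at this; simpa using this⟩

lemma key3 {u v : F} (hu : u ≠ 0) (hv : v ≠ 0) (h : IsCubeE u ↔ IsCubeE v) :
    IsCubeE (u * v ^ 2) ∨ IsCubeE (u * v) := by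
  by_cases hcu : IsCubeE u
  · obtain ⟨y, hy⟩ := hcu
    obtain ⟨z, hz⟩ := h.mp ⟨y, hy⟩
    right
    exact ⟨y * z, by rw [mul_pow, hy, hz]⟩
  · have h3 : 3 ∣ Fintype.card F - 1 := by
      by_contra hh
      exact hcu (cube_all hh u)
    obtain ⟨g, hg⟩ := exists_gen (F := F)
    obtain ⟨a, ha⟩ := rep_pow g hg hu
    obtain ⟨b, hb⟩ := rep_pow g hg hv
    have hna : ¬ 3 ∣ a := by rw [← cube_pow_iff h3 g hg, ha]; exact hcu
    have hnb : ¬ 3 ∣ b := by rw [← cube_pow_iff h3 g hg, hb]; rw [h] at hcu; exact hcu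
    have ha3 : a % 3 = 1 ∨ a % 3 = 2 := by omega
    have hb3 : b % 3 = 1 ∨ b % 3 = 2 := by omega
    have hkey : 3 ∣ a + 2 * b ∨ 3 ∣ a + b := by
      rcases ha3 with h1 | h1 <;> rcases hb3 with h2 | h2 <;> [left; right; right; left] <;> omega
    rcases hkey with hd | hd
    · left
      rw [← ha, ← hb, ← pow_mul, ← pow_add]
      exact (cube_pow_iff h3 g hg _).mpr (by omega)
    · right
      rw [← ha, ← hb, ← pow_add]
      exact (cube_pow_iff h3 g hg _).mpr hd

lemma cube_compl {x y w : F} (hx : x ≠ 0) (hw : w ≠ 0) (hxy : x * y = w ^ 3) :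
    IsCubeE x ↔ IsCubeE y := by
  have hy : y ≠ 0 := by
    intro h; rw [h, mul_zero] at hxy; exact hw (by simpa using pow_eq_zero_iff (n := 3) (by norm_num) |>.mp hxy.symm)
  constructor
  · rintro ⟨s, hs⟩
    have hs0 : s ≠ 0 := by intro h; rw [h] at hs; simp at hs; exact hx hs.symm
    refine ⟨w / s, ?_⟩
    rw [div_pow, hs, div_eq_iff hx, ← hxy]; ring
  · rintro ⟨s, hs⟩
    have hs0 : s ≠ 0 := by intro h; rw [h] at hs; simp at hs; exact hy hs.symm
    refine ⟨w / s, ?_⟩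
    rw [div_pow, hs, div_eq_iff hy]; exact hxy.symm

end Cubes

section Class
variable {F : Type*} [Field F] [Fintype F] [DecidableEq F]

/-- Product of the two entries of an unordered pair. -/
def prodS : Sym2 F → F := Sym2.lift ⟨fun x y => x * y, fun _ _ => mul_comm _ _⟩

@[simp] lemma prodS_mk (x y : F) : prodS (Sym2.mk x y) = x * y := rfl

/-- The classifying type for orbits. -/
abbrev EClass (F : Type*) [Field F] [Fintype F] [DecidableEq F] : Type _ :=
  {s : Sym2 F // prodS s ≠ 1} ⊕ {v : F // v ≠ 0} ⊕
    {bb : Bool // bb = false → 3 ∣ Fintype.card F - 1}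

/-- The invariant, on raw entries. -/
def fAux (a b c d : F) (hdet : a * d - b * c ≠ 0) : EClass F :=
  if ha : a = 0 then
    if hd : d = 0 then
      Sum.inr (Sum.inr ⟨decide (IsCubeE (b * c ^ 2)), by
        intro hf
        by_contra h3
        rw [decide_eq_false_iff_not] at hf
        exact hf (cube_all h3 _)⟩)
    else
      Sum.inr (Sum.inl ⟨b ^ 2 * c / d ^ 3, by
        have hb : b ≠ 0 := by intro h; apply hdet; rw [ha, h]; ring
        have hc : c ≠ 0 := by intro h; apply hdet; rw [ha, h]; ring
        exact div_ne_zero (mul_ne_zero (pow_ne_zero _ hb) hc) (pow_ne_zero _ hd)⟩)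
  else if hd : d = 0 then
    Sum.inr (Sum.inl ⟨c ^ 2 * b / a ^ 3, by
      have hb : b ≠ 0 := by intro h; apply hdet; rw [hd, h]; ring
      have hc : c ≠ 0 := by intro h; apply hdet; rw [hd, h]; ring
      exact div_ne_zero (mul_ne_zero (pow_ne_zero _ hc) hb) (pow_ne_zero _ ha)⟩)
  else
    Sum.inl ⟨Sym2.mk (a * b / d ^ 2) (d * c / a ^ 2), by
      rw [prodS_mk, div_mul_div_comm]
      intro h
      rw [div_eq_one_iff_eq (mul_ne_zero (pow_ne_zero 2 hd) (pow_ne_zero 2 ha))] at h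
      have h2 : a * d * (a * d - b * c) = 0 := by linear_combination -h
      rcases mul_eq_zero.mp h2 with h3 | h3
      · rcases mul_eq_zero.mp h3 with h4 | h4
        exacts [ha h4, hd h4]
      · exact hdet h3⟩

/-- The invariant on `GL₂`. -/
def fInv (A : GL (Fin 2) F) : EClass F :=
  fAux ((A : Matrix (Fin 2) (Fin 2) F) 0 0) ((A : Matrix (Fin 2) (Fin 2) F) 0 1)
    ((A : Matrix (Fin 2) (Fin 2) F) 1 0) ((A : Matrix (Fin 2) (Fin 2) F) 1 1)
    (by
      have h := (Matrix.isUnit_iff_isUnit_det _).mp (Units.isUnit A)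
      rw [Matrix.det_fin_two] at h
      exact h.ne_zero)

lemma perm2 (σ : Equiv.Perm (Fin 2)) : σ = 1 ∨ σ = Equiv.swap 0 1 := by
  revert σ; decide

/-- Build an element of `GL₂` from entries. -/
def mkGL (a b c d : F) (h : a * d - b * c ≠ 0) : GL (Fin 2) F :=
  Matrix.GeneralLinearGroup.mkOfDetNeZero !![a, b; c, d] (by
    rw [Matrix.det_fin_two_of]; exact h)

@[simp] lemma mkGL_val (a b c d : F) (h : a * d - b * c ≠ 0) :
    (mkGL a b c d h : Matrix (Fin 2) (Fin 2) F) = !![a, b; c, d] := rfl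

end Class

section Invariance
variable {F : Type*} [Field F] [Fintype F] [DecidableEq F]

lemma fAux_scaled {a b c d a' b' c' d' t0 t1 : F} (ht0 : t0 ≠ 0) (ht1 : t1 ≠ 0)
    (h00 : t0 * a = a' * t0 ^ 2) (h01 : t0 * b = b' * t1 ^ 2)
    (h10 : t1 * c = c' * t0 ^ 2) (h11 : t1 * d = d' * t1 ^ 2)
    (hdet : a * d - b * c ≠ 0) (hdet' : a' * d' - b' * c' ≠ 0) :
    fAux a b c d hdet = fAux a' b' c' d' hdet' := by
  have ea : a = a' * t0 := mul_left_cancel₀ ht0 (h00.trans (by ring))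
  have ed : d = d' * t1 := mul_left_cancel₀ ht1 (h11.trans (by ring))
  have hb' : b' = t0 * b / t1 ^ 2 := by
    rw [eq_div_iff (pow_ne_zero 2 ht1)]; exact h01.symm
  have hc' : c' = t1 * c / t0 ^ 2 := by
    rw [eq_div_iff (pow_ne_zero 2 ht0)]; exact h10.symm
  have haz : a = 0 ↔ a' = 0 := by rw [ea]; simp [ht0]
  have hdz : d = 0 ↔ d' = 0 := by rw [ed]; simp [ht1]
  by_cases ha : a = 0 <;> by_cases hd : d = 0
  · have ha' := haz.mp ha
    have hd' := hdz.mp hd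
    simp only [fAux, dif_pos ha, dif_pos hd, dif_pos ha', dif_pos hd',
      Sum.inr.injEq, Subtype.mk.injEq]
    rw [decide_eq_decide]
    have hkey : b' * c' ^ 2 = (b * c ^ 2) * (t0⁻¹) ^ 3 := by
      rw [hb', hc']; field_simp
    rw [hkey]
    exact (cube_mul_cube _ _ (inv_ne_zero ht0)).symm
  · have ha' := haz.mp ha
    have hd' := (not_iff_not.mpr hdz).mp hd
    simp only [fAux, dif_pos ha, dif_neg hd, dif_pos ha', dif_neg hd',
      Sum.inr.injEq, Sum.inl.injEq, Subtype.mk.injEq]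
    rw [hb', hc', ed]
    have hd'' : d' ≠ 0 := hd'
    field_simp
  · have ha' := (not_iff_not.mpr haz).mp ha
    have hd' := hdz.mp hd
    simp only [fAux, dif_neg ha, dif_pos hd, dif_neg ha', dif_pos hd',
      Sum.inr.injEq, Sum.inl.injEq, Subtype.mk.injEq]
    rw [hb', hc', ea]
    field_simp
  · have ha' := (not_iff_not.mpr haz).mp ha
    have hd' := (not_iff_not.mpr hdz).mp hd
    simp only [fAux, dif_neg ha, dif_neg hd, dif_neg ha', dif_neg hd',
      Sum.inl.injEq, Subtype.mk.injEq]
    rw [hb', hc', ea, ed]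
    congr 1 <;> field_simp

lemma fAux_swapped {a b c d a' b' c' d' t0 t1 : F} (ht0 : t0 ≠ 0) (ht1 : t1 ≠ 0)
    (h00 : t0 * a = d' * t0 ^ 2) (h01 : t0 * b = c' * t1 ^ 2)
    (h10 : t1 * c = b' * t0 ^ 2) (h11 : t1 * d = a' * t1 ^ 2)
    (hdet : a * d - b * c ≠ 0) (hdet' : a' * d' - b' * c' ≠ 0) :
    fAux a b c d hdet = fAux a' b' c' d' hdet' := by
  have ea : a = d' * t0 := mul_left_cancel₀ ht0 (h00.trans (by ring))
  have ed : d = a' * t1 := mul_left_cancel₀ ht1 (h11.trans (by ring))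
  have hc' : c' = t0 * b / t1 ^ 2 := by
    rw [eq_div_iff (pow_ne_zero 2 ht1)]; exact h01.symm
  have hb' : b' = t1 * c / t0 ^ 2 := by
    rw [eq_div_iff (pow_ne_zero 2 ht0)]; exact h10.symm
  have haz : a = 0 ↔ d' = 0 := by rw [ea]; simp [ht0]
  have hdz : d = 0 ↔ a' = 0 := by rw [ed]; simp [ht1]
  by_cases ha : a = 0 <;> by_cases hd : d = 0
  · have hd' := haz.mp ha
    have ha' := hdz.mp hd
    have hb : b ≠ 0 := by intro h; apply hdet; rw [ha, h]; ring
    have hc : c ≠ 0 := by intro h; apply hdet; rw [ha, h]; ring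
    simp only [fAux, dif_pos ha, dif_pos hd, dif_pos ha', dif_pos hd',
      Sum.inr.injEq, Subtype.mk.injEq]
    rw [decide_eq_decide]
    have hkey : b' * c' ^ 2 = (b ^ 2 * c) * (t1⁻¹) ^ 3 := by
      rw [hb', hc']; field_simp
    rw [hkey, cube_mul_cube _ _ (inv_ne_zero ht1)]
    exact cube_compl (mul_ne_zero hb (pow_ne_zero 2 hc)) (mul_ne_zero hb hc) (by ring)
  · have hd' := haz.mp ha
    have ha' := (not_iff_not.mpr hdz).mp hd
    simp only [fAux, dif_pos ha, dif_neg hd, dif_neg ha', dif_pos hd',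
      Sum.inr.injEq, Sum.inl.injEq, Subtype.mk.injEq]
    rw [hb', hc', ed]
    field_simp
  · have hd' := (not_iff_not.mpr haz).mp ha
    have ha' := hdz.mp hd
    simp only [fAux, dif_neg ha, dif_pos hd, dif_pos ha', dif_neg hd',
      Sum.inr.injEq, Sum.inl.injEq, Subtype.mk.injEq]
    rw [hb', hc', ea]
    field_simp
  · have hd' := (not_iff_not.mpr haz).mp ha
    have ha' := (not_iff_not.mpr hdz).mp hd
    simp only [fAux, dif_neg ha, dif_neg hd, dif_neg ha', dif_neg hd',
      Sum.inl.injEq, Subtype.mk.injEq]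
    refine Eq.trans ?_ (Sym2.eq_swap)
    rw [hb', hc', ea, ed]
    congr 1 <;> field_simp
end Invariance

section Back
variable {F : Type*} [Field F] [Fintype F] [DecidableEq F]

lemma fInv_const {A B : GL (Fin 2) F} (h : evolRel F 2 A B) : fInv A = fInv B := by
  obtain ⟨σ, t, hrel⟩ := h
  rcases perm2 σ with rfl | rfl
  · exact fAux_scaled (Units.ne_zero (t 0)) (Units.ne_zero (t 1))
      (by simpa using hrel 0 0) (by simpa using hrel 0 1)
      (by simpa using hrel 1 0) (by simpa using hrel 1 1) _ _
  · exact fAux_swapped (Units.ne_zero (t 0)) (Units.ne_zero (t 1))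
      (by simpa [Equiv.swap_apply_left, Equiv.swap_apply_right] using hrel 0 0)
      (by simpa [Equiv.swap_apply_left, Equiv.swap_apply_right] using hrel 0 1)
      (by simpa [Equiv.swap_apply_left, Equiv.swap_apply_right] using hrel 1 0)
      (by simpa [Equiv.swap_apply_left, Equiv.swap_apply_right] using hrel 1 1) _ _

lemma fAux_back {a b c d a' b' c' d' : F} (hdet : a * d - b * c ≠ 0)
    (hdet' : a' * d' - b' * c' ≠ 0)
    (h : fAux a b c d hdet = fAux a' b' c' d' hdet') :
    (∃ t0 t1 : F, t0 ≠ 0 ∧ t1 ≠ 0 ∧ t0 * a = a' * t0 ^ 2 ∧ t0 * b = b' * t1 ^ 2 ∧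
      t1 * c = c' * t0 ^ 2 ∧ t1 * d = d' * t1 ^ 2) ∨
    (∃ t0 t1 : F, t0 ≠ 0 ∧ t1 ≠ 0 ∧ t0 * a = d' * t0 ^ 2 ∧ t0 * b = c' * t1 ^ 2 ∧
      t1 * c = b' * t0 ^ 2 ∧ t1 * d = a' * t1 ^ 2) := by
  by_cases ha : a = 0 <;> by_cases hd : d = 0 <;>
    by_cases ha' : a' = 0 <;> by_cases hd' : d' = 0
  · simp only [fAux, dif_pos ha, dif_pos hd, dif_pos ha', dif_pos hd', Sum.inr.injEq, Sum.inl.injEq, Subtype.mk.injEq, reduceCtorEq] at h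
    have hb : b ≠ 0 := by intro hh; apply hdet; rw [ha, hh]; ring
    have hc : c ≠ 0 := by intro hh; apply hdet; rw [ha, hh]; ring
    have hb' : b' ≠ 0 := by intro hh; apply hdet'; rw [ha', hh]; ring
    have hc' : c' ≠ 0 := by intro hh; apply hdet'; rw [ha', hh]; ring
    rw [decide_eq_decide] at h
    have hU : b ^ 2 * c ≠ 0 := mul_ne_zero (pow_ne_zero 2 hb) hc
    have hV : c' * b' ^ 2 ≠ 0 := mul_ne_zero hc' (pow_ne_zero 2 hb')
    have iU : IsCubeE (b ^ 2 * c) ↔ IsCubeE (b * c ^ 2) :=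
      cube_compl hU (mul_ne_zero hb hc) (by ring)
    have iV : IsCubeE (c' * b' ^ 2) ↔ IsCubeE (b' * c' ^ 2) :=
      cube_compl hV (mul_ne_zero hb' hc') (by ring)
    have hUV : IsCubeE (b ^ 2 * c) ↔ IsCubeE (c' * b' ^ 2) := by
      rw [iU, iV]; exact h
    rcases key3 hU hV hUV with ⟨w, hw⟩ | ⟨w, hw⟩
    · have hw0 : w ≠ 0 := by
        intro hh; rw [hh] at hw
        exact (mul_ne_zero hU (pow_ne_zero 2 hV)) (by simpa using hw.symm)
      left
      refine ⟨b' * (w / (c' * b' ^ 2)) ^ 2 / b, w / (c' * b' ^ 2),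
        div_ne_zero (mul_ne_zero hb' (pow_ne_zero 2 (div_ne_zero hw0 hV))) hb,
        div_ne_zero hw0 hV, ?_, ?_, ?_, ?_⟩
      · rw [ha, ha']; ring
      · field_simp
      · field_simp
        linear_combination -hw
      · rw [hd, hd']; ring
    · have hw0 : w ≠ 0 := by
        intro hh; rw [hh] at hw
        exact (mul_ne_zero hU hV) (by simpa using hw.symm)
      right
      refine ⟨c' * (w / (b' * c')) ^ 2 / b, w / (b' * c'),
        div_ne_zero (mul_ne_zero hc' (pow_ne_zero 2 (div_ne_zero hw0 (mul_ne_zero hb' hc')))) hb,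
        div_ne_zero hw0 (mul_ne_zero hb' hc'), ?_, ?_, ?_, ?_⟩
      · rw [ha, hd']; ring
      · field_simp
      · field_simp
        linear_combination -hw
      · rw [hd, ha']; ring
  · simp only [fAux, dif_pos ha, dif_pos hd, dif_pos ha', dif_neg hd', Sum.inr.injEq, Sum.inl.injEq, Subtype.mk.injEq, reduceCtorEq] at h
  · simp only [fAux, dif_pos ha, dif_pos hd, dif_neg ha', dif_pos hd', Sum.inr.injEq, Sum.inl.injEq, Subtype.mk.injEq, reduceCtorEq] at h
  · simp only [fAux, dif_pos ha, dif_pos hd, dif_neg ha', dif_neg hd', Sum.inr.injEq, Sum.inl.injEq, Subtype.mk.injEq, reduceCtorEq] at h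
  · simp only [fAux, dif_pos ha, dif_neg hd, dif_pos ha', dif_pos hd', Sum.inr.injEq, Sum.inl.injEq, Subtype.mk.injEq, reduceCtorEq] at h
  · simp only [fAux, dif_pos ha, dif_neg hd, dif_pos ha', dif_neg hd', Sum.inr.injEq, Sum.inl.injEq, Subtype.mk.injEq, reduceCtorEq] at h
    have hb : b ≠ 0 := by intro hh; apply hdet; rw [ha, hh]; ring
    have hc : c ≠ 0 := by intro hh; apply hdet; rw [ha, hh]; ring
    have hb' : b' ≠ 0 := by intro hh; apply hdet'; rw [ha', hh]; ring
    have hc' : c' ≠ 0 := by intro hh; apply hdet'; rw [ha', hh]; ring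
    field_simp at h
    left
    refine ⟨b' * (d / d') ^ 2 / b, d / d',
      div_ne_zero (mul_ne_zero hb' (pow_ne_zero 2 (div_ne_zero hd hd'))) hb,
      div_ne_zero hd hd', ?_, ?_, ?_, ?_⟩
    · rw [ha, ha']; ring
    · field_simp
    · field_simp
      linear_combination h
    · field_simp
  · simp only [fAux, dif_pos ha, dif_neg hd, dif_neg ha', dif_pos hd', Sum.inr.injEq, Sum.inl.injEq, Subtype.mk.injEq, reduceCtorEq] at h
    have hb : b ≠ 0 := by intro hh; apply hdet; rw [ha, hh]; ring
    have hc : c ≠ 0 := by intro hh; apply hdet; rw [ha, hh]; ring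
    have hb' : b' ≠ 0 := by intro hh; apply hdet'; rw [hd', hh]; ring
    have hc' : c' ≠ 0 := by intro hh; apply hdet'; rw [hd', hh]; ring
    field_simp at h
    right
    refine ⟨c' * (d / a') ^ 2 / b, d / a',
      div_ne_zero (mul_ne_zero hc' (pow_ne_zero 2 (div_ne_zero hd ha'))) hb,
      div_ne_zero hd ha', ?_, ?_, ?_, ?_⟩
    · rw [ha, hd']; ring
    · field_simp
    · field_simp
      linear_combination h
    · field_simp
  · simp only [fAux, dif_pos ha, dif_neg hd, dif_neg ha', dif_neg hd', Sum.inr.injEq, Sum.inl.injEq, Subtype.mk.injEq, reduceCtorEq] at h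
  · simp only [fAux, dif_neg ha, dif_pos hd, dif_pos ha', dif_pos hd', Sum.inr.injEq, Sum.inl.injEq, Subtype.mk.injEq, reduceCtorEq] at h
  · simp only [fAux, dif_neg ha, dif_pos hd, dif_pos ha', dif_neg hd', Sum.inr.injEq, Sum.inl.injEq, Subtype.mk.injEq, reduceCtorEq] at h
    have hb : b ≠ 0 := by intro hh; apply hdet; rw [hd, hh]; ring
    have hc : c ≠ 0 := by intro hh; apply hdet; rw [hd, hh]; ring
    have hb' : b' ≠ 0 := by intro hh; apply hdet'; rw [ha', hh]; ring
    have hc' : c' ≠ 0 := by intro hh; apply hdet'; rw [ha', hh]; ring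
    field_simp at h
    right
    refine ⟨a / d', b' * (a / d') ^ 2 / c,
      div_ne_zero ha hd',
      div_ne_zero (mul_ne_zero hb' (pow_ne_zero 2 (div_ne_zero ha hd'))) hc,
      ?_, ?_, ?_, ?_⟩
    · field_simp
    · field_simp
      linear_combination h
    · field_simp
    · rw [hd, ha']; ring
  · simp only [fAux, dif_neg ha, dif_pos hd, dif_neg ha', dif_pos hd', Sum.inr.injEq, Sum.inl.injEq, Subtype.mk.injEq, reduceCtorEq] at h
    have hb : b ≠ 0 := by intro hh; apply hdet; rw [hd, hh]; ring
    have hc : c ≠ 0 := by intro hh; apply hdet; rw [hd, hh]; ring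
    have hb' : b' ≠ 0 := by intro hh; apply hdet'; rw [hd', hh]; ring
    have hc' : c' ≠ 0 := by intro hh; apply hdet'; rw [hd', hh]; ring
    field_simp at h
    left
    refine ⟨a / a', c' * (a / a') ^ 2 / c,
      div_ne_zero ha ha',
      div_ne_zero (mul_ne_zero hc' (pow_ne_zero 2 (div_ne_zero ha ha'))) hc,
      ?_, ?_, ?_, ?_⟩
    · field_simp
    · field_simp
      linear_combination h
    · field_simp
    · rw [hd, hd']; ring
  · simp only [fAux, dif_neg ha, dif_pos hd, dif_neg ha', dif_neg hd', Sum.inr.injEq, Sum.inl.injEq, Subtype.mk.injEq, reduceCtorEq] at h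
  · simp only [fAux, dif_neg ha, dif_neg hd, dif_pos ha', dif_pos hd', Sum.inr.injEq, Sum.inl.injEq, Subtype.mk.injEq, reduceCtorEq] at h
  · simp only [fAux, dif_neg ha, dif_neg hd, dif_pos ha', dif_neg hd', Sum.inr.injEq, Sum.inl.injEq, Subtype.mk.injEq, reduceCtorEq] at h
  · simp only [fAux, dif_neg ha, dif_neg hd, dif_neg ha', dif_pos hd', Sum.inr.injEq, Sum.inl.injEq, Subtype.mk.injEq, reduceCtorEq] at h
  · simp only [fAux, dif_neg ha, dif_neg hd, dif_neg ha', dif_neg hd', Sum.inr.injEq, Sum.inl.injEq, Subtype.mk.injEq, reduceCtorEq] at h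
    rw [Sym2.eq_iff] at h
    rcases h with ⟨e1, e2⟩ | ⟨e1, e2⟩
    · field_simp at e1 e2
      left
      refine ⟨a / a', d / d', div_ne_zero ha ha', div_ne_zero hd hd', ?_, ?_, ?_, ?_⟩
      · field_simp
      · field_simp
        linear_combination e1
      · field_simp
        linear_combination e2
      · field_simp
    · field_simp at e1 e2
      right
      refine ⟨a / d', d / a', div_ne_zero ha hd', div_ne_zero hd ha', ?_, ?_, ?_, ?_⟩
      · field_simp
      · field_simp
        linear_combination e1
      · field_simp
        linear_combination e2
      · field_simp
end Back

section Bij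
variable {F : Type*} [Field F] [Fintype F] [DecidableEq F]

lemma fAux_congr {a b c d a' b' c' d' : F} (ea : a = a') (eb : b = b') (ec : c = c')
    (ed : d = d') (h : a * d - b * c ≠ 0) (h' : a' * d' - b' * c' ≠ 0) :
    fAux a b c d h = fAux a' b' c' d' h' := by
  subst ea; subst eb; subst ec; subst ed; rfl

lemma fInv_mkGL (a b c d : F) (h : a * d - b * c ≠ 0) :
    fInv (mkGL a b c d h) = fAux a b c d h := by
  simp only [fInv]
  exact fAux_congr (by simp [mkGL_val]) (by simp [mkGL_val]) (by simp [mkGL_val])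
    (by simp [mkGL_val]) _ _

lemma fInv_inj {A B : GL (Fin 2) F} (h : fInv A = fInv B) : evolRel F 2 A B := by
  rcases fAux_back _ _ h with ⟨t0, t1, ht0, ht1, h00, h01, h10, h11⟩ |
      ⟨t0, t1, ht0, ht1, h00, h01, h10, h11⟩
  · refine ⟨1, ![Units.mk0 t0 ht0, Units.mk0 t1 ht1], ?_⟩
    intro i j
    fin_cases i <;> fin_cases j <;>
      simp only [Fin.isValue, Matrix.cons_val_zero, Matrix.cons_val_one, Matrix.head_cons,
        Units.val_mk0, Equiv.Perm.coe_one, id_eq]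
    exacts [h00, h01, h10, h11]
  · refine ⟨Equiv.swap 0 1, ![Units.mk0 t0 ht0, Units.mk0 t1 ht1], ?_⟩
    intro i j
    fin_cases i <;> fin_cases j <;>
      simp only [Fin.isValue, Matrix.cons_val_zero, Matrix.cons_val_one, Matrix.head_cons,
        Units.val_mk0, Equiv.swap_apply_left, Equiv.swap_apply_right]
    exacts [h00, h01, h10, h11]

lemma fInv_surj : Function.Surjective (fInv (F := F)) := by
  rintro (⟨s, hs⟩ | ⟨v, hv⟩ | ⟨bb, hbb⟩)
  · induction s using Sym2.ind with
    | _ x y =>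
      have hs' : x * y ≠ 1 := by simpa [prodS] using hs
      have hdet : (1 : F) * 1 - x * y ≠ 0 := by
        intro hh; apply hs'; linear_combination -hh
      refine ⟨mkGL 1 x y 1 hdet, ?_⟩
      rw [fInv_mkGL]
      simp only [fAux, dif_neg (one_ne_zero (α := F)), Sum.inl.injEq, Subtype.mk.injEq]
      simp
  · have hdet : (0 : F) * 1 - 1 * v ≠ 0 := by simpa using hv
    refine ⟨mkGL 0 1 v 1 hdet, ?_⟩
    rw [fInv_mkGL]
    simp only [fAux, dif_pos rfl, dif_neg (one_ne_zero (α := F)), Sum.inr.injEq,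
      Sum.inl.injEq, Subtype.mk.injEq]
    simp
  · cases bb with
    | true =>
      have hdet : (0 : F) * 0 - 1 * 1 ≠ 0 := by norm_num
      refine ⟨mkGL 0 1 1 0 hdet, ?_⟩
      rw [fInv_mkGL]
      simp only [fAux, dif_pos rfl, dite_true, eq_self_iff_true, Sum.inr.injEq, Subtype.mk.injEq]
      rw [decide_eq_true_eq]
      simp only [one_pow, mul_one]
      exact ⟨1, one_pow 3⟩
    | false =>
      obtain ⟨z, hz0, hz⟩ := exists_noncube (hbb rfl)
      have hdet : (0 : F) * 0 - z * 1 ≠ 0 := by simpa using hz0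
      refine ⟨mkGL 0 z 1 0 hdet, ?_⟩
      rw [fInv_mkGL]
      simp only [fAux, dif_pos rfl, dite_true, eq_self_iff_true, Sum.inr.injEq, Subtype.mk.injEq]
      rw [decide_eq_false_iff_not]
      simpa using hz

noncomputable def orbitEquiv (F : Type*) [Field F] [Fintype F] [DecidableEq F] :
    Quot (evolRel F 2) ≃ EClass F := by
  refine Equiv.ofBijective (Quot.lift fInv (fun A B h => fInv_const h)) ⟨?_, ?_⟩
  · refine Quot.ind fun A => Quot.ind fun B h => ?_
    exact Quot.sound (fInv_inj h)
  · intro x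
    obtain ⟨A, hA⟩ := fInv_surj x
    exact ⟨Quot.mk _ A, hA⟩

lemma numOrbits_eq_card : numOrbits F 2 = Fintype.card (EClass F) := by
  rw [numOrbits, Nat.card_congr (orbitEquiv F), Nat.card_eq_fintype_card]
end Bij

section Count
variable {F : Type*} [Field F] [Fintype F] [DecidableEq F]

lemma card_ne_zero' : Fintype.card {v : F // v ≠ 0} = Fintype.card F - 1 := by
  rw [← Fintype.card_units (α := F)]
  exact (Fintype.card_congr unitsEquivNeZero).symm

lemma card_bool_part (h3 : 3 ∣ Fintype.card F - 1) :
    Fintype.card {bb : Bool // bb = false → 3 ∣ Fintype.card F - 1} = 2 := by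
  rw [Fintype.card_congr (Equiv.subtypeUnivEquiv (fun bb _ => h3))]
  exact Fintype.card_bool

lemma card_bool_part' (h3 : ¬ 3 ∣ Fintype.card F - 1) :
    Fintype.card {bb : Bool // bb = false → 3 ∣ Fintype.card F - 1} = 1 := by
  have e : ∀ bb : Bool, (bb = false → 3 ∣ Fintype.card F - 1) ↔ bb = true := by
    intro bb; cases bb <;> simp [h3]
  rw [Fintype.card_congr (Equiv.subtypeEquivRight e)]
  exact Fintype.card_subtype_eq true

lemma card_sym2_part (h2 : (-1 : F) ≠ 1) :
    2 * Fintype.card {s : Sym2 F // prodS s ≠ 1} = Fintype.card F ^ 2 - 1 := by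
  classical
  letI : LinearOrder F := LinearOrder.lift' (Fintype.equivFin F) (Fintype.equivFin F).injective
  -- identify with ordered pairs
  have hsort : ∀ s : Sym2 F, prodS s ≠ 1 ↔
      ((Sym2.sortEquiv s : F × F).1 ≤ (Sym2.sortEquiv s : F × F).2 ∧
        (Sym2.sortEquiv s : F × F).1 * (Sym2.sortEquiv s : F × F).2 ≠ 1) := by
    intro s
    induction s using Sym2.ind with
    | _ x y =>
      have hle : (Sym2.sortEquiv (Sym2.mk x y) : F × F).1 ≤
          (Sym2.sortEquiv (Sym2.mk x y) : F × F).2 := (Sym2.sortEquiv (Sym2.mk x y)).2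
      have hprod : (Sym2.sortEquiv (Sym2.mk x y) : F × F).1 *
          (Sym2.sortEquiv (Sym2.mk x y) : F × F).2 = x * y := by
        simp only [Sym2.sortEquiv_apply_coe, Sym2.inf_mk, Sym2.sup_mk]
        rcases le_total x y with h | h
        · rw [inf_eq_left.mpr h, sup_eq_right.mpr h]
        · rw [inf_eq_right.mpr h, sup_eq_left.mpr h, mul_comm]
      rw [prodS_mk, hprod]
      simp [hle]
  have e : {s : Sym2 F // prodS s ≠ 1} ≃
      {p : F × F // p.1 ≤ p.2 ∧ p.1 * p.2 ≠ 1} := by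
    refine (Equiv.subtypeEquiv (q := fun pp : {p : F × F // p.1 ≤ p.2} =>
        (pp : F × F).1 * (pp : F × F).2 ≠ 1) Sym2.sortEquiv ?_).trans ?_
    · intro s
      constructor
      · intro hh
        exact ((hsort s).mp hh).2
      · intro hh
        exact (hsort s).mpr ⟨(Sym2.sortEquiv s).2, hh⟩
    · exact (Equiv.subtypeSubtypeEquivSubtypeInter (fun p : F × F => p.1 ≤ p.2) (fun p : F × F => p.1 * p.2 ≠ 1))
  rw [Fintype.card_congr e, Fintype.card_subtype]
  have hq3 : 3 ≤ Fintype.card F := by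
    have h01 : (0 : F) ≠ 1 := zero_ne_one
    have h0m : (0 : F) ≠ -1 := by
      intro hh; apply h2; rw [← hh]; exact zero_eq_neg.mp hh ▸ by simp [← hh]
    have hcard : ({0, 1, -1} : Finset F).card = 3 := by
      rw [Finset.card_insert_of_notMem (by simp [h01, h0m]),
        Finset.card_insert_of_notMem (by simp [h2.symm]), Finset.card_singleton]
    calc 3 = ({0, 1, -1} : Finset F).card := hcard.symm
    _ ≤ Fintype.card F := by rw [← Finset.card_univ]; exact Finset.card_le_card (Finset.subset_univ _)
  have hqq : Fintype.card F ≤ Fintype.card F ^ 2 := Nat.le_self_pow (by norm_num) _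
  -- Finsets
  have hNcard : (Finset.univ.filter (fun p : F × F => p.1 ≤ p.2 ∧ p.1 * p.2 ≠ 1)).card
      = (Finset.univ.filter (fun p : F × F => p.1 < p.2 ∧ p.1 * p.2 ≠ 1)).card
        + (Finset.univ.filter (fun p : F × F => p.1 = p.2 ∧ p.1 * p.2 ≠ 1)).card := by
    rw [← Finset.card_union_of_disjoint (by
      rw [Finset.disjoint_left]
      intro p hp hq
      rw [Finset.mem_filter] at hp hq
      exact absurd hq.2.1 (ne_of_lt hp.2.1))]
    congr 1
    ext p
    simp only [Finset.mem_union, Finset.mem_filter, Finset.mem_univ, true_and]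
    constructor
    · rintro ⟨hle, hq⟩
      rcases lt_or_eq_of_le hle with h | h
      exacts [Or.inl ⟨h, hq⟩, Or.inr ⟨h, hq⟩]
    · rintro (⟨h, hq⟩ | ⟨h, hq⟩)
      exacts [⟨le_of_lt h, hq⟩, ⟨le_of_eq h, hq⟩]
  have hScard : (Finset.univ.filter (fun p : F × F => p.1 * p.2 ≠ 1)).card
      = (Finset.univ.filter (fun p : F × F => p.1 ≤ p.2 ∧ p.1 * p.2 ≠ 1)).card
        + (Finset.univ.filter (fun p : F × F => p.2 < p.1 ∧ p.1 * p.2 ≠ 1)).card := by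
    rw [← Finset.card_union_of_disjoint (by
      rw [Finset.disjoint_left]
      intro p hp hq
      rw [Finset.mem_filter] at hp hq
      exact absurd hp.2.1 (not_le_of_gt hq.2.1))]
    congr 1
    ext p
    simp only [Finset.mem_union, Finset.mem_filter, Finset.mem_univ, true_and]
    constructor
    · intro hq
      rcases le_or_gt p.1 p.2 with h | h
      exacts [Or.inl ⟨h, hq⟩, Or.inr ⟨h, hq⟩]
    · rintro (⟨_, hq⟩ | ⟨_, hq⟩) <;> exact hq
  have hGL : (Finset.univ.filter (fun p : F × F => p.2 < p.1 ∧ p.1 * p.2 ≠ 1)).card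
      = (Finset.univ.filter (fun p : F × F => p.1 < p.2 ∧ p.1 * p.2 ≠ 1)).card := by
    refine Finset.card_nbij' Prod.swap Prod.swap ?_ ?_ ?_ ?_
    · intro p hp
      simp only [Finset.mem_coe, Finset.mem_filter, Finset.mem_univ, true_and] at hp ⊢
      exact ⟨hp.1, by rw [Prod.fst_swap, Prod.snd_swap, mul_comm]; exact hp.2⟩
    · intro p hp
      simp only [Finset.mem_coe, Finset.mem_filter, Finset.mem_univ, true_and] at hp ⊢
      exact ⟨hp.1, by rw [Prod.fst_swap, Prod.snd_swap, mul_comm]; exact hp.2⟩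
    · intro p _; exact Prod.swap_swap p
    · intro p _; exact Prod.swap_swap p
  have hStot : (Finset.univ.filter (fun p : F × F => p.1 * p.2 = 1)).card
      + (Finset.univ.filter (fun p : F × F => p.1 * p.2 ≠ 1)).card
      = Fintype.card F ^ 2 := by
    rw [Finset.card_filter_add_card_filter_not]
    rw [Finset.card_univ, Fintype.card_prod, sq]
  have hSone : (Finset.univ.filter (fun p : F × F => p.1 * p.2 = 1)).card
      = Fintype.card F - 1 := by
    have : (Finset.univ.filter (fun p : F × F => p.1 * p.2 = 1)).card
        = (Finset.univ.filter (fun x : F => x ≠ 0)).card := by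
      refine Finset.card_nbij' (fun p => p.1) (fun x => (x, x⁻¹)) ?_ ?_ ?_ ?_
      · intro p hp
        simp only [Finset.mem_coe, Finset.mem_filter, Finset.mem_univ, true_and] at hp ⊢
        intro hh
        rw [hh, zero_mul] at hp
        exact zero_ne_one hp
      · intro x hx
        simp only [Finset.mem_coe, Finset.mem_filter, Finset.mem_univ, true_and] at hx ⊢
        exact mul_inv_cancel₀ hx
      · intro p hp
        simp only [Finset.mem_coe, Finset.mem_filter, Finset.mem_univ, true_and] at hp
        have h1 : p.1 ≠ 0 := by
          intro hh; rw [hh, zero_mul] at hp; exact zero_ne_one hp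
        have hinv : p.2 = p.1⁻¹ := by
          field_simp
          linear_combination hp
        simp only [← hinv]
      · intro x _
        rfl
    rw [this, Finset.filter_ne', Finset.card_erase_of_mem (Finset.mem_univ 0), Finset.card_univ]
  have hDone : (Finset.univ.filter (fun p : F × F => p.1 = p.2 ∧ p.1 * p.2 ≠ 1)).card
      = Fintype.card F - 2 := by
    have hbij : (Finset.univ.filter (fun p : F × F => p.1 = p.2 ∧ p.1 * p.2 ≠ 1)).card
        = (Finset.univ.filter (fun x : F => x * x ≠ 1)).card := by
      refine Finset.card_nbij' (fun p => p.1) (fun x => (x, x)) ?_ ?_ ?_ ?_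
      · intro p hp
        simp only [Finset.mem_coe, Finset.mem_filter, Finset.mem_univ, true_and] at hp ⊢
        rw [← hp.1] at hp
        exact hp.2
      · intro x hx
        simp only [Finset.mem_coe, Finset.mem_filter, Finset.mem_univ, true_and] at hx ⊢
        simpa using hx
      · intro p hp
        simp only [Finset.mem_coe, Finset.mem_filter, Finset.mem_univ, true_and] at hp
        exact Prod.ext_iff.mpr ⟨rfl, hp.1⟩
      · intro x _
        rfl
    have htot : (Finset.univ.filter (fun x : F => x * x = 1)).card
        + (Finset.univ.filter (fun x : F => x * x ≠ 1)).card = Fintype.card F := by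
      rw [Finset.card_filter_add_card_filter_not, Finset.card_univ]
    have hset : (Finset.univ.filter (fun x : F => x * x = 1)) = {1, -1} := by
      ext x
      simp [mul_self_eq_one_iff]
    have h2' : (1 : F) ≠ -1 := fun hh => h2 hh.symm
    have hcard2 : (Finset.univ.filter (fun x : F => x * x = 1)).card = 2 := by
      rw [hset, Finset.card_insert_of_notMem (by simp [h2']), Finset.card_singleton]
    omega
  omega
end Count

/-- The number of isomorphism classes of 2-dimensional idempotent evolution algebras
over `F_q` with `q = p^m`, `p` an odd prime. -/
theorem numOrbits_two_char_odd {F : Type*} [Field F] [Fintype F] [DecidableEq F]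
    (p m q : ℕ) (hp : p.Prime) (hodd : p ≠ 2) (hm : 1 ≤ m) (hq : q = p ^ m)
    (hcard : Fintype.card F = q) :
    (numOrbits F 2 : ℚ) =
      if 3 ∣ (q - 1) then ((q : ℚ) + 1) ^ 2 / 2
      else ((q : ℚ) + 1) ^ 2 / 2 - 1 := by
  -- characteristic is p, so 2 ≠ 0 in F
  haveI : CharP F (ringChar F) := ringChar.charP F
  obtain ⟨n, hrp, hcard'⟩ := FiniteField.card F (ringChar F)
  have hrpp : ringChar F = p := by
    have h1 : ringChar F ∣ p ^ m := by
      rw [← hq, ← hcard, hcard']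
      exact dvd_pow_self _ (by positivity)
    exact (Nat.prime_dvd_prime_iff_eq hrp hp).mp (hrp.dvd_of_dvd_pow h1)
  have h20 : (2 : F) ≠ 0 := by
    intro hh
    have : ringChar F ∣ 2 := (CharP.cast_eq_zero_iff F (ringChar F) 2).mp (by exact_mod_cast hh)
    rw [hrpp] at this
    exact hodd ((Nat.prime_dvd_prime_iff_eq hp Nat.prime_two).mp this)
  have h2 : (-1 : F) ≠ 1 := by
    intro hh
    apply h20
    linear_combination -hh
  have hq3 : 3 ≤ q := by
    have hp3 : 3 ≤ p := by
      rcases hp.two_le.lt_or_eq with h | h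
      · omega
      · exact absurd h.symm hodd
    calc 3 ≤ p := hp3
    _ ≤ p ^ m := Nat.le_self_pow (by omega) p
    _ = q := hq.symm
  have hqq : q ≤ q ^ 2 := Nat.le_self_pow (by norm_num) q
  -- cardinalities
  have hsplit : numOrbits F 2 = Fintype.card {s : Sym2 F // prodS s ≠ 1}
      + (Fintype.card {v : F // v ≠ 0}
        + Fintype.card {bb : Bool // bb = false → 3 ∣ Fintype.card F - 1}) := by
    rw [numOrbits_eq_card]
    rw [Fintype.card_sum, Fintype.card_sum]
  have hs2 : 2 * Fintype.card {s : Sym2 F // prodS s ≠ 1} = q ^ 2 - 1 := by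
    rw [card_sym2_part h2, hcard]
  have hv : Fintype.card {v : F // v ≠ 0} = q - 1 := by
    rw [card_ne_zero', hcard]
  by_cases h3 : 3 ∣ q - 1
  · have hb : Fintype.card {bb : Bool // bb = false → 3 ∣ Fintype.card F - 1} = 2 :=
      card_bool_part (by rw [hcard]; exact h3)
    have h2N : 2 * numOrbits F 2 = q ^ 2 + 2 * q + 1 := by
      rw [hsplit, hb, hv]
      omega
    rw [if_pos h3]
    have hQ : (2 : ℚ) * (numOrbits F 2 : ℚ) = ((q : ℚ) + 1) ^ 2 := by
      have := congrArg (fun k : ℕ => (k : ℚ)) h2N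
      push_cast at this
      rw [this]
      ring
    rw [eq_div_iff (two_ne_zero (α := ℚ))]
    linarith [hQ]
  · have hb : Fintype.card {bb : Bool // bb = false → 3 ∣ Fintype.card F - 1} = 1 :=
      card_bool_part' (by rw [hcard]; exact h3)
    have h2N : 2 * numOrbits F 2 = q ^ 2 + 2 * q - 1 := by
      rw [hsplit, hb, hv]
      omega
    rw [if_neg h3]
    have hQ : (2 : ℚ) * (numOrbits F 2 : ℚ) = ((q : ℚ) + 1) ^ 2 - 2 := by
      have := congrArg (fun k : ℕ => (k : ℚ)) h2N
      push_cast [show (1:ℕ) ≤ q ^ 2 + 2*q from by omega] at this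
      rw [this]
      ring
    linarith [hQ]
end

section
/- Let q be a prime power and F_q a finite field with q elements, and let id be the identity permutation of {1,2}. Then Σ_{t ∈ (F_q^×)^2} |Fix_2(id,t)| = (q^2−1)(q^2−q) + 2·P_3·(q−1)^2, where P_3 = 1 if 3 | (q−1) and 0 otherwise. Here Fix_2(id,t) = {A ∈ GL_2(F_q) : t_i A_{ij} = A_{ij} t_j^2 for all i, j}. -/
open Matrix

/-- The set of fixed points of `(σ, t)` in `GL n F` under the action
`(σ,t)·A = D_t⁻¹ P_σ⁻¹ A P_σ D_t²`, i.e. the invertible matrices `A` with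
`t_i A_{ij} = A_{σ(i)σ(j)} t_j²` for all `i, j`. -/
def fixSet (F : Type*) [Field F] (n : ℕ) (σ : Equiv.Perm (Fin n)) (t : Fin n → Fˣ) :
    Set (GL (Fin n) F) :=
  {A | ∀ i j, (t i : F) * (A : Matrix (Fin n) (Fin n) F) i j
        = (A : Matrix (Fin n) (Fin n) F) (σ i) (σ j) * (t j : F) ^ 2}

section aux

variable {F : Type*} [Field F] [Fintype F] [DecidableEq F]

lemma card_cube_roots (q : ℕ) (hcard : Fintype.card F = q) :
    (Finset.univ.filter fun a : Fˣ => a ^ 3 = 1 ∧ a ≠ 1).card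
      = if 3 ∣ q - 1 then 2 else 0 := by
  have hq : Fintype.card Fˣ = q - 1 := by rw [Fintype.card_units, hcard]
  by_cases h : 3 ∣ q - 1
  · rw [if_pos h]
    haveI : Fact (Nat.Prime 3) := ⟨by norm_num⟩
    obtain ⟨z, hz⟩ := exists_prime_orderOf_dvd_card (G := Fˣ) 3 (by rw [hq]; exact h)
    have hz3 : z ^ 3 = 1 := by rw [← hz]; exact pow_orderOf_eq_one z
    have hz1 : z ≠ 1 := by
      intro e; rw [e, orderOf_one] at hz; norm_num at hz
    have hz21 : z ^ 2 ≠ 1 := by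
      intro e
      have := orderOf_dvd_of_pow_eq_one e
      rw [hz] at this
      norm_num at this
    have hzz : z ^ 2 ≠ z := by
      intro e
      apply hz1
      have : z * z = z * 1 := by rw [mul_one, ← sq, e]
      exact mul_left_cancel this
    -- the quadratic X^2 + X + 1
    set p : Polynomial F := Polynomial.X ^ 2 + Polynomial.X + 1 with hp
    have hpdeg : p.natDegree = 2 := by rw [hp]; compute_degree!
    have hpne : p ≠ 0 := fun e => by simp [e] at hpdeg
    have hroot : ∀ x : Fˣ, x ^ 3 = 1 → x ≠ 1 → (x : F) ∈ p.roots.toFinset := by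
      intro x hx3 hx1
      have hx3' : (x : F) ^ 3 = 1 := by
        have := congrArg (Units.val) hx3
        push_cast at this
        exact this
      have hsplit : ((x : F) - 1) * ((x : F) ^ 2 + (x : F) + 1) = 0 := by
        linear_combination hx3'
      have hne : (x : F) - 1 ≠ 0 := by
        rw [sub_ne_zero]
        exact fun e => hx1 (Units.ext (by rw [e, Units.val_one]))
      have : (x : F) ^ 2 + (x : F) + 1 = 0 := (mul_eq_zero.mp hsplit).resolve_left hne
      rw [Multiset.mem_toFinset, Polynomial.mem_roots hpne]
      simp [hp, this]
    have hz2_3 : (z ^ 2) ^ 3 = 1 := by rw [← pow_mul, mul_comm, pow_mul, hz3, one_pow]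
    have hsub : ({(z : F), ((z ^ 2 : Fˣ) : F)} : Finset F) ⊆ p.roots.toFinset := by
      intro x hx
      rcases Finset.mem_insert.mp hx with rfl | hx
      · exact hroot z hz3 hz1
      · rw [Finset.mem_singleton] at hx
        subst hx
        exact hroot (z ^ 2) hz2_3 hz21
    have hzzF : ((z : F)) ≠ ((z ^ 2 : Fˣ) : F) := by
      intro e
      exact hzz (Units.ext (by rw [← e]))
    have hcard2 : p.roots.toFinset.card ≤ 2 := by
      calc p.roots.toFinset.card ≤ Multiset.card p.roots := Multiset.toFinset_card_le _
        _ ≤ p.natDegree := p.card_roots'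
        _ = 2 := hpdeg
    have heq : ({(z : F), ((z ^ 2 : Fˣ) : F)} : Finset F) = p.roots.toFinset := by
      apply Finset.eq_of_subset_of_card_le hsub
      rw [Finset.card_pair hzzF]
      exact hcard2
    have hfilter : (Finset.univ.filter fun a : Fˣ => a ^ 3 = 1 ∧ a ≠ 1)
        = ({z, z ^ 2} : Finset Fˣ) := by
      ext x
      simp only [Finset.mem_filter, Finset.mem_univ, true_and, Finset.mem_insert,
        Finset.mem_singleton]
      constructor
      · rintro ⟨hx3, hx1⟩
        have := hroot x hx3 hx1
        rw [← heq] at this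
        rcases Finset.mem_insert.mp this with h' | h'
        · exact Or.inl (Units.ext h')
        · rw [Finset.mem_singleton] at h'
          exact Or.inr (Units.ext h')
      · rintro (rfl | rfl)
        · exact ⟨hz3, hz1⟩
        · exact ⟨hz2_3, hz21⟩
    rw [hfilter, Finset.card_pair (Ne.symm hzz)]
  · rw [if_neg h]
    rw [Finset.card_eq_zero, Finset.filter_eq_empty_iff]
    rintro x - ⟨hx3, hx1⟩
    have hdvd : orderOf x ∣ 3 := orderOf_dvd_of_pow_eq_one hx3
    rcases (Nat.Prime.eq_one_or_self_of_dvd (by norm_num) _ hdvd) with h1 | h3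
    · exact hx1 (orderOf_eq_one_iff.mp h1)
    · apply h
      rw [← hq, ← h3]
      exact orderOf_dvd_card

lemma eq_one_of_eq_sq {a : Fˣ} (e : a = a ^ 2) : a = 1 := by
  have h' : a * 1 = a * a := by rw [mul_one, ← sq]; exact e
  exact (mul_left_cancel h').symm

lemma mem_fixSet_iff {t : Fin 2 → Fˣ} {A : GL (Fin 2) F} :
    A ∈ fixSet F 2 1 t ↔ ∀ i j, (t i : F) * (A : Matrix (Fin 2) (Fin 2) F) i j
      = (A : Matrix (Fin 2) (Fin 2) F) i j * (t j : F) ^ 2 := by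
  simp [fixSet]

lemma entry_zero {t : Fin 2 → Fˣ} {A : GL (Fin 2) F} (hA : A ∈ fixSet F 2 1 t)
    {i j : Fin 2} (hne : t i ≠ t j ^ 2) : (A : Matrix (Fin 2) (Fin 2) F) i j = 0 := by
  have h := mem_fixSet_iff.mp hA i j
  have hne' : (t i : F) ≠ (t j : F) ^ 2 := by
    intro e
    exact hne (Units.ext (by rw [Units.val_pow_eq_pow_val]; exact e))
  have h0 : ((t i : F) - (t j : F) ^ 2) * (A : Matrix (Fin 2) (Fin 2) F) i j = 0 := by
    linear_combination h
  rcases mul_eq_zero.mp h0 with h' | h'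
  · exact absurd (sub_eq_zero.mp h') hne'
  · exact h'

lemma det_ne_zero' (A : GL (Fin 2) F) : ((A : Matrix (Fin 2) (Fin 2) F)).det ≠ 0 := by
  have h : (A : Matrix (Fin 2) (Fin 2) F) * (↑A⁻¹ : Matrix (Fin 2) (Fin 2) F) = 1 := by
    rw [← Units.val_mul, mul_inv_cancel, Units.val_one]
  have := congrArg Matrix.det h
  rw [Matrix.det_mul, Matrix.det_one] at this
  exact left_ne_zero_of_mul_eq_one this

lemma card_fixSet (q : ℕ) (hcard : Fintype.card F = q) (t : Fin 2 → Fˣ) :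
    Nat.card ↥(fixSet F 2 1 t)
      = (if t 0 = 1 ∧ t 1 = 1 then (q ^ 2 - 1) * (q ^ 2 - q) else 0)
        + (if t 1 = t 0 ^ 2 ∧ t 0 ^ 3 = 1 ∧ t 0 ≠ 1 then (q - 1) ^ 2 else 0) := by
  by_cases hA : t 0 = 1 ∧ t 1 = 1
  · rw [if_pos hA, if_neg (fun h => h.2.2 hA.1), add_zero]
    have huniv : fixSet F 2 1 t = Set.univ := by
      ext A
      simp only [Set.mem_univ, iff_true]
      rw [mem_fixSet_iff]
      intro i j
      have hi : t i = 1 := by fin_cases i <;> [exact hA.1; exact hA.2]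
      have hj : t j = 1 := by fin_cases j <;> [exact hA.1; exact hA.2]
      rw [hi, hj]
      simp
    rw [huniv, Nat.card_congr (Equiv.Set.univ _), Matrix.card_GL_field, hcard,
      Fin.prod_univ_two]
    norm_num
  · by_cases hB : t 1 = t 0 ^ 2 ∧ t 0 ^ 3 = 1 ∧ t 0 ≠ 1
    · rw [if_neg hA, if_pos hB, zero_add]
      obtain ⟨hb1, hb2, hb3⟩ := hB
      have ht1ne1 : t 1 ≠ 1 := by
        intro e
        apply hb3
        have h2 : t 0 ^ 2 = 1 := by rw [← hb1, e]
        calc t 0 = t 0 ^ 3 * (t 0 ^ 2)⁻¹ := by group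
          _ = 1 := by rw [hb2, h2]; group
      have ht12 : t 1 ^ 2 = t 0 := by
        rw [hb1, ← pow_mul]
        calc t 0 ^ (2 * 2) = t 0 ^ 3 * t 0 := by group
          _ = t 0 := by rw [hb2, one_mul]
      -- the map from pairs of units
      have hdet : ∀ a b : Fˣ, (!![0, (a : F); (b : F), 0]).det ≠ 0 := by
        intro a b
        rw [Matrix.det_fin_two_of]
        simp
      set f : Fˣ × Fˣ → ↥(fixSet F 2 1 t) := fun p =>
        ⟨Matrix.GeneralLinearGroup.mkOfDetNeZero _ (hdet p.1 p.2), by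
          rw [mem_fixSet_iff]
          intro i j
          have hcoe : ((Matrix.GeneralLinearGroup.mkOfDetNeZero _ (hdet p.1 p.2) :
              GL (Fin 2) F) : Matrix (Fin 2) (Fin 2) F) = !![0, (p.1 : F); (p.2 : F), 0] := rfl
          rw [hcoe]
          have e1 : (t 0 : F) * (p.1 : F) = (p.1 : F) * (t 1 : F) ^ 2 := by
            have : ((t 1 ^ 2 : Fˣ) : F) = ((t 0 : Fˣ) : F) := by rw [ht12]
            push_cast at this
            rw [this]; ring
          have e2 : (t 1 : F) * (p.2 : F) = (p.2 : F) * (t 0 : F) ^ 2 := by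
            have : ((t 0 ^ 2 : Fˣ) : F) = ((t 1 : Fˣ) : F) := by rw [← hb1]
            push_cast at this
            rw [this]; ring
          fin_cases i <;> fin_cases j <;> simp [e1, e2]⟩ with hf
      have hbij : Function.Bijective f := by
        constructor
        · rintro ⟨a, b⟩ ⟨c, d⟩ he
          have h' : (!![0, (a : F); (b : F), 0] : Matrix (Fin 2) (Fin 2) F)
              = !![0, (c : F); (d : F), 0] :=
            congrArg (fun x : ↥(fixSet F 2 1 t) => x.val.val) he
          have h1' : (a : F) = (c : F) := by
            have := congrArg (fun M : Matrix (Fin 2) (Fin 2) F => M 0 1) h'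
            simpa using this
          have h2' : (b : F) = (d : F) := by
            have := congrArg (fun M : Matrix (Fin 2) (Fin 2) F => M 1 0) h'
            simpa using this
          exact Prod.ext (Units.ext h1') (Units.ext h2')
        · rintro ⟨A, hA'⟩
          have h00 : (A : Matrix (Fin 2) (Fin 2) F) 0 0 = 0 := by
            apply entry_zero hA'
            intro e
            exact hb3 (eq_one_of_eq_sq e)
          have h11 : (A : Matrix (Fin 2) (Fin 2) F) 1 1 = 0 := by
            apply entry_zero hA'
            intro e
            exact ht1ne1 (eq_one_of_eq_sq e)
          have hdetA := det_ne_zero' A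
          rw [Matrix.det_fin_two, h00, h11] at hdetA
          simp only [zero_mul, mul_zero, zero_sub, neg_ne_zero, mul_ne_zero_iff] at hdetA
          refine ⟨(Units.mk0 _ hdetA.1, Units.mk0 _ hdetA.2), ?_⟩
          apply Subtype.ext
          apply Units.ext
          have hcoe : ((f (Units.mk0 _ hdetA.1, Units.mk0 _ hdetA.2) : ↥(fixSet F 2 1 t)) :
              GL (Fin 2) F).val = !![0, (A : Matrix (Fin 2) (Fin 2) F) 0 1;
                (A : Matrix (Fin 2) (Fin 2) F) 1 0, 0] := rfl
          rw [hcoe]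
          ext i j
          fin_cases i <;> fin_cases j <;> simp [h00, h11]
      rw [← Nat.card_congr (Equiv.ofBijective f hbij), Nat.card_prod,
        Nat.card_eq_fintype_card, Fintype.card_units, hcard, sq]
    · rw [if_neg hA, if_neg hB, add_zero]
      -- some row is forced to be zero
      have hrow : (t 0 ≠ t 0 ^ 2 ∧ t 0 ≠ t 1 ^ 2) ∨ (t 1 ≠ t 0 ^ 2 ∧ t 1 ≠ t 1 ^ 2) := by
        by_cases e00 : t 0 = t 0 ^ 2
        · have ht0 : t 0 = 1 := eq_one_of_eq_sq e00
          have ht1 : t 1 ≠ 1 := fun e => hA ⟨ht0, e⟩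
          right
          constructor
          · intro e
            exact ht1 (by rw [e, ht0, one_pow])
          · intro e
            exact ht1 (eq_one_of_eq_sq e)
        · by_cases e01 : t 0 = t 1 ^ 2
          · right
            constructor
            · intro e10
              apply hB
              have h3 : t 0 ^ 3 = 1 := by
                have h' : t 0 * 1 = t 0 * t 0 ^ 3 := by
                  rw [mul_one]
                  calc t 0 = t 1 ^ 2 := e01
                    _ = (t 0 ^ 2) ^ 2 := by rw [e10]
                    _ = t 0 * t 0 ^ 3 := by group
                exact (mul_left_cancel h').symm
              have hne : t 0 ≠ 1 := fun e => e00 (by rw [e, one_pow])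
              exact ⟨e10, h3, hne⟩
            · intro e11
              have ht1 : t 1 = 1 := eq_one_of_eq_sq e11
              have ht0 : t 0 = 1 := by rw [e01, ht1, one_pow]
              exact e00 (by rw [ht0, one_pow])
          · left
            exact ⟨e00, e01⟩
      have hempty : fixSet F 2 1 t = ∅ := by
        rw [Set.eq_empty_iff_forall_notMem]
        intro A hA'
        have hdetA := det_ne_zero' A
        rcases hrow with ⟨ha, hb⟩ | ⟨ha, hb⟩
        · have e1 : (A : Matrix (Fin 2) (Fin 2) F) 0 0 = 0 := entry_zero hA' ha
          have e2 : (A : Matrix (Fin 2) (Fin 2) F) 0 1 = 0 := entry_zero hA' hb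
          rw [Matrix.det_fin_two, e1, e2] at hdetA
          simp at hdetA
        · have e1 : (A : Matrix (Fin 2) (Fin 2) F) 1 0 = 0 := entry_zero hA' ha
          have e2 : (A : Matrix (Fin 2) (Fin 2) F) 1 1 = 0 := entry_zero hA' hb
          rw [Matrix.det_fin_two, e1, e2] at hdetA
          simp at hdetA
      rw [hempty]
      simp

end aux

/-- For `n = 2` and `σ` the identity permutation, the total number of fixed points is
`(q²−1)(q²−q) + 2·P₃·(q−1)²`. -/
theorem sum_card_fixSet_two_id {F : Type*} [Field F] [Fintype F] [DecidableEq F]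
    (q : ℕ) (hcard : Fintype.card F = q) :
    ∑ t : Fin 2 → Fˣ, Nat.card ↥(fixSet F 2 1 t)
      = (q ^ 2 - 1) * (q ^ 2 - q)
        + 2 * (if 3 ∣ (q - 1) then 1 else 0) * (q - 1) ^ 2 := by
  classical
  have hsum : ∑ t : Fin 2 → Fˣ, Nat.card ↥(fixSet F 2 1 t)
      = ∑ p : Fˣ × Fˣ, ((if p.1 = 1 ∧ p.2 = 1 then (q ^ 2 - 1) * (q ^ 2 - q) else 0)
          + (if p.2 = p.1 ^ 2 ∧ p.1 ^ 3 = 1 ∧ p.1 ≠ 1 then (q - 1) ^ 2 else 0)) := by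
    rw [← Equiv.sum_comp (piFinTwoEquiv (fun _ : Fin 2 => Fˣ)).symm
      (fun t => Nat.card ↥(fixSet F 2 1 t))]
    refine Finset.sum_congr rfl fun p _ => ?_
    rw [card_fixSet q hcard]
    simp [piFinTwoEquiv]
  rw [hsum, Finset.sum_add_distrib]
  have h1 : ∑ p : Fˣ × Fˣ, (if p.1 = 1 ∧ p.2 = 1 then (q ^ 2 - 1) * (q ^ 2 - q) else 0)
      = (q ^ 2 - 1) * (q ^ 2 - q) := by
    rw [Finset.sum_eq_single ((1 : Fˣ), (1 : Fˣ))]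
    · rw [if_pos ⟨rfl, rfl⟩]
    · intro p _ hp
      rw [if_neg (fun h => hp (Prod.ext h.1 h.2))]
    · intro h
      exact absurd (Finset.mem_univ _) h
  have h2 : ∑ p : Fˣ × Fˣ, (if p.2 = p.1 ^ 2 ∧ p.1 ^ 3 = 1 ∧ p.1 ≠ 1 then (q - 1) ^ 2 else 0)
      = (if 3 ∣ (q - 1) then 2 else 0) * (q - 1) ^ 2 := by
    rw [Fintype.sum_prod_type]
    have hinner : ∀ a : Fˣ, ∑ b : Fˣ,
        (if b = a ^ 2 ∧ a ^ 3 = 1 ∧ a ≠ 1 then (q - 1) ^ 2 else 0)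
        = (if a ^ 3 = 1 ∧ a ≠ 1 then (q - 1) ^ 2 else 0) := by
      intro a
      by_cases hPa : a ^ 3 = 1 ∧ a ≠ 1
      · have hterm : ∀ b : Fˣ, (if b = a ^ 2 ∧ a ^ 3 = 1 ∧ a ≠ 1 then (q - 1) ^ 2 else 0)
            = (if b = a ^ 2 then (q - 1) ^ 2 else 0) := fun b =>
          if_congr (and_iff_left hPa) rfl rfl
        rw [Finset.sum_congr rfl fun b _ => hterm b,
          Finset.sum_ite_eq' Finset.univ (a ^ 2) (fun _ => (q - 1) ^ 2),
          if_pos (Finset.mem_univ _), if_pos hPa]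
      · have hterm : ∀ b : Fˣ, (if b = a ^ 2 ∧ a ^ 3 = 1 ∧ a ≠ 1 then (q - 1) ^ 2 else 0)
            = 0 := fun b => by
          rw [if_neg (fun h => hPa h.2)]
        rw [Finset.sum_congr rfl fun b _ => hterm b, Finset.sum_const_zero, if_neg hPa]
    rw [Finset.sum_congr rfl (fun a _ => hinner a)]
    rw [← Finset.sum_filter, Finset.sum_const, smul_eq_mul,
      card_cube_roots q hcard]
  rw [h1, h2]
  split_ifs <;> ring
end

section
/- Let q be a prime power and F_q a finite field with q elements, and let id be the identity permutation of {1,2,3}. Then Σ_{t ∈ (F_q^×)^3} |Fix_3(id,t)| = (q^3−1)(q^3−q)(q^3−q^2) + 6·P_3·(q−1)^3 + 12·P_7·(q−1)^3, where P_3 = 1 if 3 | (q−1) and 0 otherwise, and P_7 = 1 if 7 | (q−1) and 0 otherwise. Here Fix_3(id,t) = {A ∈ GL_3(F_q) : t_i A_{ij} = A_{ij} t_j^2 for all i, j}. -/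
open Matrix

namespace FixAux

section group

variable {G : Type*} [CommGroup G]

lemma eq_one_of_self_eq_sq {a : G} (h : a = a ^ 2) : a = 1 := by
  have h' : a * a = a * 1 := by rw [mul_one, ← sq]; exact h.symm
  exact mul_left_cancel h'

lemma cube_eq_one {a : G} (h : a = (a ^ 2) ^ 2) : a ^ 3 = 1 := by
  have h' : a ^ 3 * a = 1 * a := by
    rw [← pow_succ, one_mul, show (3+1) = 2*2 from rfl, pow_mul]; exact h.symm
  exact mul_right_cancel h'

lemma seven_eq_one {a : G} (h : a = ((a ^ 2) ^ 2) ^ 2) : a ^ 7 = 1 := by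
  have h' : a ^ 7 * a = 1 * a := by
    rw [← pow_succ, one_mul, show (7+1) = 2*2*2 from rfl, pow_mul, pow_mul]; exact h.symm
  exact mul_right_cancel h'

lemma pow_ne_pow {M : Type*} [LeftCancelMonoid M] {a : M} {p m k : ℕ} (ho : orderOf a = p)
    (h : m % p ≠ k % p) : a ^ m ≠ a ^ k := fun hh => h (by rw [← ho]; exact pow_inj_mod.mp hh)

lemma classify {t : Fin 3 → G} (π : Equiv.Perm (Fin 3)) (h : ∀ j, t (π j) = t j ^ 2) :
    t = 1
      ∨ (∃ a : G, orderOf a = 3 ∧ (t = ![a, a ^ 2, 1] ∨ t = ![a, 1, a ^ 2] ∨ t = ![1, a, a ^ 2]))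
      ∨ (∃ a : G, orderOf a = 7 ∧ (t = ![a, a ^ 2, a ^ 4] ∨ t = ![a, a ^ 4, a ^ 2])) := by
  haveI : Fact (Nat.Prime 3) := ⟨by norm_num⟩
  haveI : Fact (Nat.Prime 7) := ⟨by norm_num⟩
  have e : ∀ i : Fin 3, i = 0 ∨ i = 1 ∨ i = 2 := by decide
  have H0 := h 0; have H1 := h 1; have H2 := h 2
  rcases e (π 0) with h0|h0|h0 <;> rcases e (π 1) with h1|h1|h1 <;>
    rcases e (π 2) with h2|h2|h2 <;>
    first
      | exact absurd (π.injective (h0.trans h1.symm)) (by decide)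
      | exact absurd (π.injective (h0.trans h2.symm)) (by decide)
      | exact absurd (π.injective (h1.trans h2.symm)) (by decide)
      | (rw [h0] at H0; rw [h1] at H1; rw [h2] at H2; skip)
  -- remaining 6 goals in order: (0,1,2),(0,2,1),(1,0,2),(1,2,0),(2,0,1),(2,1,0)
  · -- identity
    left
    have g0 := eq_one_of_self_eq_sq H0
    have g1 := eq_one_of_self_eq_sq H1
    have g2 := eq_one_of_self_eq_sq H2
    funext i; rcases e i with rfl|rfl|rfl <;> simp [g0, g1, g2]
  · -- swap12 : H0 : t 0 = t 0 ^2, H1 : t 2 = t 1 ^ 2, H2 : t 1 = t 2 ^ 2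
    have g0 := eq_one_of_self_eq_sq H0
    have hc : t 1 = (t 1 ^ 2) ^ 2 := by rw [← H1]; exact H2
    by_cases he : t 1 = 1
    · left; funext i; rcases e i with rfl|rfl|rfl <;> simp [g0, he, H1]
    · right; left
      exact ⟨t 1, orderOf_eq_prime (cube_eq_one hc) he,
        Or.inr (Or.inr (by funext i; rcases e i with rfl|rfl|rfl <;> simp [g0, H1]))⟩
  · -- swap01 : H0 : t 1 = t 0^2, H1 : t 0 = t 1 ^2, H2 : t 2 = t 2^2
    have g2 := eq_one_of_self_eq_sq H2
    have hc : t 0 = (t 0 ^ 2) ^ 2 := by rw [← H0]; exact H1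
    by_cases he : t 0 = 1
    · left; funext i; rcases e i with rfl|rfl|rfl <;> simp [g2, he, H0]
    · right; left
      exact ⟨t 0, orderOf_eq_prime (cube_eq_one hc) he,
        Or.inl (by funext i; rcases e i with rfl|rfl|rfl <;> simp [g2, H0])⟩
  · -- cycle (1,2,0) : H0 : t 1 = t 0^2, H1 : t 2 = t 1^2, H2 : t 0 = t 2^2
    have hc : t 0 = ((t 0 ^ 2) ^ 2) ^ 2 := by rw [← H0, ← H1]; exact H2
    by_cases he : t 0 = 1
    · left
      have g1 : t 1 = 1 := by rw [H0, he, one_pow]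
      have g2 : t 2 = 1 := by rw [H1, g1, one_pow]
      funext i; rcases e i with rfl|rfl|rfl <;> simp [he, g1, g2]
    · right; right
      refine ⟨t 0, orderOf_eq_prime (seven_eq_one hc) he, Or.inl ?_⟩
      funext i; rcases e i with rfl|rfl|rfl
      · simp
      · simpa using H0
      · simp only [Matrix.cons_val_two, Matrix.tail_cons, Matrix.head_cons]
        rw [H1, H0, show (4:ℕ) = 2*2 from rfl, pow_mul]
  · -- cycle (2,0,1) : H0 : t 2 = t 0^2, H1 : t 0 = t 1^2, H2 : t 1 = t 2^2
    have hc : t 0 = ((t 0 ^ 2) ^ 2) ^ 2 := by rw [← H0, ← H2]; exact H1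
    by_cases he : t 0 = 1
    · left
      have g2 : t 2 = 1 := by rw [H0, he, one_pow]
      have g1 : t 1 = 1 := by rw [H2, g2, one_pow]
      funext i; rcases e i with rfl|rfl|rfl <;> simp [he, g1, g2]
    · right; right
      refine ⟨t 0, orderOf_eq_prime (seven_eq_one hc) he, Or.inr ?_⟩
      funext i; rcases e i with rfl|rfl|rfl
      · simp
      · simp only [Matrix.cons_val_one, Matrix.head_cons, Matrix.cons_val_zero]
        rw [H2, H0, show (4:ℕ) = 2*2 from rfl, pow_mul]
      · simpa using H0
  · -- swap02 : H0 : t 2 = t 0^2, H1 : t 1 = t 1^2, H2 : t 0 = t 2^2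
    have g1 := eq_one_of_self_eq_sq H1
    have hc : t 0 = (t 0 ^ 2) ^ 2 := by rw [← H0]; exact H2
    by_cases he : t 0 = 1
    · left; funext i; rcases e i with rfl|rfl|rfl <;> simp [g1, he, H0]
    · right; left
      exact ⟨t 0, orderOf_eq_prime (cube_eq_one hc) he,
        Or.inr (Or.inl (by funext i; rcases e i with rfl|rfl|rfl <;> simp [g1, H0]))⟩

end group

variable {F : Type*} [Field F] [Fintype F] [DecidableEq F]

lemma mem_fixSet_iff {t : Fin 3 → Fˣ} {A : GL (Fin 3) F} :
    A ∈ fixSet F 3 1 t ↔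
      ∀ i j, t i ≠ t j ^ 2 → (A : Matrix (Fin 3) (Fin 3) F) i j = 0 := by
  constructor
  · intro hA i j hij
    have h := hA i j
    simp only [Equiv.Perm.coe_one, id_eq] at h
    by_contra hne
    apply hij
    refine Units.ext ?_
    push_cast
    rw [mul_comm] at h
    exact mul_left_cancel₀ hne h
  · intro h i j
    simp only [Set.mem_setOf_eq, Equiv.Perm.coe_one, id_eq]
    by_cases hij : t i = t j ^ 2
    · have : (t i : F) = (t j : F) ^ 2 := by rw [hij]; push_cast; ring
      rw [this, mul_comm]
    · rw [h i j hij, mul_zero, zero_mul]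

lemma det_ne_zero (A : GL (Fin 3) F) : ((A : Matrix (Fin 3) (Fin 3) F)).det ≠ 0 := by
  have : IsUnit ((A : Matrix (Fin 3) (Fin 3) F)).det :=
    (Matrix.isUnit_iff_isUnit_det _).mp ⟨A, rfl⟩
  exact this.ne_zero

lemma exists_perm_of_mem {t : Fin 3 → Fˣ} {A : GL (Fin 3) F} (hA : A ∈ fixSet F 3 1 t) :
    ∃ π : Equiv.Perm (Fin 3), ∀ j, t (π j) = t j ^ 2 := by
  have hdet := det_ne_zero A
  rw [Matrix.det_apply] at hdet
  obtain ⟨π, -, hπ⟩ := Finset.exists_ne_zero_of_sum_ne_zero hdet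
  refine ⟨π, fun j => ?_⟩
  by_contra hne
  apply hπ
  rw [show (∏ i, (A : Matrix (Fin 3) (Fin 3) F) (π i) i) = 0 from
    Finset.prod_eq_zero (Finset.mem_univ j) (mem_fixSet_iff.mp hA _ _ hne), smul_zero]

lemma card_fixSet_monomial {t : Fin 3 → Fˣ} (π : Equiv.Perm (Fin 3))
    (h1 : ∀ j, t (π j) = t j ^ 2) (h2 : ∀ i j, t i = t j ^ 2 → i = π j) :
    Nat.card (fixSet F 3 1 t) = (Fintype.card Fˣ) ^ 3 := by
  set M : (Fin 3 → Fˣ) → Matrix (Fin 3) (Fin 3) F :=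
    fun u => Matrix.of (fun i j => if i = π j then (u j : F) else 0) with hMdef
  have hM : ∀ u, M u = (π⁻¹.permMatrix F) * Matrix.diagonal (fun j => (u j : F)) := by
    intro u
    ext i j
    rw [Matrix.mul_diagonal]
    simp only [hMdef, Matrix.of_apply, Equiv.Perm.permMatrix, PEquiv.toMatrix_apply,
      Equiv.toPEquiv_apply, Option.mem_some_iff]
    by_cases h : i = π j
    · rw [if_pos h, if_pos, one_mul]
      exact (Equiv.Perm.inv_eq_iff_eq).mpr h
    · rw [if_neg h, if_neg, zero_mul]
      exact fun hc => h ((Equiv.Perm.inv_eq_iff_eq).mp hc)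
  have hdet : ∀ u, (M u).det ≠ 0 := by
    intro u
    rw [hM, Matrix.det_mul, Matrix.det_permutation, Matrix.det_diagonal]
    refine mul_ne_zero ?_ (Finset.prod_ne_zero_iff.mpr fun j _ => Units.ne_zero _)
    rcases Int.units_eq_one_or (Equiv.Perm.sign π⁻¹) with h | h <;> rw [h] <;> norm_num
  have hU : ∀ u, IsUnit (M u) :=
    fun u => (Matrix.isUnit_iff_isUnit_det _).mpr (isUnit_iff_ne_zero.mpr (hdet u))
  have hGmem : ∀ u, (hU u).unit ∈ fixSet F 3 1 t := by
    intro u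
    rw [mem_fixSet_iff]
    intro i j hij
    show ((hU u).unit : Matrix (Fin 3) (Fin 3) F) i j = 0
    rw [(hU u).unit_spec]
    simp only [hMdef, Matrix.of_apply]
    rw [if_neg]
    intro h
    exact hij (h ▸ h1 j)
  set f : (Fin 3 → Fˣ) → (fixSet F 3 1 t) := fun u => ⟨(hU u).unit, hGmem u⟩ with hfdef
  have hinj : Function.Injective f := by
    intro u v huv
    have h1' : M u = M v := by
      have := congrArg
        (fun x : ↥(fixSet F 3 1 t) => ((x : GL (Fin 3) F) : Matrix (Fin 3) (Fin 3) F)) huv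
      simpa only [hfdef, (hU u).unit_spec, (hU v).unit_spec] using this
    funext j
    have := congrFun (congrFun h1' (π j)) j
    simp only [hMdef, Matrix.of_apply, if_pos rfl] at this
    exact Units.ext this
  have hsurj : Function.Surjective f := by
    rintro ⟨A, hA⟩
    have hz : ∀ i j, i ≠ π j → (A : Matrix (Fin 3) (Fin 3) F) i j = 0 :=
      fun i j hij => mem_fixSet_iff.mp hA i j (fun ht => hij (h2 i j ht))
    have hnz : ∀ j, (A : Matrix (Fin 3) (Fin 3) F) (π j) j ≠ 0 := by
      intro j h0
      apply det_ne_zero A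
      apply Matrix.det_eq_zero_of_column_eq_zero j
      intro i
      by_cases hij : i = π j
      · rw [hij]; exact h0
      · exact hz i j hij
    refine ⟨fun j => Units.mk0 _ (hnz j), ?_⟩
    apply Subtype.ext
    apply Units.ext
    show M _ = (A : Matrix (Fin 3) (Fin 3) F)
    ext i j
    simp only [hMdef, Matrix.of_apply]
    by_cases hij : i = π j
    · rw [if_pos hij, Units.val_mk0, hij]
    · rw [if_neg hij, (hz i j hij)]
  have := Nat.card_congr (Equiv.ofBijective f ⟨hinj, hsurj⟩)
  rw [← this]
  simp [Nat.card_eq_fintype_card, Fintype.card_fun]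

lemma card_A1 {a : Fˣ} (ha : orderOf a = 3) :
    Nat.card (fixSet F 3 1 ![a, a ^ 2, 1]) = (Fintype.card Fˣ) ^ 3 := by
  have key : ∀ m k : ℕ, m % 3 ≠ k % 3 → a ^ m ≠ a ^ k := fun m k h => pow_ne_pow ha h
  have f4 : (a ^ 2) ^ 2 = a := by
    rw [← pow_mul]
    nth_rewrite 2 [← pow_one a]
    exact pow_inj_mod.mpr (by rw [ha])
  have n1 : a ≠ a ^ 2 := by nth_rewrite 1 [← pow_one a]; exact key 1 2 (by norm_num)
  have n2 : a ^ 2 ≠ a := by nth_rewrite 2 [← pow_one a]; exact key 2 1 (by norm_num)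
  have n3 : (1 : Fˣ) ≠ a ^ 2 := by rw [← pow_zero a]; exact key 0 2 (by norm_num)
  have n4 : (1 : Fˣ) ≠ a := by
    nth_rewrite 1 [← pow_one a]; rw [← pow_zero a]; exact key 0 1 (by norm_num)
  have n5 : a ≠ 1 := fun h => n4 h.symm
  have n6 : a ^ 2 ≠ 1 := fun h => n3 h.symm
  have e : ∀ i : Fin 3, i = 0 ∨ i = 1 ∨ i = 2 := by decide
  apply card_fixSet_monomial (Equiv.swap 0 1)
  · intro j
    rcases e j with rfl|rfl|rfl <;>
      simp only [show (Equiv.swap (0:Fin 3) 1) 0 = 1 from by decide,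
        show (Equiv.swap (0:Fin 3) 1) 1 = 0 from by decide,
        show (Equiv.swap (0:Fin 3) 1) 2 = 2 from by decide,
        Matrix.cons_val_zero, Matrix.cons_val_one, Matrix.head_cons,
        Matrix.cons_val_two, Matrix.tail_cons, Fin.isValue, one_pow, f4]
  · intro i j
    rcases e i with rfl|rfl|rfl <;> rcases e j with rfl|rfl|rfl <;>
      simp only [Matrix.cons_val_zero, Matrix.cons_val_one, Matrix.head_cons,
        Matrix.cons_val_two, Matrix.tail_cons, Fin.isValue, one_pow, f4] <;>
      intro hh <;>
      first
        | decide
        | exact absurd hh n1 | exact absurd hh n2 | exact absurd hh n3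
        | exact absurd hh n4 | exact absurd hh n5 | exact absurd hh n6

lemma card_A2 {a : Fˣ} (ha : orderOf a = 3) :
    Nat.card (fixSet F 3 1 ![a, 1, a ^ 2]) = (Fintype.card Fˣ) ^ 3 := by
  have key : ∀ m k : ℕ, m % 3 ≠ k % 3 → a ^ m ≠ a ^ k := fun m k h => pow_ne_pow ha h
  have f4 : (a ^ 2) ^ 2 = a := by
    rw [← pow_mul]
    nth_rewrite 2 [← pow_one a]
    exact pow_inj_mod.mpr (by rw [ha])
  have n1 : a ≠ a ^ 2 := by nth_rewrite 1 [← pow_one a]; exact key 1 2 (by norm_num)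
  have n2 : a ^ 2 ≠ a := by nth_rewrite 2 [← pow_one a]; exact key 2 1 (by norm_num)
  have n3 : (1 : Fˣ) ≠ a ^ 2 := by rw [← pow_zero a]; exact key 0 2 (by norm_num)
  have n4 : (1 : Fˣ) ≠ a := by
    nth_rewrite 1 [← pow_one a]; rw [← pow_zero a]; exact key 0 1 (by norm_num)
  have n5 : a ≠ 1 := fun h => n4 h.symm
  have n6 : a ^ 2 ≠ 1 := fun h => n3 h.symm
  have e : ∀ i : Fin 3, i = 0 ∨ i = 1 ∨ i = 2 := by decide
  apply card_fixSet_monomial (Equiv.swap 0 2)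
  · intro j
    rcases e j with rfl|rfl|rfl <;>
      simp only [show (Equiv.swap (0:Fin 3) 2) 0 = 2 from by decide,
        show (Equiv.swap (0:Fin 3) 2) 1 = 1 from by decide,
        show (Equiv.swap (0:Fin 3) 2) 2 = 0 from by decide,
        Matrix.cons_val_zero, Matrix.cons_val_one, Matrix.head_cons,
        Matrix.cons_val_two, Matrix.tail_cons, Fin.isValue, one_pow, f4]
  · intro i j
    rcases e i with rfl|rfl|rfl <;> rcases e j with rfl|rfl|rfl <;>
      simp only [Matrix.cons_val_zero, Matrix.cons_val_one, Matrix.head_cons,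
        Matrix.cons_val_two, Matrix.tail_cons, Fin.isValue, one_pow, f4] <;>
      intro hh <;>
      first
        | decide
        | exact absurd hh n1 | exact absurd hh n2 | exact absurd hh n3
        | exact absurd hh n4 | exact absurd hh n5 | exact absurd hh n6

lemma card_A3 {a : Fˣ} (ha : orderOf a = 3) :
    Nat.card (fixSet F 3 1 ![1, a, a ^ 2]) = (Fintype.card Fˣ) ^ 3 := by
  have key : ∀ m k : ℕ, m % 3 ≠ k % 3 → a ^ m ≠ a ^ k := fun m k h => pow_ne_pow ha h
  have f4 : (a ^ 2) ^ 2 = a := by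
    rw [← pow_mul]
    nth_rewrite 2 [← pow_one a]
    exact pow_inj_mod.mpr (by rw [ha])
  have n1 : a ≠ a ^ 2 := by nth_rewrite 1 [← pow_one a]; exact key 1 2 (by norm_num)
  have n2 : a ^ 2 ≠ a := by nth_rewrite 2 [← pow_one a]; exact key 2 1 (by norm_num)
  have n3 : (1 : Fˣ) ≠ a ^ 2 := by rw [← pow_zero a]; exact key 0 2 (by norm_num)
  have n4 : (1 : Fˣ) ≠ a := by
    nth_rewrite 1 [← pow_one a]; rw [← pow_zero a]; exact key 0 1 (by norm_num)
  have n5 : a ≠ 1 := fun h => n4 h.symm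
  have n6 : a ^ 2 ≠ 1 := fun h => n3 h.symm
  have e : ∀ i : Fin 3, i = 0 ∨ i = 1 ∨ i = 2 := by decide
  apply card_fixSet_monomial (Equiv.swap 1 2)
  · intro j
    rcases e j with rfl|rfl|rfl <;>
      simp only [show (Equiv.swap (1:Fin 3) 2) 0 = 0 from by decide,
        show (Equiv.swap (1:Fin 3) 2) 1 = 2 from by decide,
        show (Equiv.swap (1:Fin 3) 2) 2 = 1 from by decide,
        Matrix.cons_val_zero, Matrix.cons_val_one, Matrix.head_cons,
        Matrix.cons_val_two, Matrix.tail_cons, Fin.isValue, one_pow, f4]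
  · intro i j
    rcases e i with rfl|rfl|rfl <;> rcases e j with rfl|rfl|rfl <;>
      simp only [Matrix.cons_val_zero, Matrix.cons_val_one, Matrix.head_cons,
        Matrix.cons_val_two, Matrix.tail_cons, Fin.isValue, one_pow, f4] <;>
      intro hh <;>
      first
        | decide
        | exact absurd hh n1 | exact absurd hh n2 | exact absurd hh n3
        | exact absurd hh n4 | exact absurd hh n5 | exact absurd hh n6

lemma card_A4 {a : Fˣ} (ha : orderOf a = 7) :
    Nat.card (fixSet F 3 1 ![a, a ^ 2, a ^ 4]) = (Fintype.card Fˣ) ^ 3 := by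
  have key : ∀ m k : ℕ, m % 7 ≠ k % 7 → a ^ m ≠ a ^ k := fun m k h => pow_ne_pow ha h
  have f44 : (a ^ 2) ^ 2 = a ^ 4 := by rw [← pow_mul]
  have f8 : (a ^ 4) ^ 2 = a := by
    rw [← pow_mul]
    nth_rewrite 2 [← pow_one a]
    exact pow_inj_mod.mpr (by rw [ha])
  have n1 : a ≠ a ^ 2 := by nth_rewrite 1 [← pow_one a]; exact key 1 2 (by norm_num)
  have n2 : a ^ 2 ≠ a := fun h => n1 h.symm
  have n3 : a ≠ a ^ 4 := by nth_rewrite 1 [← pow_one a]; exact key 1 4 (by norm_num)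
  have n4 : a ^ 4 ≠ a := fun h => n3 h.symm
  have n5 : a ^ 2 ≠ a ^ 4 := key 2 4 (by norm_num)
  have n6 : a ^ 4 ≠ a ^ 2 := fun h => n5 h.symm
  have e : ∀ i : Fin 3, i = 0 ∨ i = 1 ∨ i = 2 := by decide
  apply card_fixSet_monomial (finRotate 3)
  · intro j
    rcases e j with rfl|rfl|rfl <;>
      simp only [show (finRotate 3) 0 = 1 from by decide,
        show (finRotate 3) 1 = 2 from by decide,
        show (finRotate 3) 2 = 0 from by decide,
        Matrix.cons_val_zero, Matrix.cons_val_one, Matrix.head_cons,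
        Matrix.cons_val_two, Matrix.tail_cons, Fin.isValue, f44, f8]
  · intro i j
    rcases e i with rfl|rfl|rfl <;> rcases e j with rfl|rfl|rfl <;>
      simp only [Matrix.cons_val_zero, Matrix.cons_val_one, Matrix.head_cons,
        Matrix.cons_val_two, Matrix.tail_cons, Fin.isValue, f44, f8] <;>
      intro hh <;>
      first
        | decide
        | exact absurd hh n1 | exact absurd hh n2 | exact absurd hh n3
        | exact absurd hh n4 | exact absurd hh n5 | exact absurd hh n6

lemma card_A5 {a : Fˣ} (ha : orderOf a = 7) :
    Nat.card (fixSet F 3 1 ![a, a ^ 4, a ^ 2]) = (Fintype.card Fˣ) ^ 3 := by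
  have key : ∀ m k : ℕ, m % 7 ≠ k % 7 → a ^ m ≠ a ^ k := fun m k h => pow_ne_pow ha h
  have f44 : (a ^ 2) ^ 2 = a ^ 4 := by rw [← pow_mul]
  have f8 : (a ^ 4) ^ 2 = a := by
    rw [← pow_mul]
    nth_rewrite 2 [← pow_one a]
    exact pow_inj_mod.mpr (by rw [ha])
  have n1 : a ≠ a ^ 2 := by nth_rewrite 1 [← pow_one a]; exact key 1 2 (by norm_num)
  have n2 : a ^ 2 ≠ a := fun h => n1 h.symm
  have n3 : a ≠ a ^ 4 := by nth_rewrite 1 [← pow_one a]; exact key 1 4 (by norm_num)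
  have n4 : a ^ 4 ≠ a := fun h => n3 h.symm
  have n5 : a ^ 2 ≠ a ^ 4 := key 2 4 (by norm_num)
  have n6 : a ^ 4 ≠ a ^ 2 := fun h => n5 h.symm
  have e : ∀ i : Fin 3, i = 0 ∨ i = 1 ∨ i = 2 := by decide
  apply card_fixSet_monomial (finRotate 3)⁻¹
  · intro j
    rcases e j with rfl|rfl|rfl <;>
      simp only [show (finRotate 3)⁻¹ 0 = 2 from by decide,
        show (finRotate 3)⁻¹ 1 = 0 from by decide,
        show (finRotate 3)⁻¹ 2 = 1 from by decide,
        Matrix.cons_val_zero, Matrix.cons_val_one, Matrix.head_cons,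
        Matrix.cons_val_two, Matrix.tail_cons, Fin.isValue, f44, f8]
  · intro i j
    rcases e i with rfl|rfl|rfl <;> rcases e j with rfl|rfl|rfl <;>
      simp only [Matrix.cons_val_zero, Matrix.cons_val_one, Matrix.head_cons,
        Matrix.cons_val_two, Matrix.tail_cons, Fin.isValue, f44, f8] <;>
      intro hh <;>
      first
        | decide
        | exact absurd hh n1 | exact absurd hh n2 | exact absurd hh n3
        | exact absurd hh n4 | exact absurd hh n5 | exact absurd hh n6

lemma fixSet_one_eq_univ : fixSet F 3 1 (1 : Fin 3 → Fˣ) = Set.univ := by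
  ext A
  simp [fixSet]

lemma card_mu (p : ℕ) [Fact p.Prime] :
    (Finset.univ.filter fun a : Fˣ => orderOf a = p).card
      = if p ∣ Fintype.card Fˣ then p - 1 else 0 := by
  split_ifs with h
  · rw [IsCyclic.card_orderOf_eq_totient h, Nat.totient_prime Fact.out]
  · rw [Finset.card_eq_zero, Finset.filter_eq_empty_iff]
    intro a _
    intro hoa
    exact h (hoa ▸ orderOf_dvd_card)

end FixAux

open FixAux in
/-- For `n = 3` and `σ` the identity permutation, the total number of fixed points is
`(q³−1)(q³−q)(q³−q²) + 6·P₃·(q−1)³ + 12·P₇·(q−1)³`. -/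
theorem sum_card_fixSet_three_id {F : Type*} [Field F] [Fintype F] [DecidableEq F]
    (q : ℕ) (hcard : Fintype.card F = q) :
    ∑ t : Fin 3 → Fˣ, Nat.card ↥(fixSet F 3 1 t)
      = (q ^ 3 - 1) * (q ^ 3 - q) * (q ^ 3 - q ^ 2)
        + 6 * (if 3 ∣ (q - 1) then 1 else 0) * (q - 1) ^ 3
        + 12 * (if 7 ∣ (q - 1) then 1 else 0) * (q - 1) ^ 3 := by
  classical
  haveI : Fact (Nat.Prime 3) := ⟨by norm_num⟩
  haveI : Fact (Nat.Prime 7) := ⟨by norm_num⟩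
  set μ3 : Finset Fˣ := Finset.univ.filter (fun a => orderOf a = 3) with hμ3
  set μ7 : Finset Fˣ := Finset.univ.filter (fun a => orderOf a = 7) with hμ7
  set g1 : Fˣ → (Fin 3 → Fˣ) := fun a => ![a, a ^ 2, 1] with hg1
  set g2 : Fˣ → (Fin 3 → Fˣ) := fun a => ![a, 1, a ^ 2] with hg2
  set g3 : Fˣ → (Fin 3 → Fˣ) := fun a => ![1, a, a ^ 2] with hg3
  set g4 : Fˣ → (Fin 3 → Fˣ) := fun a => ![a, a ^ 2, a ^ 4] with hg4
  set g5 : Fˣ → (Fin 3 → Fˣ) := fun a => ![a, a ^ 4, a ^ 2] with hg5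
  have hmo3 : ∀ {a : Fˣ}, a ∈ μ3 → orderOf a = 3 := fun ha => (Finset.mem_filter.mp ha).2
  have hmo7 : ∀ {a : Fˣ}, a ∈ μ7 → orderOf a = 7 := fun ha => (Finset.mem_filter.mp ha).2
  have hpow1 : ∀ {a : Fˣ} {p m : ℕ}, orderOf a = p → a ^ m = 1 → p ∣ m :=
    fun ho h => ho ▸ orderOf_dvd_of_pow_eq_one h
  have hne1 : ∀ {a : Fˣ} {p : ℕ}, orderOf a = p → 2 ≤ p → a ≠ 1 := by
    intro a p ho hp h
    rw [h, orderOf_one] at ho; omega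
  set B : Finset (Fin 3 → Fˣ) :=
    (((({(1 : Fin 3 → Fˣ)} ∪ μ3.image g1) ∪ μ3.image g2) ∪ μ3.image g3) ∪ μ7.image g4)
      ∪ μ7.image g5 with hB
  -- membership of the classified tuples
  have m1 : (1 : Fin 3 → Fˣ) ∈ B :=
    Finset.mem_union_left _ (Finset.mem_union_left _ (Finset.mem_union_left _
      (Finset.mem_union_left _ (Finset.mem_union_left _ (Finset.mem_singleton_self _)))))
  have mem3 : ∀ {a : Fˣ}, orderOf a = 3 → a ∈ μ3 := fun h => Finset.mem_filter.mpr ⟨Finset.mem_univ _, h⟩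
  have mem7 : ∀ {a : Fˣ}, orderOf a = 7 → a ∈ μ7 := fun h => Finset.mem_filter.mpr ⟨Finset.mem_univ _, h⟩
  have mA1 : ∀ {a : Fˣ}, orderOf a = 3 → g1 a ∈ B := fun h =>
    Finset.mem_union_left _ (Finset.mem_union_left _ (Finset.mem_union_left _
      (Finset.mem_union_left _ (Finset.mem_union_right _ (Finset.mem_image_of_mem _ (mem3 h))))))
  have mA2 : ∀ {a : Fˣ}, orderOf a = 3 → g2 a ∈ B := fun h =>
    Finset.mem_union_left _ (Finset.mem_union_left _ (Finset.mem_union_left _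
      (Finset.mem_union_right _ (Finset.mem_image_of_mem _ (mem3 h)))))
  have mA3 : ∀ {a : Fˣ}, orderOf a = 3 → g3 a ∈ B := fun h =>
    Finset.mem_union_left _ (Finset.mem_union_left _
      (Finset.mem_union_right _ (Finset.mem_image_of_mem _ (mem3 h))))
  have mA4 : ∀ {a : Fˣ}, orderOf a = 7 → g4 a ∈ B := fun h =>
    Finset.mem_union_left _ (Finset.mem_union_right _ (Finset.mem_image_of_mem _ (mem7 h)))
  have mA5 : ∀ {a : Fˣ}, orderOf a = 7 → g5 a ∈ B := fun h =>
    Finset.mem_union_right _ (Finset.mem_image_of_mem _ (mem7 h))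
  have hzero : ∀ t, t ∉ B → Nat.card ↥(fixSet F 3 1 t) = 0 := by
    intro t hBt
    have hempty : fixSet F 3 1 t = ∅ := by
      rw [Set.eq_empty_iff_forall_notMem]
      intro A hA
      apply hBt
      obtain ⟨π, hπ⟩ := exists_perm_of_mem hA
      rcases classify π hπ with rfl | ⟨a, ha, rfl | rfl | rfl⟩ | ⟨a, ha, rfl | rfl⟩
      · exact m1
      · exact mA1 ha
      · exact mA2 ha
      · exact mA3 ha
      · exact mA4 ha
      · exact mA5 ha
    rw [hempty]
    simp
  -- disjointness
  have himg : ∀ {s u : Finset Fˣ} {f g : Fˣ → (Fin 3 → Fˣ)},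
      (∀ a ∈ s, ∀ b ∈ u, f a ≠ g b) → Disjoint (s.image f) (u.image g) := by
    intro s u f g h
    rw [Finset.disjoint_left]
    rintro x hx hy
    obtain ⟨a, ha, rfl⟩ := Finset.mem_image.mp hx
    obtain ⟨b, hb, hba⟩ := Finset.mem_image.mp hy
    exact h a ha b hb hba.symm
  have hone : ∀ {u : Finset Fˣ} {g : Fˣ → (Fin 3 → Fˣ)},
      (∀ b ∈ u, g b ≠ 1) → Disjoint ({(1 : Fin 3 → Fˣ)}) (u.image g) := by
    intro u g h
    rw [Finset.disjoint_left]
    rintro x hx hy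
    rw [Finset.mem_singleton] at hx
    subst hx
    obtain ⟨b, hb, hb1⟩ := Finset.mem_image.mp hy
    exact h b hb hb1
  have d01 : Disjoint ({(1 : Fin 3 → Fˣ)}) (μ3.image g1) := by
    refine hone fun b hb h => ?_
    have := congrFun h 0
    simp only [hg1, Matrix.cons_val_zero, Pi.one_apply] at this
    exact hne1 (hmo3 hb) (by norm_num) this
  have d02 : Disjoint ({(1 : Fin 3 → Fˣ)}) (μ3.image g2) := by
    refine hone fun b hb h => ?_
    have := congrFun h 0
    simp only [hg2, Matrix.cons_val_zero, Pi.one_apply] at this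
    exact hne1 (hmo3 hb) (by norm_num) this
  have d03 : Disjoint ({(1 : Fin 3 → Fˣ)}) (μ3.image g3) := by
    refine hone fun b hb h => ?_
    have := congrFun h 1
    simp only [hg3, Matrix.cons_val_one, Matrix.head_cons, Pi.one_apply] at this
    exact hne1 (hmo3 hb) (by norm_num) this
  have d04 : Disjoint ({(1 : Fin 3 → Fˣ)}) (μ7.image g4) := by
    refine hone fun b hb h => ?_
    have := congrFun h 0
    simp only [hg4, Matrix.cons_val_zero, Pi.one_apply] at this
    exact hne1 (hmo7 hb) (by norm_num) this
  have d05 : Disjoint ({(1 : Fin 3 → Fˣ)}) (μ7.image g5) := by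
    refine hone fun b hb h => ?_
    have := congrFun h 0
    simp only [hg5, Matrix.cons_val_zero, Pi.one_apply] at this
    exact hne1 (hmo7 hb) (by norm_num) this
  have d12 : Disjoint (μ3.image g1) (μ3.image g2) := by
    refine himg fun a ha b hb h => ?_
    have := congrFun h 1
    simp only [hg1, hg2, Matrix.cons_val_one, Matrix.head_cons] at this
    exact absurd (hpow1 (hmo3 ha) this) (by norm_num)
  have d13 : Disjoint (μ3.image g1) (μ3.image g3) := by
    refine himg fun a ha b hb h => ?_
    have := congrFun h 0
    simp only [hg1, hg3, Matrix.cons_val_zero] at this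
    exact hne1 (hmo3 ha) (by norm_num) this
  have d23 : Disjoint (μ3.image g2) (μ3.image g3) := by
    refine himg fun a ha b hb h => ?_
    have := congrFun h 0
    simp only [hg2, hg3, Matrix.cons_val_zero] at this
    exact hne1 (hmo3 ha) (by norm_num) this
  have d14 : Disjoint (μ3.image g1) (μ7.image g4) := by
    refine himg fun a ha b hb h => ?_
    have := congrFun h 2
    simp only [hg1, hg4, Matrix.cons_val_two, Matrix.tail_cons, Matrix.head_cons] at this
    exact absurd (hpow1 (hmo7 hb) this.symm) (by norm_num)
  have d15 : Disjoint (μ3.image g1) (μ7.image g5) := by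
    refine himg fun a ha b hb h => ?_
    have := congrFun h 2
    simp only [hg1, hg5, Matrix.cons_val_two, Matrix.tail_cons, Matrix.head_cons] at this
    exact absurd (hpow1 (hmo7 hb) this.symm) (by norm_num)
  have d24 : Disjoint (μ3.image g2) (μ7.image g4) := by
    refine himg fun a ha b hb h => ?_
    have := congrFun h 1
    simp only [hg2, hg4, Matrix.cons_val_one, Matrix.head_cons] at this
    exact absurd (hpow1 (hmo7 hb) this.symm) (by norm_num)
  have d25 : Disjoint (μ3.image g2) (μ7.image g5) := by
    refine himg fun a ha b hb h => ?_
    have := congrFun h 1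
    simp only [hg2, hg5, Matrix.cons_val_one, Matrix.head_cons] at this
    exact absurd (hpow1 (hmo7 hb) this.symm) (by norm_num)
  have d34 : Disjoint (μ3.image g3) (μ7.image g4) := by
    refine himg fun a ha b hb h => ?_
    have := congrFun h 0
    simp only [hg3, hg4, Matrix.cons_val_zero] at this
    exact hne1 (hmo7 hb) (by norm_num) this.symm
  have d35 : Disjoint (μ3.image g3) (μ7.image g5) := by
    refine himg fun a ha b hb h => ?_
    have := congrFun h 0
    simp only [hg3, hg5, Matrix.cons_val_zero] at this
    exact hne1 (hmo7 hb) (by norm_num) this.symm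
  have d45 : Disjoint (μ7.image g4) (μ7.image g5) := by
    refine himg fun a ha b hb h => ?_
    have h0 := congrFun h 0
    have h1' := congrFun h 1
    simp only [hg4, hg5, Matrix.cons_val_zero, Matrix.cons_val_one, Matrix.head_cons] at h0 h1'
    subst h0
    exact pow_ne_pow (hmo7 ha) (by norm_num) h1'
  -- cumulative disjointness for sum_union
  have D1 : Disjoint ({(1 : Fin 3 → Fˣ)}) (μ3.image g1) := d01
  have D2 : Disjoint (({(1 : Fin 3 → Fˣ)} ∪ μ3.image g1)) (μ3.image g2) :=
    Finset.disjoint_union_left.mpr ⟨d02, d12⟩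
  have D3 : Disjoint ((({(1 : Fin 3 → Fˣ)} ∪ μ3.image g1) ∪ μ3.image g2)) (μ3.image g3) :=
    Finset.disjoint_union_left.mpr ⟨Finset.disjoint_union_left.mpr ⟨d03, d13⟩, d23⟩
  have D4 : Disjoint (((({(1 : Fin 3 → Fˣ)} ∪ μ3.image g1) ∪ μ3.image g2) ∪ μ3.image g3))
      (μ7.image g4) :=
    Finset.disjoint_union_left.mpr ⟨Finset.disjoint_union_left.mpr
      ⟨Finset.disjoint_union_left.mpr ⟨d04, d14⟩, d24⟩, d34⟩
  have D5 : Disjoint ((((({(1 : Fin 3 → Fˣ)} ∪ μ3.image g1) ∪ μ3.image g2) ∪ μ3.image g3)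
      ∪ μ7.image g4)) (μ7.image g5) :=
    Finset.disjoint_union_left.mpr ⟨Finset.disjoint_union_left.mpr
      ⟨Finset.disjoint_union_left.mpr ⟨Finset.disjoint_union_left.mpr ⟨d05, d15⟩, d25⟩, d35⟩, d45⟩
  -- restrict the sum to B
  rw [← Finset.sum_subset (Finset.subset_univ B) (fun t _ ht => hzero t ht)]
  rw [hB, Finset.sum_union D5, Finset.sum_union D4, Finset.sum_union D3, Finset.sum_union D2,
    Finset.sum_union D1, Finset.sum_singleton]
  -- injectivity of the pattern maps
  have hinj : ∀ {g : Fˣ → (Fin 3 → Fˣ)} {s : Finset Fˣ} {k : Fin 3},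
      (∀ a, g a k = a) → (∀ a ∈ s, ∀ b ∈ s, g a = g b → a = b) := by
    intro g s k hk a _ b _ h
    have := congrFun h k
    rwa [hk a, hk b] at this
  have s1 : ∑ t ∈ μ3.image g1, Nat.card ↥(fixSet F 3 1 t) = μ3.card * (Fintype.card Fˣ) ^ 3 := by
    rw [Finset.sum_image (hinj (k := 0) (fun a => by simp [hg1]))]
    rw [Finset.sum_congr rfl (fun a ha => card_A1 (hmo3 ha)), Finset.sum_const, smul_eq_mul]
  have s2 : ∑ t ∈ μ3.image g2, Nat.card ↥(fixSet F 3 1 t) = μ3.card * (Fintype.card Fˣ) ^ 3 := by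
    rw [Finset.sum_image (hinj (k := 0) (fun a => by simp [hg2]))]
    rw [Finset.sum_congr rfl (fun a ha => card_A2 (hmo3 ha)), Finset.sum_const, smul_eq_mul]
  have s3 : ∑ t ∈ μ3.image g3, Nat.card ↥(fixSet F 3 1 t) = μ3.card * (Fintype.card Fˣ) ^ 3 := by
    rw [Finset.sum_image (hinj (k := 1) (fun a => by simp [hg3]))]
    rw [Finset.sum_congr rfl (fun a ha => card_A3 (hmo3 ha)), Finset.sum_const, smul_eq_mul]
  have s4 : ∑ t ∈ μ7.image g4, Nat.card ↥(fixSet F 3 1 t) = μ7.card * (Fintype.card Fˣ) ^ 3 := by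
    rw [Finset.sum_image (hinj (k := 0) (fun a => by simp [hg4]))]
    rw [Finset.sum_congr rfl (fun a ha => card_A4 (hmo7 ha)), Finset.sum_const, smul_eq_mul]
  have s5 : ∑ t ∈ μ7.image g5, Nat.card ↥(fixSet F 3 1 t) = μ7.card * (Fintype.card Fˣ) ^ 3 := by
    rw [Finset.sum_image (hinj (k := 0) (fun a => by simp [hg5]))]
    rw [Finset.sum_congr rfl (fun a ha => card_A5 (hmo7 ha)), Finset.sum_const, smul_eq_mul]
  have sGL : Nat.card ↥(fixSet F 3 1 (1 : Fin 3 → Fˣ))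
      = (q ^ 3 - 1) * (q ^ 3 - q) * (q ^ 3 - q ^ 2) := by
    rw [fixSet_one_eq_univ]
    rw [Nat.card_congr (Equiv.Set.univ _), Matrix.card_GL_field, hcard, Fin.prod_univ_three]
    norm_num
  have hcu : Fintype.card Fˣ = q - 1 := by rw [Fintype.card_units, hcard]
  have hm3 : μ3.card = if 3 ∣ (q - 1) then 2 else 0 := by
    rw [hμ3, card_mu, hcu]
  have hm7 : μ7.card = if 7 ∣ (q - 1) then 6 else 0 := by
    rw [hμ7, card_mu, hcu]
  rw [s1, s2, s3, s4, s5, sGL, hcu, hm3, hm7]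
  split_ifs <;> ring
end

section
/- Let q = p^m be a prime power and F_q a finite field with q elements, and let σ be any transposition in the symmetric group on {1,2,3}. Then Σ_{t ∈ (F_q^×)^3} |Fix_3(σ,t)| equals q^3(q−1)^3 if p = 2, and q(q−1)^4(q+1) if p ≠ 2. -/
open Matrix

namespace MatPart
variable {F : Type*} [Field F] [DecidableEq F]

def pmat (T : F) (v : F × F × F × F × F) : Matrix (Fin 3) (Fin 3) F :=
  !![v.1, v.2.1, v.2.2.1;
     T^3 * v.2.1, v.1 * T⁻¹, T * v.2.2.1;
     v.2.2.2.1, v.2.2.2.1 * (T^2)⁻¹, v.2.2.2.2]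

lemma det_pmat (T : F) (hT : T ≠ 0) (v : F × F × F × F × F) :
    (pmat T v).det = T⁻¹ * ((v.1 - T^2*v.2.1) *
      (v.2.2.2.2*(v.1 + T^2*v.2.1) - 2*v.2.2.1*v.2.2.2.1)) := by
  obtain ⟨a,b,f,d,e⟩ := v
  show (!![a, b, f; T^3 * b, a * T⁻¹, T * f; d, d * (T^2)⁻¹, e]).det = _
  rw [det_fin_three]
  norm_num
  simp only [Matrix.cons_val]
  field_simp
  ring

lemma swap01_0 : (Equiv.swap (0:Fin 3) 1) 0 = 1 := Equiv.swap_apply_left _ _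
lemma swap01_1 : (Equiv.swap (0:Fin 3) 1) 1 = 0 := Equiv.swap_apply_right _ _
lemma swap01_2 : (Equiv.swap (0:Fin 3) 1) 2 = 2 :=
  Equiv.swap_apply_of_ne_of_ne (by decide) (by decide)

lemma entries_eq (t : Fin 3 → Fˣ) (ht : (t 0 : F) * (t 1 : F) = 1) (h2 : (t 2 : F) = 1)
    (A : GL (Fin 3) F) (hA : A ∈ fixSet F 3 (Equiv.swap 0 1) t) :
    (A : Matrix (Fin 3) (Fin 3) F)
      = pmat ((t 0 : F)) (((A : Matrix (Fin 3) (Fin 3) F) 0 0),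
          ((A : Matrix (Fin 3) (Fin 3) F) 0 1),
          ((A : Matrix (Fin 3) (Fin 3) F) 0 2), ((A : Matrix (Fin 3) (Fin 3) F) 2 0),
          ((A : Matrix (Fin 3) (Fin 3) F) 2 2)) := by
  have hT : (t 0 : F) ≠ 0 := Units.ne_zero _
  have ht1 : (t 1 : F) = (t 0 : F)⁻¹ := by field_simp; linear_combination ht
  have h00 := hA 0 0
  have h01 := hA 0 1
  have h02 := hA 0 2
  have h20 := hA 2 0
  simp only [swap01_0, swap01_1, swap01_2, ht1, h2, one_pow, mul_one, one_mul] at h00 h01 h02 h20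
  ext i j
  fin_cases i <;> fin_cases j
  · simp [pmat]
  · simp [pmat]
  · simp [pmat]
  · -- (1,0)
    simp [pmat]
    field_simp at h01
    linear_combination -h01
  · -- (1,1)
    simp [pmat]
    rw [← div_eq_mul_inv, eq_div_iff hT]
    apply mul_left_cancel₀ hT
    linear_combination -h00
  · -- (1,2)
    simp [pmat]
    linear_combination -h02
  · simp [pmat]
  · -- (2,1)
    simp [pmat]
    rw [← div_eq_mul_inv, eq_div_iff (pow_ne_zero 2 hT)]
    linear_combination -h20
  · simp [pmat]

set_option linter.unusedSectionVars false in
lemma pmat_rel (t : Fin 3 → Fˣ) (ht : (t 0 : F) * (t 1 : F) = 1) (h2 : (t 2 : F) = 1)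
    (v : F × F × F × F × F) (i j : Fin 3) :
    (t i : F) * pmat ((t 0 : F)) v i j
      = pmat ((t 0 : F)) v (Equiv.swap 0 1 i) (Equiv.swap 0 1 j) * (t j : F) ^ 2 := by
  obtain ⟨a, b, f, d, e⟩ := v
  have hT : (t 0 : F) ≠ 0 := Units.ne_zero _
  have ht1 : (t 1 : F) = (t 0 : F)⁻¹ := by field_simp; linear_combination ht
  fin_cases i <;> fin_cases j <;>
    simp [pmat, swap01_0, swap01_1, swap01_2, ht1, h2]
  all_goals try tauto
  all_goals field_simp
  all_goals try ring
  all_goals tauto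

def Pgood (T : F) (v : F × F × F × F × F) : Prop :=
  (v.1 - T^2*v.2.1) * (v.2.2.2.2*(v.1 + T^2*v.2.1) - 2*v.2.2.1*v.2.2.2.1) ≠ 0

set_option linter.unusedSectionVars false in
lemma det_ne_of (A : GL (Fin 3) F) : ((A : Matrix (Fin 3) (Fin 3) F)).det ≠ 0 := by
  have h : IsUnit (A : Matrix (Fin 3) (Fin 3) F) := ⟨A, rfl⟩
  exact ((Matrix.isUnit_iff_isUnit_det _).mp h).ne_zero

noncomputable def mkGL (t : Fin 3 → Fˣ) (v : F × F × F × F × F)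
    (hv : Pgood ((t 0 : F)) v) : GL (Fin 3) F :=
  ((Matrix.isUnit_iff_isUnit_det (pmat ((t 0 : F)) v)).mpr (isUnit_iff_ne_zero.mpr (by
    rw [det_pmat _ (Units.ne_zero (t 0)) v]
    exact mul_ne_zero (inv_ne_zero (Units.ne_zero (t 0))) hv))).unit

@[simp] lemma coe_mkGL (t : Fin 3 → Fˣ) (v : F × F × F × F × F) (hv : Pgood ((t 0 : F)) v) :
    (mkGL t v hv : Matrix (Fin 3) (Fin 3) F) = pmat ((t 0 : F)) v :=
  IsUnit.unit_spec _

lemma mkGL_mem (t : Fin 3 → Fˣ) (ht : (t 0 : F) * (t 1 : F) = 1) (h2 : (t 2 : F) = 1)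
    (v : F × F × F × F × F) (hv : Pgood ((t 0 : F)) v) :
    mkGL t v hv ∈ fixSet F 3 (Equiv.swap 0 1) t := by
  intro i j
  rw [coe_mkGL]
  exact pmat_rel t ht h2 v i j

noncomputable def fixEquivGood (t : Fin 3 → Fˣ) (ht : (t 0 : F) * (t 1 : F) = 1)
    (h2 : (t 2 : F) = 1) :
    (fixSet F 3 (Equiv.swap 0 1) t) ≃ {v : F × F × F × F × F // Pgood ((t 0 : F)) v} where
  toFun A := ⟨((A.1 : Matrix (Fin 3) (Fin 3) F) 0 0, (A.1 : Matrix (Fin 3) (Fin 3) F) 0 1,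
      (A.1 : Matrix (Fin 3) (Fin 3) F) 0 2, (A.1 : Matrix (Fin 3) (Fin 3) F) 2 0,
      (A.1 : Matrix (Fin 3) (Fin 3) F) 2 2), by
    have hd := det_ne_of A.1
    rw [entries_eq t ht h2 A.1 A.2, det_pmat _ (Units.ne_zero (t 0)) _] at hd
    intro h
    exact hd (by rw [h, mul_zero])⟩
  invFun v := ⟨mkGL t v.1 v.2, mkGL_mem t ht h2 v.1 v.2⟩
  left_inv A := by
    apply Subtype.ext; apply Units.ext
    rw [coe_mkGL]
    exact (entries_eq t ht h2 A.1 A.2).symm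
  right_inv v := by
    apply Subtype.ext
    obtain ⟨⟨a,b,f,d,e⟩, hv⟩ := v
    simp [pmat]

set_option linter.unusedSectionVars false in
lemma fix_empty_of_s_ne (t : Fin 3 → Fˣ) (hs : (t 0 : F) * (t 1 : F) ≠ 1) :
    fixSet F 3 (Equiv.swap 0 1) t = ∅ := by
  ext A
  simp only [Set.mem_empty_iff_false, iff_false]
  intro hA
  have h00 := hA 0 0
  have h01 := hA 0 1
  have h10 := hA 1 0
  have h11 := hA 1 1
  simp only [swap01_0, swap01_1, swap01_2] at h00 h01 h10 h11
  have ht0 : (t 0 : F) ≠ 0 := Units.ne_zero _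
  have ht1 : (t 1 : F) ≠ 0 := Units.ne_zero _
  have hs' : (t 0 : F) * (t 1 : F) * (1 - (t 0 : F) * (t 1 : F)) ≠ 0 :=
    mul_ne_zero (mul_ne_zero ht0 ht1) (sub_ne_zero.mpr (Ne.symm hs))
  have e00 : (A : Matrix (Fin 3) (Fin 3) F) 0 0 = 0 := by
    have key : (A : Matrix (Fin 3) (Fin 3) F) 0 0
        * ((t 0 : F) * (t 1 : F) * (1 - (t 0 : F) * (t 1 : F))) = 0 := by
      linear_combination (t 1 : F) * h00 + (t 0 : F)^2 * h11
    exact (mul_eq_zero.mp key).resolve_right hs'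
  have e01 : (A : Matrix (Fin 3) (Fin 3) F) 0 1 = 0 := by
    have key : (A : Matrix (Fin 3) (Fin 3) F) 0 1
        * ((t 0 : F) * (t 1 : F) * (1 - (t 0 : F) * (t 1 : F))) = 0 := by
      linear_combination (t 1 : F) * h01 + (t 1 : F)^2 * h10
    exact (mul_eq_zero.mp key).resolve_right hs'
  have e10 : (A : Matrix (Fin 3) (Fin 3) F) 1 0 = 0 := by
    have key : (A : Matrix (Fin 3) (Fin 3) F) 1 0
        * ((t 0 : F) * (t 1 : F) * (1 - (t 0 : F) * (t 1 : F))) = 0 := by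
      linear_combination (t 0 : F) * h10 + (t 0 : F)^2 * h01
    exact (mul_eq_zero.mp key).resolve_right hs'
  have e11 : (A : Matrix (Fin 3) (Fin 3) F) 1 1 = 0 := by
    have key : (A : Matrix (Fin 3) (Fin 3) F) 1 1
        * ((t 0 : F) * (t 1 : F) * (1 - (t 0 : F) * (t 1 : F))) = 0 := by
      linear_combination (t 0 : F) * h11 + (t 1 : F)^2 * h00
    exact (mul_eq_zero.mp key).resolve_right hs'
  exact det_ne_of A (by rw [det_fin_three, e00, e01, e10, e11]; ring)

set_option linter.unusedSectionVars false in
lemma fix_empty_of_t2_ne (t : Fin 3 → Fˣ) (ht : (t 0 : F) * (t 1 : F) = 1)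
    (h2 : (t 2 : F) ≠ 1) :
    fixSet F 3 (Equiv.swap 0 1) t = ∅ := by
  ext A
  simp only [Set.mem_empty_iff_false, iff_false]
  intro hA
  have ht0 : (t 0 : F) ≠ 0 := Units.ne_zero _
  have ht2 : (t 2 : F) ≠ 0 := Units.ne_zero _
  have ht1 : (t 1 : F) = (t 0 : F)⁻¹ := by field_simp; linear_combination ht
  have h00 := hA 0 0
  have h01 := hA 0 1
  have h02 := hA 0 2
  have h20 := hA 2 0
  have h21 := hA 2 1
  have h22 := hA 2 2
  simp only [swap01_0, swap01_1, swap01_2] at h00 h01 h02 h20 h21 h22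
  have e22 : (A : Matrix (Fin 3) (Fin 3) F) 2 2 = 0 := by
    have key : (A : Matrix (Fin 3) (Fin 3) F) 2 2 * ((t 2 : F) * (1 - (t 2 : F))) = 0 := by
      linear_combination h22
    exact (mul_eq_zero.mp key).resolve_right
      (mul_ne_zero ht2 (sub_ne_zero.mpr (Ne.symm h2)))
  by_cases hsq : (t 2 : F)^2 = 1
  · -- t 2 = -1
    have hm : (t 2 : F) = -1 := by
      have hz : ((t 2 : F) - 1) * ((t 2 : F) + 1) = 0 := by linear_combination hsq
      rcases mul_eq_zero.mp hz with h | h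
      · exact absurd (sub_eq_zero.mp h) h2
      · exact eq_neg_of_add_eq_zero_left h
    have e11 : (A : Matrix (Fin 3) (Fin 3) F) 1 1
        = (A : Matrix (Fin 3) (Fin 3) F) 0 0 * (t 0 : F)⁻¹ := by
      rw [← div_eq_mul_inv, eq_div_iff ht0]
      apply mul_left_cancel₀ ht0
      linear_combination -h00
    have e10 : (A : Matrix (Fin 3) (Fin 3) F) 1 0
        = (t 0 : F)^3 * (A : Matrix (Fin 3) (Fin 3) F) 0 1 := by
      rw [ht1] at h01
      field_simp at h01
      linear_combination -h01
    have e12 : (A : Matrix (Fin 3) (Fin 3) F) 1 2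
        = (t 0 : F) * (A : Matrix (Fin 3) (Fin 3) F) 0 2 := by
      rw [hsq, mul_one] at h02
      exact h02.symm
    have e21 : (A : Matrix (Fin 3) (Fin 3) F) 2 1
        = (-((A : Matrix (Fin 3) (Fin 3) F) 2 0)) * (((t 0 : F))^2)⁻¹ := by
      rw [hm] at h20
      rw [← div_eq_mul_inv, eq_div_iff (pow_ne_zero 2 ht0)]
      linear_combination -h20
    apply det_ne_of A
    rw [det_fin_three, e22, e10, e11, e12, e21]
    field_simp
    ring
  · -- row 2 vanishes
    have hfac : (t 2 : F)^2 - ((t 0 : F) * (t 1 : F))^2 ≠ 0 := by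
      rw [ht, one_pow]
      exact sub_ne_zero.mpr hsq
    have e20 : (A : Matrix (Fin 3) (Fin 3) F) 2 0 = 0 := by
      have key : (A : Matrix (Fin 3) (Fin 3) F) 2 0
          * ((t 2 : F)^2 - ((t 0 : F) * (t 1 : F))^2) = 0 := by
        linear_combination (t 2 : F) * h20 + (t 0 : F)^2 * h21
      exact (mul_eq_zero.mp key).resolve_right hfac
    have e21 : (A : Matrix (Fin 3) (Fin 3) F) 2 1 = 0 := by
      have key : (A : Matrix (Fin 3) (Fin 3) F) 2 1
          * ((t 2 : F)^2 - ((t 0 : F) * (t 1 : F))^2) = 0 := by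
        linear_combination (t 2 : F) * h21 + (t 1 : F)^2 * h20
      exact (mul_eq_zero.mp key).resolve_right hfac
    exact det_ne_of A (by rw [det_fin_three, e20, e21, e22]; ring)

section CardGood
variable [Fintype F]

lemma card_ne_zero' : Fintype.card {u : F // u ≠ 0} = Fintype.card F - 1 := by
  rw [← Fintype.card_units (α := F)]
  exact (Fintype.card_congr unitsEquivNeZero).symm

lemma card_mul_eq (k : F) (hk : k ≠ 0) :
    Fintype.card {ve : F × F // ve.1 * ve.2 = k} = Fintype.card F - 1 := by
  rw [← card_ne_zero' (F := F)]
  apply Fintype.card_congr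
  refine ⟨fun z => ⟨z.1.1, fun h => hk (by rw [← z.2, h, zero_mul])⟩,
    fun u => ⟨(u.1, u.1⁻¹ * k), by rw [← mul_assoc, mul_inv_cancel₀ u.2, one_mul]⟩, ?_, ?_⟩
  · rintro ⟨⟨v, e⟩, h⟩
    have hv : v ≠ 0 := fun h0 => hk (by rw [← h, h0, zero_mul])
    have he : v⁻¹ * k = e := by
      rw [← h, ← mul_assoc, inv_mul_cancel₀ hv, one_mul]
    exact Subtype.ext (Prod.ext rfl he)
  · rintro ⟨u, hu⟩; rfl

lemma card_mul_ne (k : F) :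
    Fintype.card {ve : F × F // ve.1 * ve.2 ≠ k}
      = if k = 0 then (Fintype.card F - 1) ^ 2
        else Fintype.card F ^ 2 - (Fintype.card F - 1) := by
  split_ifs with h
  · subst h
    have e : Fintype.card {ve : F × F // ve.1 * ve.2 ≠ 0}
        = Fintype.card ({v : F // v ≠ 0} × {e : F // e ≠ 0}) := by
      apply Fintype.card_congr
      exact (Equiv.subtypeEquivRight (fun ve => mul_ne_zero_iff)).trans
        (Equiv.subtypeProdEquivProd (p := fun v : F => v ≠ 0) (q := fun e : F => e ≠ 0))
    rw [e, Fintype.card_prod, card_ne_zero', sq]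
  · rw [Fintype.card_subtype_compl, card_mul_eq k h, Fintype.card_prod, sq]

lemma card_quad (τ : F) (hτ : τ ≠ 0) :
    Fintype.card {z : (F × F) × F × F // z.2.1 * z.2.2 ≠ τ * z.1.1 * z.1.2}
      = (Fintype.card F ^ 2 - (Fintype.card F - 1) ^ 2) * (Fintype.card F - 1) ^ 2
        + (Fintype.card F - 1) ^ 2 * (Fintype.card F ^ 2 - (Fintype.card F - 1)) := by
  have e : {z : (F × F) × F × F // z.2.1 * z.2.2 ≠ τ * z.1.1 * z.1.2}
      ≃ Σ cd : F × F, {ve : F × F // ve.1 * ve.2 ≠ τ * cd.1 * cd.2} :=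
    ⟨fun z => ⟨z.1.1, ⟨z.1.2, z.2⟩⟩, fun s => ⟨(s.1, s.2.1), s.2.2⟩,
     fun z => rfl, fun s => rfl⟩
  rw [Fintype.card_congr e, Fintype.card_sigma]
  have hval : ∀ cd : F × F, Fintype.card {ve : F × F // ve.1 * ve.2 ≠ τ * cd.1 * cd.2}
      = if cd.1 * cd.2 = 0 then (Fintype.card F - 1) ^ 2
        else Fintype.card F ^ 2 - (Fintype.card F - 1) := by
    intro cd
    rw [card_mul_ne (τ * cd.1 * cd.2)]
    apply if_congr _ rfl rfl
    rw [mul_assoc, mul_eq_zero]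
    simp [hτ]
  rw [Finset.sum_congr rfl (fun cd _ => hval cd), Finset.sum_ite,
    Finset.sum_const, Finset.sum_const, smul_eq_mul, smul_eq_mul]
  have c1 : Fintype.card {cd : F × F // cd.1 * cd.2 ≠ 0} = (Fintype.card F - 1) ^ 2 := by
    rw [card_mul_ne (0 : F), if_pos rfl]
  have c2 : Fintype.card {cd : F × F // cd.1 * cd.2 = 0}
      = Fintype.card F ^ 2 - (Fintype.card F - 1) ^ 2 := by
    have hc := Fintype.card_subtype_compl (p := fun cd : F × F => cd.1 * cd.2 = 0)
    have hcompl : Fintype.card {cd : F × F // ¬ cd.1 * cd.2 = 0}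
        = (Fintype.card F - 1) ^ 2 := by
      rw [← c1]
    rw [hcompl] at hc
    have hle1 : Fintype.card {cd : F × F // cd.1 * cd.2 = 0} ≤ Fintype.card (F × F) :=
      Fintype.card_subtype_le _
    have hsq : Fintype.card F ^ 2 = Fintype.card F * Fintype.card F := sq _
    rw [Fintype.card_prod] at hle1
    rw [Fintype.card_prod] at hc
    omega
  rw [← Fintype.card_subtype, ← Fintype.card_subtype, c2, c1]

instance (T : F) : DecidablePred (Pgood T) := fun v => by unfold Pgood; infer_instance

lemma card_Pgood_char2 (T : F) (hT : T ≠ 0) (hchar : (2 : F) = 0) :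
    Fintype.card {v : F × F × F × F × F // Pgood T v}
      = (Fintype.card F - 1) ^ 2 * Fintype.card F ^ 3 := by
  have e : {v : F × F × F × F × F // Pgood T v}
      ≃ {u : F // u ≠ 0} × F × F × F × {e : F // e ≠ 0} := by
    refine ⟨fun v => ⟨⟨v.1.1 - T^2 * v.1.2.1, (mul_ne_zero_iff.mp v.2).1⟩,
        v.1.2.1, v.1.2.2.1, v.1.2.2.2.1,
        ⟨v.1.2.2.2.2, fun h0 => (mul_ne_zero_iff.mp v.2).2 (by
          rw [h0]
          linear_combination (-(v.1.2.2.1 * v.1.2.2.2.1)) * hchar)⟩⟩,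
      fun w => ⟨(w.1.1 + T^2 * w.2.1, w.2.1, w.2.2.1, w.2.2.2.1, w.2.2.2.2.1), ?_⟩, ?_, ?_⟩
    · have key : (w.1.1 + T^2 * w.2.1 - T^2 * w.2.1) *
          (w.2.2.2.2.1 * (w.1.1 + T^2 * w.2.1 + T^2 * w.2.1)
            - 2 * w.2.2.1 * w.2.2.2.1)
          = w.1.1 * (w.2.2.2.2.1 * w.1.1) := by
        linear_combination (w.2.2.2.2.1 * T^2 * w.2.1 * w.1.1
          - w.2.2.1 * w.2.2.2.1 * w.1.1) * hchar
      show (_ - _) * _ ≠ 0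
      rw [key]
      exact mul_ne_zero w.1.2 (mul_ne_zero w.2.2.2.2.2 w.1.2)
    · rintro ⟨⟨a, b, f, d, e⟩, hv⟩
      exact Subtype.ext (Prod.ext (by ring) rfl)
    · rintro ⟨⟨u, hu⟩, b, f, d, ⟨e, he⟩⟩
      exact Prod.ext (Subtype.ext (by ring))
        (Prod.ext rfl (Prod.ext rfl (Prod.ext rfl (Subtype.ext rfl))))
  rw [Fintype.card_congr e]
  simp only [Fintype.card_prod, card_ne_zero']
  ring

lemma card_Pgood_odd (T : F) (hT : T ≠ 0) (hchar : (2 : F) ≠ 0) :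
    Fintype.card {v : F × F × F × F × F // Pgood T v}
      = (Fintype.card F - 1)
        * ((Fintype.card F ^ 2 - (Fintype.card F - 1) ^ 2) * (Fintype.card F - 1) ^ 2
          + (Fintype.card F - 1) ^ 2 * (Fintype.card F ^ 2 - (Fintype.card F - 1))) := by
  have e : {v : F × F × F × F × F // Pgood T v}
      ≃ {u : F // u ≠ 0} × {z : (F × F) × F × F // z.2.1 * z.2.2 ≠ 2 * z.1.1 * z.1.2} := by
    refine ⟨fun v => ⟨⟨v.1.1 - T^2 * v.1.2.1, (mul_ne_zero_iff.mp v.2).1⟩,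
        ⟨((v.1.2.2.1, v.1.2.2.2.1), (v.1.1 + T^2 * v.1.2.1, v.1.2.2.2.2)),
          fun h => (mul_ne_zero_iff.mp v.2).2 (by linear_combination h)⟩⟩,
      fun w => ⟨((w.1.1 + w.2.1.2.1) / 2, (w.2.1.2.1 - w.1.1) / (2 * T^2),
        w.2.1.1.1, w.2.1.1.2, w.2.1.2.2), ?_⟩, ?_, ?_⟩
    · have ha : (w.1.1 + w.2.1.2.1) / 2 - T^2 * ((w.2.1.2.1 - w.1.1) / (2 * T^2))
          = w.1.1 := by field_simp; ring
      have hb : (w.1.1 + w.2.1.2.1) / 2 + T^2 * ((w.2.1.2.1 - w.1.1) / (2 * T^2))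
          = w.2.1.2.1 := by field_simp; ring
      show (_ - _) * _ ≠ 0
      rw [ha, hb]
      exact mul_ne_zero w.1.2 (fun h => w.2.2 (by linear_combination h))
    · rintro ⟨⟨a, b, f, d, e⟩, hv⟩
      refine Subtype.ext (Prod.ext ?_ (Prod.ext ?_ rfl))
      · show (a - T^2*b + (a + T^2*b)) / 2 = a
        field_simp
        ring
      · show (a + T^2*b - (a - T^2*b)) / (2 * T^2) = b
        field_simp
        ring
    · rintro ⟨⟨u, hu⟩, ⟨⟨⟨f, d⟩, w, e⟩, hz⟩⟩
      refine Prod.ext (Subtype.ext ?_) (Subtype.ext (Prod.ext rfl (Prod.ext ?_ rfl)))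
      · show (u + w) / 2 - T^2 * ((w - u) / (2 * T^2)) = u
        field_simp
        ring
      · show (u + w) / 2 + T^2 * ((w - u) / (2 * T^2)) = w
        field_simp
        ring
  rw [Fintype.card_congr e, Fintype.card_prod, card_ne_zero', card_quad 2 hchar]

lemma card_fix_canonical (t : Fin 3 → Fˣ) :
    Nat.card (fixSet F 3 (Equiv.swap 0 1) t)
      = if ((t 0 : F) * (t 1 : F) = 1 ∧ (t 2 : F) = 1) then
          (if (2 : F) = 0 then (Fintype.card F - 1) ^ 2 * Fintype.card F ^ 3
           else (Fintype.card F - 1)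
            * ((Fintype.card F ^ 2 - (Fintype.card F - 1) ^ 2) * (Fintype.card F - 1) ^ 2
              + (Fintype.card F - 1) ^ 2 * (Fintype.card F ^ 2 - (Fintype.card F - 1))))
        else 0 := by
  split_ifs with hgood hc
  · rw [Nat.card_congr (fixEquivGood t hgood.1 hgood.2), Nat.card_eq_fintype_card,
      card_Pgood_char2 _ (Units.ne_zero (t 0)) hc]
  · rw [Nat.card_congr (fixEquivGood t hgood.1 hgood.2), Nat.card_eq_fintype_card,
      card_Pgood_odd _ (Units.ne_zero (t 0)) hc]
  · by_cases hs : (t 0 : F) * (t 1 : F) = 1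
    · have h2 : (t 2 : F) ≠ 1 := fun h => hgood ⟨hs, h⟩
      rw [fix_empty_of_t2_ne t hs h2]
      simp
    · rw [fix_empty_of_s_ne t hs]
      simp

end CardGood

section Conj

def glConj {n : ℕ} (ρ : Fin n ≃ Fin n) (A : GL (Fin n) F) : GL (Fin n) F :=
  ⟨(A : Matrix (Fin n) (Fin n) F).submatrix ρ ρ,
   ((A⁻¹ : GL (Fin n) F) : Matrix (Fin n) (Fin n) F).submatrix ρ ρ,
   by rw [Matrix.submatrix_mul_equiv,
        show (A : Matrix (Fin n) (Fin n) F) * ((A⁻¹ : GL (Fin n) F) : Matrix (Fin n) (Fin n) F)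
          = 1 from A.val_inv]
      exact Matrix.submatrix_one_equiv ρ,
   by rw [Matrix.submatrix_mul_equiv,
        show ((A⁻¹ : GL (Fin n) F) : Matrix (Fin n) (Fin n) F) * (A : Matrix (Fin n) (Fin n) F)
          = 1 from A.inv_val]
      exact Matrix.submatrix_one_equiv ρ⟩

@[simp] lemma glConj_apply {n : ℕ} (ρ : Fin n ≃ Fin n) (A : GL (Fin n) F) (i j : Fin n) :
    (glConj ρ A : Matrix (Fin n) (Fin n) F) i j
      = (A : Matrix (Fin n) (Fin n) F) (ρ i) (ρ j) := rfl

lemma glConj_symm {n : ℕ} (ρ : Fin n ≃ Fin n) (A : GL (Fin n) F) :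
    glConj ρ.symm (glConj ρ A) = A := by
  apply Units.ext
  ext i j
  simp

lemma mem_fixSet_conj {n : ℕ} (σ : Equiv.Perm (Fin n)) (ρ : Fin n ≃ Fin n)
    (t : Fin n → Fˣ) (A : GL (Fin n) F) (hA : A ∈ fixSet F n σ t) :
    glConj ρ A ∈ fixSet F n (ρ.trans (σ.trans ρ.symm)) (t ∘ ρ) := by
  intro i j
  have h := hA (ρ i) (ρ j)
  simpa [glConj_apply, Equiv.trans_apply, Equiv.apply_symm_apply] using h

lemma card_fixSet_conj {n : ℕ} (σ : Equiv.Perm (Fin n)) (ρ : Fin n ≃ Fin n)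
    (t : Fin n → Fˣ) :
    Nat.card (fixSet F n σ t)
      = Nat.card (fixSet F n (ρ.trans (σ.trans ρ.symm)) (t ∘ ρ)) := by
  apply Nat.card_congr
  have hσ : (ρ.symm.trans (((ρ.trans (σ.trans ρ.symm))).trans ρ.symm.symm)) = σ := by
    ext x; simp
  have ht : (t ∘ ρ) ∘ ρ.symm = t := by
    funext x; simp
  refine ⟨fun A => ⟨glConj ρ A.1, mem_fixSet_conj σ ρ t A.1 A.2⟩,
    fun B => ⟨glConj ρ.symm B.1, ?_⟩, ?_, ?_⟩
  · have h := mem_fixSet_conj (ρ.trans (σ.trans ρ.symm)) ρ.symm (t ∘ ρ) B.1 B.2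
    rwa [hσ, ht] at h
  · rintro ⟨A, hA⟩
    exact Subtype.ext (glConj_symm ρ A)
  · rintro ⟨B, hB⟩
    apply Subtype.ext
    have h := glConj_symm ρ.symm B
    rwa [Equiv.symm_symm] at h

end Conj

end MatPart

open MatPart in
/-- For `n = 3` and `σ` any transposition in `S₃`, the total number of fixed points is
`q³(q−1)³` if `p = 2` and `q(q−1)⁴(q+1)` if `p ≠ 2`. -/
theorem sum_card_fixSet_three_swap {F : Type*} [Field F] [Fintype F] [DecidableEq F]
    (p m q : ℕ) (hp : p.Prime) (hm : 0 < m) (hq : q = p ^ m)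
    (hcard : Fintype.card F = q) (σ : Equiv.Perm (Fin 3)) (hσ : σ.IsSwap) :
    ∑ t : Fin 3 → Fˣ, Nat.card ↥(fixSet F 3 σ t)
      = if p = 2 then q ^ 3 * (q - 1) ^ 3 else q * (q - 1) ^ 4 * (q + 1) := by
  obtain ⟨x, y, hxy, rfl⟩ := hσ
  -- a relabelling permutation ρ with ρ 0 = x, ρ 1 = y
  obtain ⟨w, hwdef⟩ : ∃ w : Fin 3, w = Equiv.swap 0 x y := ⟨_, rfl⟩
  have hw0 : w ≠ 0 := fun h0 =>
    hxy.symm ((Equiv.swap 0 x).injective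
      ((hwdef.symm.trans h0).symm.symm.trans (Equiv.swap_apply_right 0 x).symm))
  obtain ⟨ρ, hρdef⟩ : ∃ ρ : Fin 3 ≃ Fin 3, ρ = (Equiv.swap 1 w).trans (Equiv.swap 0 x) :=
    ⟨_, rfl⟩
  have hρ0 : ρ 0 = x := by
    rw [hρdef, Equiv.trans_apply, Equiv.swap_apply_of_ne_of_ne (by decide) (Ne.symm hw0)]
    exact Equiv.swap_apply_left 0 x
  have hρ1 : ρ 1 = y := by
    rw [hρdef, Equiv.trans_apply, Equiv.swap_apply_left, hwdef]
    exact Equiv.swap_apply_self 0 x y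
  have hconj : ρ.trans ((Equiv.swap x y).trans ρ.symm) = Equiv.swap 0 1 := by
    rw [← hρ0, ← hρ1, Equiv.swap_apply_apply]
    ext i
    simp [Equiv.trans_apply, Equiv.Perm.mul_apply]
  have hsum1 : ∑ t : Fin 3 → Fˣ, Nat.card (fixSet F 3 (Equiv.swap x y) t)
      = ∑ t : Fin 3 → Fˣ, Nat.card (fixSet F 3 (Equiv.swap 0 1) t) := by
    have step : ∀ t : Fin 3 → Fˣ, Nat.card (fixSet F 3 (Equiv.swap x y) t)
        = Nat.card (fixSet F 3 (Equiv.swap 0 1) (t ∘ ρ)) := fun t => by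
      rw [card_fixSet_conj (Equiv.swap x y) ρ t, hconj]
    rw [Finset.sum_congr rfl (fun t _ => step t)]
    exact Fintype.sum_bijective (fun t : Fin 3 → Fˣ => t ∘ ρ)
      ⟨fun t₁ t₂ h => by funext i; simpa using congrFun h (ρ.symm i),
       fun t => ⟨t ∘ ρ.symm, by funext i; simp⟩⟩ _ _ (fun t => rfl)
  rw [hsum1, Finset.sum_congr rfl (fun t _ => card_fix_canonical t),
    Finset.sum_ite, Finset.sum_const, Finset.sum_const_zero, add_zero, smul_eq_mul]
  -- number of good parameters t
  have hfilter : (Finset.univ.filter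
      (fun t : Fin 3 → Fˣ => (t 0 : F) * (t 1 : F) = 1 ∧ (t 2 : F) = 1)).card
      = q - 1 := by
    rw [← Fintype.card_subtype, ← hcard, ← Fintype.card_units (α := F)]
    apply Fintype.card_congr
    refine ⟨fun s => s.1 0, fun T => ⟨![T, T⁻¹, 1], by
        refine ⟨?_, ?_⟩
        · show (T : F) * ((T⁻¹ : Fˣ) : F) = 1
          rw [← Units.val_mul, mul_inv_cancel, Units.val_one]
        · show ((1 : Fˣ) : F) = 1
          exact Units.val_one⟩, ?_, ?_⟩
    · rintro ⟨s, hs1, hs2⟩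
      apply Subtype.ext
      funext i
      fin_cases i
      · rfl
      · show (s 0)⁻¹ = s 1
        refine inv_eq_of_mul_eq_one_right (Units.ext ?_)
        rw [Units.val_mul, Units.val_one]
        exact hs1
      · show (1 : Fˣ) = s 2
        exact Units.ext (by rw [Units.val_one]; exact hs2.symm)
    · intro T
      rfl
  -- characteristic
  have _i : CharP F (ringChar F) := ringChar.charP F
  obtain ⟨n, hrprime, hcardF⟩ := FiniteField.card F (ringChar F)
  have hrc : ringChar F = p := by
    have hdvd : ringChar F ∣ p ^ m := by
      rw [← hq, ← hcard, hcardF]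
      exact dvd_pow_self _ n.pos.ne'
    exact (Nat.prime_dvd_prime_iff_eq hrprime hp).mp (hrprime.dvd_of_dvd_pow hdvd)
  have hchar : ((2 : F) = 0) ↔ p = 2 := by
    rw [show (2 : F) = ((2 : ℕ) : F) by norm_num,
      CharP.cast_eq_zero_iff F (ringChar F) 2, hrc]
    exact Nat.prime_dvd_prime_iff_eq hp Nat.prime_two
  have h2q : 2 ≤ q := by
    rw [hq]
    calc 2 ≤ p := hp.two_le
    _ = p ^ 1 := (pow_one p).symm
    _ ≤ p ^ m := Nat.pow_le_pow_right hp.pos hm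
  obtain ⟨k, hk⟩ : ∃ k, q = k + 2 := ⟨q - 2, (Nat.sub_add_cancel h2q).symm⟩
  rw [hfilter, hcard, hk]
  have e0 : k + 2 - 1 = k + 1 := rfl
  have e1 : (k + 2) ^ 2 - (k + 1) ^ 2 = 2 * k + 3 :=
    Nat.sub_eq_of_eq_add (by ring)
  have e2 : (k + 2) ^ 2 - (k + 1) = k ^ 2 + 3 * k + 3 :=
    Nat.sub_eq_of_eq_add (by ring)
  by_cases hp2 : p = 2
  · rw [if_pos (hchar.mpr hp2), if_pos hp2, e0]
    ring
  · rw [if_neg (fun h => hp2 (hchar.mp h)), if_neg hp2, e0, e1, e2]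
    ring
end

section
/- Let q = p^m be a prime power and F_q a finite field with q elements, and let σ be any 3-cycle in the symmetric group on {1,2,3}. Then Σ_{t ∈ (F_q^×)^3} |Fix_3(σ,t)| equals q^2(q−1)^3 if p = 3; (q−1)^5 if 3 | (q−1); and (q−1)^4(q+1) if p ≠ 3 and 3 ∤ (q−1). Moreover, for t = (t_1,t_2,t_3) ∈ (F_q^×)^3, Fix_3(σ,t) is nonempty only if t_1 t_2 t_3 = 1. -/
open Matrix

section core
variable {F : Type*} [Field F]

/-- diagonal unit matrix -/
def dMat (s : Fin 3 → Fˣ) : GL (Fin 3) F :=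
  ⟨Matrix.diagonal fun i => (s i : F), Matrix.diagonal fun i => ((s i)⁻¹ : F),
   by rw [Matrix.diagonal_mul_diagonal]; simp,
   by rw [Matrix.diagonal_mul_diagonal]; simp⟩

lemma dMat_mul_mul (s r : Fin 3 → Fˣ) (A : GL (Fin 3) F) (i j : Fin 3) :
    ((dMat s * A * dMat r : GL (Fin 3) F) : Matrix (Fin 3) (Fin 3) F) i j
      = (s i : F) * (A : Matrix (Fin 3) (Fin 3) F) i j * (r j : F) := by
  show (((dMat s).val * A.val * (dMat r).val)) i j = _
  rw [show (dMat s).val = Matrix.diagonal fun i => (s i : F) from rfl,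
      show (dMat r).val = Matrix.diagonal fun i => (r i : F) from rfl,
      Matrix.mul_diagonal, Matrix.diagonal_mul]

variable (σ : Equiv.Perm (Fin 3))
variable (H1 : ∀ j, σ (σ (σ j)) = j) (H2 : σ 0 ≠ 0) (H3 : σ (σ 0) ≠ 0)
  (H4 : σ (σ 0) ≠ σ 0) (H5 : ∀ j : Fin 3, j = 0 ∨ j = σ 0 ∨ j = σ (σ 0))
  (H6 : ∀ (t : Fin 3 → Fˣ) (i : Fin 3), t i * t (σ i) * t (σ (σ i)) = t 0 * t 1 * t 2)

include H1 H2 H3 H4 H5 H6 in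
lemma card_fix_eq_one (t : Fin 3 → Fˣ) (hprod : t 0 * t 1 * t 2 = 1) :
    Nat.card ↥(fixSet F 3 σ t) = Nat.card ↥(fixSet F 3 σ (fun _ => 1)) := by
  classical
  set s : Fin 3 → Fˣ := fun j => if j = 0 then 1 else if j = σ 0 then (t 0)⁻¹
    else (t 0 * t (σ 0))⁻¹ with hs_def
  set r : Fin 3 → Fˣ := fun j => if j = 0 then 1 else if j = σ 0 then (t 0) ^ 2
    else (t 0 * t (σ 0)) ^ 2 with hr_def
  have h60 : t 0 * t (σ 0) * t (σ (σ 0)) = 1 := by rw [H6 t 0]; exact hprod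
  have hs : ∀ j, (s (σ j) : F) * (t j : F) = (s j : F) := by
    intro j
    rcases H5 j with h | h | h <;> subst h
    · simp [hs_def, H2]
    · simp [hs_def, H2, H3, H4]
      field_simp
    · rw [H1 0]
      simp [hs_def, H2, H3, H4]
      have := congrArg (fun u : Fˣ => (u : F)) h60
      push_cast at this
      field_simp
      linear_combination this
  have hr : ∀ j, (r (σ j) : F) = (r j : F) * (t j : F) ^ 2 := by
    intro j
    rcases H5 j with h | h | h <;> subst h
    · simp [hr_def, H2]
    · simp [hr_def, H2, H3, H4]; push_cast; ring
    · rw [H1 0]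
      simp [hr_def, H2, H3, H4]
      have := congrArg (fun u : Fˣ => (u : F)) h60
      push_cast at this
      linear_combination (-(t 0 : F) * (t (σ 0) : F) * (t (σ (σ 0)) : F) - 1) * this
  apply Nat.card_congr
  refine Equiv.subtypeEquiv ((Equiv.mulLeft (dMat s)).trans (Equiv.mulRight (dMat r))) ?_
  intro A
  show (∀ i j, _) ↔ (∀ i j, _)
  refine forall_congr' fun i => forall_congr' fun j => ?_
  rw [Equiv.trans_apply, Equiv.coe_mulLeft, Equiv.coe_mulRight, dMat_mul_mul, dMat_mul_mul]
  set a := (A : Matrix (Fin 3) (Fin 3) F) i j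
  set b := (A : Matrix (Fin 3) (Fin 3) F) (σ i) (σ j)
  have hsi := hs i
  have hrj := hr j
  constructor
  · intro h
    push_cast
    rw [hrj, ← hsi]
    ring_nf
    linear_combination ((s (σ i) : F) * (r j : F)) * h
  · intro h
    push_cast at h
    rw [hrj, ← hsi] at h
    have hne1 : ((s (σ i) : F)) ≠ 0 := Units.ne_zero _
    have hne2 : ((r j : F)) ≠ 0 := Units.ne_zero _
    apply mul_left_cancel₀ hne1
    apply mul_right_cancel₀ hne2
    ring_nf
    ring_nf at h
    linear_combination h

/-- matrix built from first row -/
def Mmat (σ : Equiv.Perm (Fin 3)) (v : Fin 3 → F) : Matrix (Fin 3) (Fin 3) F :=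
  Matrix.of fun i j => if i = 0 then v j else if i = σ 0 then v (σ (σ j)) else v (σ j)

include H1 H2 H3 H4 H5 in
lemma mmat_shift (v : Fin 3 → F) (i j : Fin 3) :
    Mmat σ v (σ i) (σ j) = Mmat σ v i j := by
  rcases H5 i with h | h | h <;> subst h <;>
    simp [Mmat, H1, H2, H3, H4]

include H1 H2 H3 H4 H5 in
lemma mmat_row (A : GL (Fin 3) F) (hA : A ∈ fixSet F 3 σ (fun _ => 1)) :
    Mmat σ (fun j => (A : Matrix (Fin 3) (Fin 3) F) 0 j) = (A : Matrix (Fin 3) (Fin 3) F) := by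
  have hm : ∀ i j, (A : Matrix (Fin 3) (Fin 3) F) i j
      = (A : Matrix (Fin 3) (Fin 3) F) (σ i) (σ j) := by
    intro i j; have := hA i j; simpa using this
  funext i j
  rcases H5 i with h | h | h <;> subst h
  · simp [Mmat]
  · rw [Mmat, Matrix.of_apply, if_neg H2, if_pos rfl]
    rw [hm 0 (σ (σ j)), H1]
  · rw [Mmat, Matrix.of_apply, if_neg H3, if_neg H4]
    rw [hm 0 (σ j), hm (σ 0) (σ (σ j)), H1]

include H1 H2 H3 H4 H5 in
lemma card_fix_one (Hdet : ∀ v : Fin 3 → F,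
      (Mmat σ v).det = v 0 ^ 3 + v 1 ^ 3 + v 2 ^ 3 - 3 * (v 0 * v 1 * v 2)) :
    Nat.card ↥(fixSet F 3 σ (fun _ => 1))
      = Nat.card {v : Fin 3 → F //
          v 0 ^ 3 + v 1 ^ 3 + v 2 ^ 3 - 3 * (v 0 * v 1 * v 2) ≠ 0} := by
  apply Nat.card_congr
  refine ⟨fun A => ⟨fun j => (A.1 : Matrix (Fin 3) (Fin 3) F) 0 j, ?_⟩,
    fun v => ⟨Matrix.GeneralLinearGroup.mkOfDetNeZero (Mmat σ v.1) (by rw [Hdet]; exact v.2), ?_⟩,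
    ?_, ?_⟩
  · rw [← Hdet, mmat_row σ H1 H2 H3 H4 H5 A.1 A.2]
    have : IsUnit ((A.1 : Matrix (Fin 3) (Fin 3) F).det) :=
      (Matrix.isUnit_iff_isUnit_det _).mp A.1.isUnit
    exact this.ne_zero
  · intro i j
    show (1 : F) * Mmat σ v.1 i j = Mmat σ v.1 (σ i) (σ j) * (1 : F) ^ 2
    rw [mmat_shift σ H1 H2 H3 H4 H5]; ring
  · intro A
    apply Subtype.ext
    apply Units.ext
    exact mmat_row σ H1 H2 H3 H4 H5 A.1 A.2
  · intro v
    apply Subtype.ext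
    funext j
    show Mmat σ v.1 0 j = v.1 j
    simp [Mmat]

include H1 H6 in
lemma prod_eq_one_of_nonempty (t : Fin 3 → Fˣ) (hne : (fixSet F 3 σ t).Nonempty) :
    (t 0 : F) * (t 1 : F) * (t 2 : F) = 1 := by
  obtain ⟨A, hA⟩ := hne
  have hdet : (A : Matrix (Fin 3) (Fin 3) F).det ≠ 0 :=
    ((Matrix.isUnit_iff_isUnit_det _).mp A.isUnit).ne_zero
  have hentry : ∃ i j, (A : Matrix (Fin 3) (Fin 3) F) i j ≠ 0 := by
    by_contra h
    push_neg at h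
    have h0 : (A : Matrix (Fin 3) (Fin 3) F) = 0 := by funext i j; exact h i j
    rw [h0, Matrix.det_zero] at hdet
    exact hdet rfl
  obtain ⟨i, j, ha⟩ := hentry
  have e1 := hA i j
  have e2 := hA (σ i) (σ j)
  have e3 := hA (σ (σ i)) (σ (σ j))
  rw [H1 i, H1 j] at e3
  have hb : (A : Matrix (Fin 3) (Fin 3) F) (σ i) (σ j) ≠ 0 := by
    intro h0
    rw [h0, zero_mul] at e1
    rcases mul_eq_zero.mp e1 with h | h
    · exact Units.ne_zero _ h
    · exact ha h
  have hc : (A : Matrix (Fin 3) (Fin 3) F) (σ (σ i)) (σ (σ j)) ≠ 0 := by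
    intro h0
    rw [h0, zero_mul] at e2
    rcases mul_eq_zero.mp e2 with h | h
    · exact Units.ne_zero _ h
    · exact hb h
  have hTi := congrArg (fun u : Fˣ => (u : F)) (H6 t i)
  have hTj := congrArg (fun u : Fˣ => (u : F)) (H6 t j)
  push_cast at hTi hTj
  have habc : (A : Matrix (Fin 3) (Fin 3) F) i j * (A : Matrix (Fin 3) (Fin 3) F) (σ i) (σ j)
      * (A : Matrix (Fin 3) (Fin 3) F) (σ (σ i)) (σ (σ j)) ≠ 0 :=
    mul_ne_zero (mul_ne_zero ha hb) hc
  set T : F := (t 0 : F) * (t 1 : F) * (t 2 : F) with hT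
  have hTne : T ≠ 0 := by
    apply mul_ne_zero (mul_ne_zero _ _) <;> exact Units.ne_zero _
  have e123 : ((t i : F) * (A : Matrix (Fin 3) (Fin 3) F) i j)
      * ((t (σ i) : F) * (A : Matrix (Fin 3) (Fin 3) F) (σ i) (σ j))
      * ((t (σ (σ i)) : F) * (A : Matrix (Fin 3) (Fin 3) F) (σ (σ i)) (σ (σ j)))
      = ((A : Matrix (Fin 3) (Fin 3) F) (σ i) (σ j) * (t j : F) ^ 2)
      * ((A : Matrix (Fin 3) (Fin 3) F) (σ (σ i)) (σ (σ j)) * (t (σ j) : F) ^ 2)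
      * ((A : Matrix (Fin 3) (Fin 3) F) i j * (t (σ (σ j)) : F) ^ 2) := by
    rw [e1, e2, e3]
  set X : F := (A : Matrix (Fin 3) (Fin 3) F) i j * (A : Matrix (Fin 3) (Fin 3) F) (σ i) (σ j)
      * (A : Matrix (Fin 3) (Fin 3) F) (σ (σ i)) (σ (σ j)) with hX
  have key : T * X = T ^ 2 * X := by
    rw [hX]
    linear_combination e123
      - ((A : Matrix (Fin 3) (Fin 3) F) i j * (A : Matrix (Fin 3) (Fin 3) F) (σ i) (σ j)
        * (A : Matrix (Fin 3) (Fin 3) F) (σ (σ i)) (σ (σ j))) * hTi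
      + (((t j : F) * (t (σ j) : F) * (t (σ (σ j)) : F) + T)
        * ((A : Matrix (Fin 3) (Fin 3) F) i j * (A : Matrix (Fin 3) (Fin 3) F) (σ i) (σ j)
          * (A : Matrix (Fin 3) (Fin 3) F) (σ (σ i)) (σ (σ j)))) * hTj
  have hTT : T = T ^ 2 := mul_right_cancel₀ habc key
  have h2 : T * 1 = T * T := by linear_combination hTT
  exact (mul_left_cancel₀ hTne h2).symm

end core

section counting
variable {F : Type*} [Field F] [Fintype F] [DecidableEq F]

lemma card_ne_zero_subtype : Nat.card {x : F // x ≠ 0} = Fintype.card F - 1 := by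
  rw [← Nat.card_congr (unitsEquivNeZero (G₀ := F)), Nat.card_eq_fintype_card,
    Fintype.card_units]

lemma card_prod_subtype (P : F → Prop) (Q : F × F → Prop) [DecidablePred P] [DecidablePred Q] :
    Nat.card {w : F × F × F // P w.1 ∧ Q w.2}
      = Nat.card {x : F // P x} * Nat.card {u : F × F // Q u} := by
  rw [Nat.card_congr (Equiv.subtypeProdEquivProd), Nat.card_prod]

def eA : (Fin 3 → F) ≃ F × F × F where
  toFun v := (v 0 + v 1 + v 2, v 1, v 2)
  invFun w := ![w.1 - w.2.1 - w.2.2, w.2.1, w.2.2]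
  left_inv v := by funext j; fin_cases j <;> simp <;> ring
  right_inv w := by simp [Prod.ext_iff]; ring

lemma countA (h3 : (3 : F) = 0) :
    Nat.card {v : Fin 3 → F // v 0 ^ 3 + v 1 ^ 3 + v 2 ^ 3 - 3 * (v 0 * v 1 * v 2) ≠ 0}
      = (Fintype.card F - 1) * (Fintype.card F * Fintype.card F) := by
  classical
  have hiff : ∀ v : Fin 3 → F,
      (v 0 ^ 3 + v 1 ^ 3 + v 2 ^ 3 - 3 * (v 0 * v 1 * v 2) ≠ 0)
        ↔ (fun w : F × F × F => w.1 ≠ 0 ∧ (fun _ : F × F => True) w.2) (eA v) := by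
    intro v
    have hfv : v 0 ^ 3 + v 1 ^ 3 + v 2 ^ 3 - 3 * (v 0 * v 1 * v 2)
        = (v 0 + v 1 + v 2) ^ 3 := by
      linear_combination (-(v 0 ^ 2 * v 1) - v 0 ^ 2 * v 2 - v 0 * v 1 ^ 2 - v 1 ^ 2 * v 2
        - v 0 * v 2 ^ 2 - v 1 * v 2 ^ 2 - 3 * (v 0 * v 1 * v 2)) * h3
    rw [hfv]
    show _ ↔ (v 0 + v 1 + v 2 ≠ 0 ∧ True)
    simp [pow_ne_zero_iff]
  rw [Nat.card_congr (((Equiv.subtypeEquiv (q := fun w : F × F × F => w.1 ≠ 0 ∧ (fun _ : F × F => True) w.2) eA hiff).trans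
      (Equiv.subtypeProdEquivProd (p := fun x : F => x ≠ 0) (q := fun _ : F × F => True))).trans
      ((Equiv.refl _).prodCongr (Equiv.subtypeUnivEquiv (fun _ => trivial)))),
    Nat.card_prod, Nat.card_prod, card_ne_zero_subtype, Nat.card_eq_fintype_card]

def eB (ω : F) (h3 : (3 : F) ≠ 0) (hq : ω ^ 2 + ω + 1 = 0) : (Fin 3 → F) ≃ F × F × F where
  toFun v := (v 0 + v 1 + v 2, v 0 + ω * v 1 + ω ^ 2 * v 2, v 0 + ω ^ 2 * v 1 + ω * v 2)
  invFun w := ![(w.1 + w.2.1 + w.2.2) / 3, (w.1 + ω ^ 2 * w.2.1 + ω * w.2.2) / 3,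
    (w.1 + ω * w.2.1 + ω ^ 2 * w.2.2) / 3]
  left_inv v := by
    funext j; fin_cases j <;> simp <;> field_simp
    · linear_combination (v 1 + v 2) * hq
    · linear_combination (v 0 + (2 * ω - 2) * v 1 + (ω ^ 2 - ω + 1) * v 2) * hq
    · linear_combination (v 0 + (ω ^ 2 - ω + 1) * v 1 + (2 * ω - 2) * v 2) * hq
  right_inv w := by
    simp only [Prod.ext_iff]
    refine ⟨?_, ?_, ?_⟩ <;> simp <;> field_simp
    · linear_combination (w.2.1 + w.2.2) * hq
    · linear_combination (w.1 + (2 * ω - 2) * w.2.1 + (ω ^ 2 - ω + 1) * w.2.2) * hq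
    · linear_combination (w.1 + (ω ^ 2 - ω + 1) * w.2.1 + (2 * ω - 2) * w.2.2) * hq

lemma countB (ω : F) (h3 : (3 : F) ≠ 0) (hq : ω ^ 2 + ω + 1 = 0) :
    Nat.card {v : Fin 3 → F // v 0 ^ 3 + v 1 ^ 3 + v 2 ^ 3 - 3 * (v 0 * v 1 * v 2) ≠ 0}
      = (Fintype.card F - 1) * ((Fintype.card F - 1) * (Fintype.card F - 1)) := by
  classical
  have hiff : ∀ v : Fin 3 → F,
      (v 0 ^ 3 + v 1 ^ 3 + v 2 ^ 3 - 3 * (v 0 * v 1 * v 2) ≠ 0)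
        ↔ (fun w : F × F × F => w.1 ≠ 0 ∧ (fun u : F × F => u.1 ≠ 0 ∧ u.2 ≠ 0) w.2)
            (eB ω h3 hq v) := by
    intro v
    have hfv : v 0 ^ 3 + v 1 ^ 3 + v 2 ^ 3 - 3 * (v 0 * v 1 * v 2)
        = (v 0 + v 1 + v 2) * ((v 0 + ω * v 1 + ω ^ 2 * v 2) * (v 0 + ω ^ 2 * v 1 + ω * v 2)) := by
      linear_combination (v 2 ^ 3 - ω * v 2 ^ 3 - ω ^ 2 * v 1 * v 2 ^ 2 - ω ^ 2 * v 1 ^ 2 * v 2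
        + v 1 ^ 3 - ω * v 1 ^ 3 - ω * v 0 * v 2 ^ 2 - 3 * (v 0 * v 1 * v 2)
        + ω * (v 0 * v 1 * v 2) - ω ^ 2 * (v 0 * v 1 * v 2) - ω * v 0 * v 1 ^ 2
        - v 0 ^ 2 * v 2 - v 0 ^ 2 * v 1) * hq
    rw [hfv]
    show _ ↔ ((v 0 + v 1 + v 2) ≠ 0 ∧ (v 0 + ω * v 1 + ω ^ 2 * v 2) ≠ 0
      ∧ (v 0 + ω ^ 2 * v 1 + ω * v 2) ≠ 0)
    simp [mul_ne_zero_iff, and_assoc]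
  rw [Nat.card_congr (((Equiv.subtypeEquiv
      (q := fun w : F × F × F => w.1 ≠ 0 ∧ (fun u : F × F => u.1 ≠ 0 ∧ u.2 ≠ 0) w.2)
      (eB ω h3 hq) hiff).trans
      (Equiv.subtypeProdEquivProd (p := fun x : F => x ≠ 0)
        (q := fun u : F × F => u.1 ≠ 0 ∧ u.2 ≠ 0))).trans
      ((Equiv.refl _).prodCongr (Equiv.subtypeProdEquivProd (p := fun x : F => x ≠ 0)
        (q := fun x : F => x ≠ 0)))),
    Nat.card_prod, Nat.card_prod, card_ne_zero_subtype]

def eC (h3 : (3 : F) ≠ 0) : (Fin 3 → F) ≃ F × F × F where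
  toFun v := (v 0 + v 1 + v 2, v 0 - v 1, v 1 - v 2)
  invFun w := ![(w.1 + 2 * w.2.1 + w.2.2) / 3, (w.1 - w.2.1 + w.2.2) / 3,
    (w.1 - w.2.1 - 2 * w.2.2) / 3]
  left_inv v := by
    funext j; fin_cases j <;> simp <;> field_simp <;> ring
  right_inv w := by
    simp only [Prod.ext_iff]
    refine ⟨?_, ?_, ?_⟩ <;> simp <;> field_simp <;> ring

lemma card_pair_ne_zero : Nat.card {u : F × F // u ≠ 0}
    = Fintype.card F * Fintype.card F - 1 := by
  classical
  rw [Nat.card_eq_fintype_card]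
  have : Fintype.card {u : F × F // ¬ u = 0} = Fintype.card (F × F)
      - Fintype.card {u : F × F // u = 0} := Fintype.card_subtype_compl _
  rw [this, Fintype.card_subtype_eq, Fintype.card_prod]

lemma countC (h3 : (3 : F) ≠ 0)
    (hquad : ∀ x y : F, x ^ 2 + x * y + y ^ 2 = 0 → x = 0 ∧ y = 0) :
    Nat.card {v : Fin 3 → F // v 0 ^ 3 + v 1 ^ 3 + v 2 ^ 3 - 3 * (v 0 * v 1 * v 2) ≠ 0}
      = (Fintype.card F - 1) * (Fintype.card F * Fintype.card F - 1) := by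
  classical
  have hiff : ∀ v : Fin 3 → F,
      (v 0 ^ 3 + v 1 ^ 3 + v 2 ^ 3 - 3 * (v 0 * v 1 * v 2) ≠ 0)
        ↔ (fun w : F × F × F => w.1 ≠ 0 ∧ (fun u : F × F => u ≠ 0) w.2) (eC h3 v) := by
    intro v
    have hfv : v 0 ^ 3 + v 1 ^ 3 + v 2 ^ 3 - 3 * (v 0 * v 1 * v 2)
        = (v 0 + v 1 + v 2) * ((v 0 - v 1) ^ 2 + (v 0 - v 1) * (v 1 - v 2)
            + (v 1 - v 2) ^ 2) := by ring
    rw [hfv]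
    show _ ↔ ((v 0 + v 1 + v 2) ≠ 0 ∧ (v 0 - v 1, v 1 - v 2) ≠ (0 : F × F))
    rw [mul_ne_zero_iff]
    have : ((v 0 - v 1) ^ 2 + (v 0 - v 1) * (v 1 - v 2) + (v 1 - v 2) ^ 2 ≠ 0)
        ↔ ((v 0 - v 1, v 1 - v 2) ≠ (0 : F × F)) := by
      constructor
      · intro h hc
        apply h
        rw [Prod.ext_iff] at hc
        simp at hc
        rw [hc.1, hc.2]; ring
      · intro h hc
        obtain ⟨h1, h2⟩ := hquad _ _ hc
        apply h
        rw [Prod.ext_iff]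
        simp [h1, h2]
    rw [this]
  rw [Nat.card_congr (((Equiv.subtypeEquiv
      (q := fun w : F × F × F => w.1 ≠ 0 ∧ (fun u : F × F => u ≠ 0) w.2)
      (eC h3) hiff).trans
      (Equiv.subtypeProdEquivProd (p := fun x : F => x ≠ 0)
        (q := fun u : F × F => u ≠ 0)))),
    Nat.card_prod, card_ne_zero_subtype, card_pair_ne_zero]

end counting

def cyc1 : Equiv.Perm (Fin 3) := ⟨![1, 2, 0], ![2, 0, 1], by decide, by decide⟩
def cyc2 : Equiv.Perm (Fin 3) := ⟨![2, 0, 1], ![1, 2, 0], by decide, by decide⟩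

lemma perm_cases : ∀ σ : Equiv.Perm (Fin 3), σ ^ 3 = 1 → σ ≠ 1 → σ = cyc1 ∨ σ = cyc2 := by
  decide


/-- For `n = 3` and `σ` any 3-cycle in `S₃`, the total number of fixed points is
`q²(q−1)³` if `p = 3`, `(q−1)⁵` if `3 ∣ q−1`, and `(q−1)⁴(q+1)` if `p ≠ 3` and `3 ∤ q−1`;
moreover `Fix₃(σ,t)` is nonempty only if `t₁t₂t₃ = 1`. -/
theorem sum_card_fixSet_three_cycle {F : Type*} [Field F] [Fintype F] [DecidableEq F]
    (p m q : ℕ) (hp : p.Prime) (hm : 0 < m) (hq : q = p ^ m)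
    (hcard : Fintype.card F = q) (σ : Equiv.Perm (Fin 3)) (hσ : σ.IsThreeCycle) :
    (p = 3 → ∑ t : Fin 3 → Fˣ, Nat.card ↥(fixSet F 3 σ t) = q ^ 2 * (q - 1) ^ 3)
      ∧ (3 ∣ (q - 1) → ∑ t : Fin 3 → Fˣ, Nat.card ↥(fixSet F 3 σ t) = (q - 1) ^ 5)
      ∧ (p ≠ 3 → ¬ 3 ∣ (q - 1) →
          ∑ t : Fin 3 → Fˣ, Nat.card ↥(fixSet F 3 σ t) = (q - 1) ^ 4 * (q + 1))
      ∧ ∀ t : Fin 3 → Fˣ, (fixSet F 3 σ t).Nonempty →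
          (t 0 : F) * (t 1 : F) * (t 2 : F) = 1 := by
  classical
  -- basic facts about σ
  have hord : orderOf σ = 3 := hσ.orderOf
  have hσ3 : σ ^ 3 = 1 := by
    have h := pow_orderOf_eq_one σ
    rwa [hord] at h
  have hσ1 : σ ≠ 1 := by
    intro h; rw [h, orderOf_one] at hord; norm_num at hord
  have hσeq : σ = cyc1 ∨ σ = cyc2 := perm_cases σ hσ3 hσ1
  have H1 : ∀ j, σ (σ (σ j)) = j := by
    rcases hσeq with h | h <;> subst h <;> decide
  have H2 : σ 0 ≠ 0 := by
    rcases hσeq with h | h <;> subst h <;> decide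
  have H3 : σ (σ 0) ≠ 0 := by
    rcases hσeq with h | h <;> subst h <;> decide
  have H4 : σ (σ 0) ≠ σ 0 := by
    rcases hσeq with h | h <;> subst h <;> decide
  have H5 : ∀ j : Fin 3, j = 0 ∨ j = σ 0 ∨ j = σ (σ 0) := by
    rcases hσeq with h | h <;> subst h <;> decide
  have H6 : ∀ (t : Fin 3 → Fˣ) (i : Fin 3), t i * t (σ i) * t (σ (σ i)) = t 0 * t 1 * t 2 := by
    rcases hσeq with h | h <;> subst h <;> intro t i <;> fin_cases i <;>
      simp [cyc1, cyc2] <;> exact Units.ext (by push_cast; ring)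
  have Hdet : ∀ v : Fin 3 → F,
      (Mmat σ v).det = v 0 ^ 3 + v 1 ^ 3 + v 2 ^ 3 - 3 * (v 0 * v 1 * v 2) := by
    rcases hσeq with h | h <;> subst h <;> intro v <;>
      simp [Mmat, Matrix.det_fin_three, cyc1, cyc2] <;> ring
  -- characteristic
  have hq1 : 0 < q := by rw [hq]; exact pow_pos hp.pos m
  have hchar : CharP F p := by
    have hc : CharP F (ringChar F) := ringChar.charP F
    obtain ⟨n, hrprime, hrcard⟩ := FiniteField.card F (ringChar F)
    have hdvd : p ∣ ringChar F ^ (n : ℕ) := by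
      rw [← hrcard, hcard, hq]; exact dvd_pow_self p hm.ne'
    have heq : p = ringChar F :=
      (Nat.prime_dvd_prime_iff_eq hp hrprime).mp (hp.dvd_of_dvd_pow hdvd)
    rw [heq]; exact hc
  have main : ∀ t : Fin 3 → Fˣ, Nat.card ↥(fixSet F 3 σ t)
      = if t 0 * t 1 * t 2 = 1 then Nat.card {v : Fin 3 → F //
        v 0 ^ 3 + v 1 ^ 3 + v 2 ^ 3 - 3 * (v 0 * v 1 * v 2) ≠ 0} else 0 := by
    intro t
    by_cases hprod : t 0 * t 1 * t 2 = 1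
    · rw [if_pos hprod, card_fix_eq_one σ H1 H2 H3 H4 H5 H6 t hprod,
        card_fix_one σ H1 H2 H3 H4 H5 Hdet]
    · rw [if_neg hprod]
      have hemp : IsEmpty ↥(fixSet F 3 σ t) := by
        rw [Set.isEmpty_coe_sort, Set.eq_empty_iff_forall_notMem]
        intro A hA
        apply hprod
        have hcoe := prod_eq_one_of_nonempty σ H1 H6 t ⟨A, hA⟩
        exact Units.ext (by push_cast; exact hcoe)
      exact Nat.card_of_isEmpty
  -- the sum
  have hsum : ∑ t : Fin 3 → Fˣ, Nat.card ↥(fixSet F 3 σ t)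
      = (Finset.univ.filter (fun t : Fin 3 → Fˣ => t 0 * t 1 * t 2 = 1)).card
        * Nat.card {v : Fin 3 → F //
            v 0 ^ 3 + v 1 ^ 3 + v 2 ^ 3 - 3 * (v 0 * v 1 * v 2) ≠ 0} := by
    calc ∑ t : Fin 3 → Fˣ, Nat.card ↥(fixSet F 3 σ t)
        = ∑ t : Fin 3 → Fˣ, if t 0 * t 1 * t 2 = 1 then Nat.card {v : Fin 3 → F //
            v 0 ^ 3 + v 1 ^ 3 + v 2 ^ 3 - 3 * (v 0 * v 1 * v 2) ≠ 0} else 0 :=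
          Finset.sum_congr rfl (fun t _ => main t)
      _ = ∑ _t ∈ Finset.univ.filter (fun t : Fin 3 → Fˣ => t 0 * t 1 * t 2 = 1),
            Nat.card {v : Fin 3 → F //
              v 0 ^ 3 + v 1 ^ 3 + v 2 ^ 3 - 3 * (v 0 * v 1 * v 2) ≠ 0} :=
          (Finset.sum_filter _ _).symm
      _ = _ := by rw [Finset.sum_const, smul_eq_mul]
  -- count of admissible t
  have hfc : (Finset.univ.filter (fun t : Fin 3 → Fˣ => t 0 * t 1 * t 2 = 1)).card
      = (q - 1) * (q - 1) := by
    rw [← Fintype.card_subtype]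
    have e : {t : Fin 3 → Fˣ // t 0 * t 1 * t 2 = 1} ≃ Fˣ × Fˣ :=
      ⟨fun t => (t.1 0, t.1 1),
       fun z => ⟨![z.1, z.2, (z.1 * z.2)⁻¹], by simp [mul_assoc]⟩,
       fun t => by
        apply Subtype.ext
        funext j
        fin_cases j
        · simp
        · simp
        · show (t.1 0 * t.1 1)⁻¹ = t.1 2
          exact inv_eq_of_mul_eq_one_right t.2,
       fun z => by simp⟩
    rw [Fintype.card_congr e, Fintype.card_prod, Fintype.card_units, hcard]
  obtain ⟨k, rfl⟩ : ∃ k, q = k + 1 := ⟨q - 1, (Nat.sub_add_cancel hq1).symm⟩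
  have hk : k + 1 - 1 = k := by simp
  have h3ne : p ≠ 3 → (3 : F) ≠ 0 := by
    intro hp3 h0
    exact hp3 ((Nat.prime_dvd_prime_iff_eq hp (by norm_num)).mp
      ((CharP.cast_eq_zero_iff F p 3).mp h0))
  refine ⟨?_, ?_, ?_, fun t ht => prod_eq_one_of_nonempty σ H1 H6 t ht⟩
  · -- p = 3
    intro hp3
    have h30 : (3 : F) = 0 := by
      subst hp3; exact CharP.cast_eq_zero F 3
    rw [hsum, hfc, countA h30, hcard, hk]
    ring
  · -- 3 ∣ q - 1
    intro hdvd
    rw [hk] at hdvd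
    have hp3 : p ≠ 3 := by
      intro h
      subst h
      have h3q : 3 ∣ k + 1 := by rw [hq]; exact dvd_pow_self 3 hm.ne'
      have h1 : (3 : ℕ) ∣ 1 := by simpa using Nat.dvd_sub h3q hdvd
      exact absurd (Nat.le_of_dvd one_pos h1) (by norm_num)
    have h3F : (3 : F) ≠ 0 := h3ne hp3
    have : Fact (Nat.Prime 3) := ⟨by norm_num⟩
    obtain ⟨x, hx⟩ := exists_prime_orderOf_dvd_card (G := Fˣ) 3
      (by rw [Fintype.card_units, hcard, hk]; exact hdvd)
    have hx3 : x ^ 3 = 1 := by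
      have h := pow_orderOf_eq_one x
      rwa [hx] at h
    have hx1 : x ≠ 1 := by
      intro h; rw [h, orderOf_one] at hx; norm_num at hx
    have hωq : ((x : F)) ^ 2 + (x : F) + 1 = 0 := by
      have hx3F : ((x : F)) ^ 3 = 1 := by
        have h := congrArg (fun u : Fˣ => (u : F)) hx3
        push_cast at h; exact h
      have hfact : ((x : F) - 1) * (((x : F)) ^ 2 + (x : F) + 1) = 0 := by
        linear_combination hx3F
      rcases mul_eq_zero.mp hfact with h | h
      · exact absurd (Units.ext (by push_cast; exact sub_eq_zero.mp h)) hx1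
      · exact h
    rw [hsum, hfc, countB (x : F) h3F hωq, hcard, hk]
    ring
  · -- p ≠ 3 and ¬ 3 ∣ q - 1
    intro hp3 hdvd
    rw [hk] at hdvd
    have h3F : (3 : F) ≠ 0 := h3ne hp3
    have hquad : ∀ x y : F, x ^ 2 + x * y + y ^ 2 = 0 → x = 0 ∧ y = 0 := by
      intro x y h
      by_cases hy : y = 0
      · subst hy
        refine ⟨?_, rfl⟩
        have hx2 : x ^ 2 = 0 := by linear_combination h
        exact pow_eq_zero_iff (by norm_num) |>.mp hx2
      · exfalso
        have hu : (x / y) ^ 2 + (x / y) + 1 = 0 := by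
          calc (x / y) ^ 2 + (x / y) + 1 = (x ^ 2 + x * y + y ^ 2) / y ^ 2 := by
                field_simp
            _ = 0 := by rw [h]; simp
        have hune : x / y ≠ 0 := by
          intro h0
          rw [h0] at hu
          simp at hu
        set u : Fˣ := Units.mk0 (x / y) hune with hu_def
        have hu3 : u ^ 3 = 1 := by
          apply Units.ext
          push_cast [hu_def, Units.val_mk0]
          linear_combination (x / y - 1) * hu
        have hdvd3 : orderOf u ∣ 3 := orderOf_dvd_of_pow_eq_one hu3
        rcases (Nat.Prime.eq_one_or_self_of_dvd (by norm_num) _ hdvd3) with h1 | h3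
        · have hu1' : u = 1 := orderOf_eq_one_iff.mp h1
          have hu1 : x / y = 1 := by
            have h := congrArg (fun w : Fˣ => (w : F)) hu1'
            push_cast [hu_def, Units.val_mk0] at h
            exact h
          rw [hu1] at hu
          exact h3F (by linear_combination hu)
        · apply hdvd
          rw [← h3]
          have h := orderOf_dvd_card (x := u)
          rwa [Fintype.card_units, hcard, hk] at h
    rw [hsum, hfc, countC h3F hquad, hcard, hk]
    have hsq : (k + 1) * (k + 1) - 1 = k * k + 2 * k := by
      have h : (k + 1) * (k + 1) = k * k + 2 * k + 1 := by ring
      rw [h]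
      simp
    rw [hsq]
    ring
end
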